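/- arXiv:2403.11696 — 5 statements merged into one kernel-verified Lean document; each statement's English description precedes it below -/
import Mathlib

section
/- If a sequence of measurable functions g_N : (0,1] → ℝ has a scaling profile S^{(g)} : [0,∞) → ℝ, then S^{(g)} is a continuous function on [0,∞). -/
open Filter Asymptotics MeasureTheory Topology

/-- The sequence `a` has scale not less than `s`:
for every `ε > 0`, `|a_N| = o(N^(-s+ε))` as `N → ∞`. -/
def ScaleAtLeast (a : ℕ → ℝ) (s : ℝ) : Prop :=
  ∀ ε : ℝ, 0 < ε → (fun N : ℕ => |a N|) =o[atTop] fun N : ℕ => (N : ℝ) ^ (-s + ε)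

/-- The sequence `a` has scale not greater than `s`:
for every `ε > 0`, `|a_N| = ω(N^(-s-ε))` as `N → ∞`. -/
def ScaleAtMost (a : ℕ → ℝ) (s : ℝ) : Prop :=
  ∀ ε : ℝ, 0 < ε → (fun N : ℕ => (N : ℝ) ^ (-s - ε)) =o[atTop] fun N : ℕ => |a N|

/-- The sequence `a` has scale `s`. -/
def HasScale (a : ℕ → ℝ) (s : ℝ) : Prop :=
  ScaleAtLeast a s ∧ ScaleAtMost a s

/-- The sequence of functions `g_N : (0,1] → ℝ` has scaling profile `S : [0,∞) → ℝ`: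
for every sequence `λ_N ∈ (0,1]` of scale `s ≥ 0`, the sequence `|g_N (λ_N)|` has
scale `S s`. -/
def HasScalingProfile (g : ℕ → ℝ → ℝ) (S : ℝ → ℝ) : Prop :=
  ∀ lam : ℕ → ℝ, (∀ N, lam N ∈ Set.Ioc (0 : ℝ) 1) →
    ∀ s : ℝ, 0 ≤ s → HasScale lam s → HasScale (fun N => g N (lam N)) (S s)

/-- Auxiliary: `N ^ (a N) = o(N ^ (b N))` when the exponents have a uniform gap. -/
lemma aux_key_o (a b : ℕ → ℝ) (δ : ℝ) (hδ : 0 < δ) (h : ∀ᶠ N : ℕ in atTop, a N + δ ≤ b N) :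
    (fun N : ℕ => (N : ℝ) ^ (a N)) =o[atTop] (fun N : ℕ => (N : ℝ) ^ (b N)) := by
  rw [isLittleO_iff]
  intro c hc
  have h0 : Tendsto (fun N : ℕ => (N : ℝ) ^ (-δ)) atTop (𝓝 0) :=
    (tendsto_rpow_neg_atTop hδ).comp tendsto_natCast_atTop_atTop
  have h1 : ∀ᶠ N : ℕ in atTop, (N : ℝ) ^ (-δ) < c := h0.eventually_lt_const hc
  filter_upwards [h, h1, eventually_ge_atTop 1] with N hab hNc hN1
  have hN1' : (1 : ℝ) ≤ N := by exact_mod_cast hN1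
  have hNpos : (0 : ℝ) < N := by linarith
  rw [Real.norm_eq_abs, Real.norm_eq_abs, abs_of_nonneg (Real.rpow_nonneg hNpos.le _),
    abs_of_nonneg (Real.rpow_nonneg hNpos.le _)]
  calc (N : ℝ) ^ (a N) ≤ (N : ℝ) ^ (b N - δ) :=
        Real.rpow_le_rpow_of_exponent_le hN1' (by linarith)
    _ = (N : ℝ) ^ (-δ) * (N : ℝ) ^ (b N) := by
        rw [← Real.rpow_add hNpos]; ring_nf
    _ ≤ c * (N : ℝ) ^ (b N) :=
        mul_le_mul_of_nonneg_right hNc.le (Real.rpow_nonneg hNpos.le _)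

/-- The model sequence `N ↦ N^(-τ N)` (with value 1 at `N = 0`). -/
noncomputable def auxLam (τ : ℕ → ℝ) (N : ℕ) : ℝ :=
  if N = 0 then 1 else (N : ℝ) ^ (-τ N)

lemma auxLam_mem (τ : ℕ → ℝ) (h : ∀ N, 0 ≤ τ N) (N : ℕ) :
    auxLam τ N ∈ Set.Ioc (0 : ℝ) 1 := by
  unfold auxLam
  rcases Nat.eq_zero_or_pos N with h0 | h0
  · simp [h0]
  · have hN1 : (1 : ℝ) ≤ N := by exact_mod_cast h0
    rw [if_neg h0.ne']
    exact ⟨Real.rpow_pos_of_pos (by linarith) _,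
      Real.rpow_le_one_of_one_le_of_nonpos hN1 (neg_nonpos.mpr (h N))⟩

lemma auxLam_eq (τ : ℕ → ℝ) {N : ℕ} (h : 1 ≤ N) : auxLam τ N = (N : ℝ) ^ (-τ N) := by
  rw [auxLam, if_neg (by omega)]

lemma hasScale_auxLam (τ : ℕ → ℝ) (s : ℝ) (h : Tendsto τ atTop (𝓝 s)) :
    HasScale (auxLam τ) s := by
  constructor
  · intro δ hδ
    have hτ : ∀ᶠ N : ℕ in atTop, τ N ∈ Set.Ioo (s - δ / 2) (s + δ / 2) :=
      h (Ioo_mem_nhds (by linarith) (by linarith))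
    have key := aux_key_o (fun N => -τ N) (fun _ => -s + δ) (δ / 2) (by linarith)
      (by filter_upwards [hτ] with N hN; have := hN.1; show -τ N + δ/2 ≤ -s + δ; linarith)
    refine key.congr' ?_ (by rfl)
    filter_upwards [eventually_ge_atTop 1] with N hN1
    have hNpos : (0 : ℝ) < N := by exact_mod_cast hN1
    rw [auxLam_eq τ hN1, abs_of_nonneg (Real.rpow_nonneg hNpos.le _)]
  · intro δ hδ
    have hτ : ∀ᶠ N : ℕ in atTop, τ N ∈ Set.Ioo (s - δ / 2) (s + δ / 2) :=
      h (Ioo_mem_nhds (by linarith) (by linarith))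
    have key := aux_key_o (fun _ => -s - δ) (fun N => -τ N) (δ / 2) (by linarith)
      (by filter_upwards [hτ] with N hN; have := hN.2; show -s - δ + δ/2 ≤ -τ N; linarith)
    refine key.congr' (by rfl) ?_
    filter_upwards [eventually_ge_atTop 1] with N hN1
    have hNpos : (0 : ℝ) < N := by exact_mod_cast hN1
    rw [auxLam_eq τ hN1, abs_of_nonneg (Real.rpow_nonneg hNpos.le _)]

/-- Diagonalization lemma. -/
lemma aux_diagonal (q : ℕ → ℕ → Prop) (h : ∀ n, ∀ᶠ N in atTop, q n N) :
    ∃ idx : ℕ → ℕ, Tendsto idx atTop atTop ∧ ∀ᶠ N in atTop, q (idx N) N := by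
  classical
  choose M hM using fun n => eventually_atTop.mp (h n)
  set φ : ℕ → ℕ := fun n => Nat.rec (M 0) (fun k ih => max (M (k + 1)) (ih + 1)) n with hφ
  have hφsucc : ∀ n, φ n < φ (n + 1) := by
    intro n
    have : φ n + 1 ≤ φ (n + 1) := le_max_right _ _
    omega
  have hφmono : StrictMono φ := strictMono_nat_of_lt_succ hφsucc
  have hMφ : ∀ n, M n ≤ φ n := by
    intro n
    cases n with
    | zero => exact le_rfl
    | succ k => exact le_max_left _ _
  set idx : ℕ → ℕ := fun N => Nat.findGreatest (fun n => φ n ≤ N) N with hidx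
  refine ⟨idx, ?_, ?_⟩
  · rw [tendsto_atTop]
    intro b
    filter_upwards [eventually_ge_atTop (φ b)] with N hN
    exact Nat.le_findGreatest (le_trans hφmono.le_apply hN) hN
  · filter_upwards [eventually_ge_atTop (φ 0)] with N hN
    have h1 : φ (idx N) ≤ N := Nat.findGreatest_spec (P := fun n => φ n ≤ N) (Nat.zero_le N) hN
    exact hM (idx N) N (le_trans (hMφ _) h1)

lemma aux_case_low (g : ℕ → ℝ → ℝ) (S : ℝ → ℝ) (hprof : HasScalingProfile g S)
    (x : ℝ) (hx : 0 ≤ x) (ε : ℝ) (hε : 0 < ε) (t : ℕ → ℝ) (ht0 : ∀ n, 0 ≤ t n)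
    (htend : Tendsto t atTop (𝓝 x)) (hlow : ∀ n, S (t n) ≤ S x - ε) : False := by
  have hg : ∀ n, HasScale (fun N => g N (auxLam (fun _ => t n) N)) (S (t n)) := fun n =>
    hprof _ (auxLam_mem _ (fun _ => ht0 n)) (t n) (ht0 n)
      (hasScale_auxLam _ _ tendsto_const_nhds)
  -- per-stage lower bound
  have hq : ∀ n, ∀ᶠ N : ℕ in atTop,
      1 ≤ N ∧ (N : ℝ) ^ (-S x + ε / 2) ≤ |g N (auxLam (fun _ => t n) N)| := by
    intro n
    have h1 := isLittleO_iff.mp ((hg n).2 (ε / 2) (by linarith)) one_pos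
    filter_upwards [h1, eventually_ge_atTop 1] with N hb hN1
    have hN1' : (1 : ℝ) ≤ N := by exact_mod_cast hN1
    refine ⟨hN1, ?_⟩
    have hle : (N : ℝ) ^ (-S x + ε / 2) ≤ (N : ℝ) ^ (-S (t n) - ε / 2) := by
      apply Real.rpow_le_rpow_of_exponent_le hN1'
      have := hlow n; linarith
    rw [Real.norm_eq_abs, Real.norm_eq_abs, one_mul,
      abs_of_nonneg (Real.rpow_nonneg (by linarith) _), abs_abs] at hb
    linarith
  obtain ⟨idx, hidx, hqd⟩ := aux_diagonal _ hq
  have hτ : Tendsto (fun N => t (idx N)) atTop (𝓝 x) := htend.comp hidx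
  have hdiag := hprof (auxLam (fun N => t (idx N)))
    (auxLam_mem _ (fun N => ht0 (idx N))) x hx (hasScale_auxLam _ _ hτ)
  have hsmall := isLittleO_iff.mp (hdiag.1 (ε / 2) (by linarith)) (by norm_num : (0:ℝ) < 1/2)
  have hcontra : ∀ᶠ N : ℕ in atTop, False := by
    filter_upwards [hqd, hsmall] with N hN hb
    obtain ⟨hN1, hge⟩ := hN
    have hN1' : (1 : ℝ) ≤ N := by exact_mod_cast hN1
    have heq : auxLam (fun _ => t (idx N)) N = auxLam (fun N => t (idx N)) N := rfl
    rw [heq] at hge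
    rw [Real.norm_eq_abs, Real.norm_eq_abs, abs_abs,
      abs_of_nonneg (Real.rpow_nonneg (by linarith) _)] at hb
    have hpos : (0 : ℝ) < (N : ℝ) ^ (-S x + ε / 2) := Real.rpow_pos_of_pos (by linarith) _
    linarith
  exact hcontra.exists.choose_spec

lemma aux_case_high (g : ℕ → ℝ → ℝ) (S : ℝ → ℝ) (hprof : HasScalingProfile g S)
    (x : ℝ) (hx : 0 ≤ x) (ε : ℝ) (hε : 0 < ε) (t : ℕ → ℝ) (ht0 : ∀ n, 0 ≤ t n)
    (htend : Tendsto t atTop (𝓝 x)) (hhigh : ∀ n, S x + ε ≤ S (t n)) : False := by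
  have hg : ∀ n, HasScale (fun N => g N (auxLam (fun _ => t n) N)) (S (t n)) := fun n =>
    hprof _ (auxLam_mem _ (fun _ => ht0 n)) (t n) (ht0 n)
      (hasScale_auxLam _ _ tendsto_const_nhds)
  have hq : ∀ n, ∀ᶠ N : ℕ in atTop,
      1 ≤ N ∧ |g N (auxLam (fun _ => t n) N)| ≤ (N : ℝ) ^ (-S x - ε / 2) := by
    intro n
    have h1 := isLittleO_iff.mp ((hg n).1 (ε / 2) (by linarith)) one_pos
    filter_upwards [h1, eventually_ge_atTop 1] with N hb hN1
    have hN1' : (1 : ℝ) ≤ N := by exact_mod_cast hN1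
    refine ⟨hN1, ?_⟩
    have hle : (N : ℝ) ^ (-S (t n) + ε / 2) ≤ (N : ℝ) ^ (-S x - ε / 2) := by
      apply Real.rpow_le_rpow_of_exponent_le hN1'
      have := hhigh n; linarith
    rw [Real.norm_eq_abs, Real.norm_eq_abs, one_mul, abs_abs,
      abs_of_nonneg (Real.rpow_nonneg (by linarith) _)] at hb
    linarith
  obtain ⟨idx, hidx, hqd⟩ := aux_diagonal _ hq
  have hτ : Tendsto (fun N => t (idx N)) atTop (𝓝 x) := htend.comp hidx
  have hdiag := hprof (auxLam (fun N => t (idx N)))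
    (auxLam_mem _ (fun N => ht0 (idx N))) x hx (hasScale_auxLam _ _ hτ)
  have hsmall := isLittleO_iff.mp (hdiag.2 (ε / 2) (by linarith)) (by norm_num : (0:ℝ) < 1/2)
  have hcontra : ∀ᶠ N : ℕ in atTop, False := by
    filter_upwards [hqd, hsmall] with N hN hb
    obtain ⟨hN1, hge⟩ := hN
    have hN1' : (1 : ℝ) ≤ N := by exact_mod_cast hN1
    have heq : auxLam (fun _ => t (idx N)) N = auxLam (fun N => t (idx N)) N := rfl
    rw [heq] at hge
    rw [Real.norm_eq_abs, Real.norm_eq_abs, abs_abs,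
      abs_of_nonneg (Real.rpow_nonneg (by linarith) _)] at hb
    have hpos : (0 : ℝ) < (N : ℝ) ^ (-S x - ε / 2) := Real.rpow_pos_of_pos (by linarith) _
    linarith
  exact hcontra.exists.choose_spec

/-- a scaling profile of a sequence of measurable functions on `(0,1]`
is continuous on `[0,∞)`. -/
theorem scalingProfile_continuousOn (g : ℕ → ℝ → ℝ) (S : ℝ → ℝ)
    (hmeas : ∀ N, Measurable (g N))
    (hprof : HasScalingProfile g S) :
    ContinuousOn S (Set.Ici 0) := by
  intro x hx
  rw [Metric.continuousWithinAt_iff]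
  by_contra hcon
  push_neg at hcon
  obtain ⟨ε, hε, hδ⟩ := hcon
  have hx0 : (0 : ℝ) ≤ x := hx
  choose! t ht0 htd hts using fun n : ℕ => hδ (1 / (n + 1)) (by positivity)
  have hdist : Tendsto (fun n => dist (t n) x) atTop (𝓝 0) := by
    apply squeeze_zero (fun n => dist_nonneg) (fun n => (htd n).le)
      tendsto_one_div_add_atTop_nhds_zero_nat
  have htend : Tendsto t atTop (𝓝 x) := by
    rw [tendsto_iff_dist_tendsto_zero]; exact hdist
  have hsplit : (∃ᶠ n in atTop, S (t n) ≤ S x - ε) ∨ ∃ᶠ n in atTop, S x + ε ≤ S (t n) := by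
    rw [← frequently_or_distrib]
    apply Eventually.frequently
    filter_upwards with n
    have := hts n
    rw [Real.dist_eq] at this
    rcases le_total (S (t n)) (S x) with h | h
    · left; rw [abs_of_nonpos (by linarith)] at this; linarith
    · right; rw [abs_of_nonneg (by linarith)] at this; linarith
  rcases hsplit with hfr | hfr
  · obtain ⟨φ, hφ, hφp⟩ := extraction_of_frequently_atTop hfr
    exact absurd (aux_case_low g S hprof x hx0 ε hε (t ∘ φ) (fun n => ht0 (φ n))
      (htend.comp hφ.tendsto_atTop) (fun n => hφp n)) not_false
  · obtain ⟨φ, hφ, hφp⟩ := extraction_of_frequently_atTop hfr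
    exact absurd (aux_case_high g S hprof x hx0 ε hε (t ∘ φ) (fun n => ht0 (φ n))
      (htend.comp hφ.tendsto_atTop) (fun n => hφp n)) not_false
end

section
/- Let g_N : (0,1] → ℝ be a sequence of measurable functions with a scaling profile S^{(g)}, integrable on [a_N,1], and let a_N > 0 be a sequence of scale a > 0 with a_N ≤ 1. Then the sequence of integrals ∫_{a_N}^1 |g_N(λ)| dλ has scale s_* = min_{0 ≤ s ≤ a} ( S^{(g)}(s) + s ). -/
open Filter Asymptotics MeasureTheory

lemma npow_lo {p q : ℝ} (h : p < q) :
    (fun N : ℕ => (N : ℝ) ^ p) =o[atTop] fun N : ℕ => (N : ℝ) ^ q := by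
  rw [isLittleO_iff]
  intro c hc
  have ht : Tendsto (fun N : ℕ => (N : ℝ) ^ (-(q - p))) atTop (nhds 0) :=
    (tendsto_rpow_neg_atTop (by linarith)).comp tendsto_natCast_atTop_atTop
  have h2 := ht.eventually_le_const (by linarith : (0:ℝ) < c)  -- maybe wrong name
  filter_upwards [h2, eventually_ge_atTop 1] with N hN hN1
  have hN0 : (0:ℝ) < (N:ℝ) := by exact_mod_cast hN1
  have : (N:ℝ) ^ p = (N:ℝ) ^ q * (N:ℝ) ^ (-(q - p)) := by
    rw [← Real.rpow_add hN0]; ring_nf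
  rw [Real.norm_eq_abs, Real.norm_eq_abs, abs_of_nonneg (Real.rpow_nonneg hN0.le _),
    abs_of_nonneg (Real.rpow_nonneg hN0.le _), this]
  calc (N:ℝ) ^ q * (N:ℝ) ^ (-(q - p)) ≤ (N:ℝ) ^ q * c := by
        exact mul_le_mul_of_nonneg_left hN (Real.rpow_nonneg hN0.le _)
    _ = c * (N:ℝ) ^ q := mul_comm _ _

lemma scale_of_upper {f : ℕ → ℝ} {p q : ℝ} (h : p < q)
    (hb : ∀ᶠ N : ℕ in atTop, |f N| ≤ (N : ℝ) ^ p) :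
    (fun N : ℕ => |f N|) =o[atTop] fun N : ℕ => (N : ℝ) ^ q := by
  have h1 : (fun N : ℕ => |f N|) =O[atTop] fun N : ℕ => (N : ℝ) ^ p := by
    apply IsBigO.of_bound 1
    filter_upwards [hb, eventually_ge_atTop 1] with N hN hN1
    have hN0 : (0:ℝ) ≤ (N:ℝ) := by positivity
    rw [Real.norm_eq_abs, Real.norm_eq_abs, abs_abs, one_mul,
      abs_of_nonneg (Real.rpow_nonneg hN0 _)]
    exact hN
  exact h1.trans_isLittleO (npow_lo h)

lemma scale_of_lower {f : ℕ → ℝ} {p q : ℝ} (h : q < p)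
    (hb : ∀ᶠ N : ℕ in atTop, (N : ℝ) ^ p ≤ |f N|) :
    (fun N : ℕ => (N : ℝ) ^ q) =o[atTop] fun N : ℕ => |f N| := by
  have h1 : (fun N : ℕ => (N : ℝ) ^ p) =O[atTop] fun N : ℕ => |f N| := by
    apply IsBigO.of_bound 1
    filter_upwards [hb, eventually_ge_atTop 1] with N hN hN1
    have hN0 : (0:ℝ) ≤ (N:ℝ) := by positivity
    rw [Real.norm_eq_abs, Real.norm_eq_abs, abs_abs, one_mul,
      abs_of_nonneg (Real.rpow_nonneg hN0 _)]
    exact hN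
  exact (npow_lo h).trans_isBigO h1

lemma exists_strictMono_choice (P : ℕ → ℕ → Prop)
    (h : ∀ k M, ∃ N, M ≤ N ∧ P k N) :
    ∃ φ : ℕ → ℕ, StrictMono φ ∧ ∀ k, P k (φ k) := by
  choose f hf1 hf2 using h
  set φ : ℕ → ℕ := fun k => Nat.rec (f 0 0) (fun k ih => f (k + 1) (ih + 1)) k with hφ
  refine ⟨φ, strictMono_nat_of_lt_succ fun k => ?_, fun k => ?_⟩
  · have := hf1 (k + 1) (φ k + 1)
    have hdef : φ (k + 1) = f (k + 1) (φ k + 1) := rfl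
    omega
  · cases k with
    | zero => exact hf2 0 0
    | succ k => exact hf2 (k + 1) (φ k + 1)

open Classical in
noncomputable def splice (φ : ℕ → ℕ) (lamb : ℕ → ℝ) (t : ℝ) (N : ℕ) : ℝ :=
  if h : ∃ k, φ k = N then lamb h.choose else if N = 0 then 1 else (N:ℝ) ^ (-t)

lemma splice_apply {φ : ℕ → ℕ} (hφ : StrictMono φ) (lamb : ℕ → ℝ) (t : ℝ) (k : ℕ) :
    splice φ lamb t (φ k) = lamb k := by
  have h : ∃ k', φ k' = φ k := ⟨k, rfl⟩
  rw [splice, dif_pos h]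
  congr 1
  exact hφ.injective h.choose_spec

lemma splice_mem {φ : ℕ → ℕ} {lamb : ℕ → ℝ} {t : ℝ} (ht : 0 ≤ t)
    (hmem : ∀ k, lamb k ∈ Set.Ioc (0:ℝ) 1) :
    ∀ N, splice φ lamb t N ∈ Set.Ioc (0:ℝ) 1 := by
  intro N
  rw [splice]
  split_ifs with h h0
  · exact hmem h.choose
  · subst h0; simp
  · have hN1 : (1:ℝ) ≤ (N:ℝ) := by
      have : 1 ≤ N := Nat.one_le_iff_ne_zero.mpr h0
      exact_mod_cast this
    exact ⟨Real.rpow_pos_of_pos (by linarith) _,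
      Real.rpow_le_one_of_one_le_of_nonpos hN1 (by linarith)⟩

lemma splice_hasScale {φ : ℕ → ℕ} (hφ : StrictMono φ) {lamb : ℕ → ℝ} {t : ℝ} (ht : 0 ≤ t)
    (hmem : ∀ k, lamb k ∈ Set.Ioc (0:ℝ) 1)
    (hlo : ∀ k, ((φ k : ℝ)) ^ (-(t + 1 / (k + 1 : ℝ))) ≤ lamb k)
    (hhi : ∀ k, lamb k ≤ ((φ k : ℝ)) ^ (-(t - 1 / (k + 1 : ℝ)))) :
    HasScale (splice φ lamb t) t := by
  have hmemL := splice_mem ht hmem (φ := φ)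
  have hbound : ∀ η : ℝ, 0 < η → ∀ᶠ N : ℕ in atTop,
      (N:ℝ) ^ (-(t + η)) ≤ splice φ lamb t N ∧ splice φ lamb t N ≤ (N:ℝ) ^ (-(t - η)) := by
    intro η hη
    obtain ⟨K, hK⟩ : ∃ K : ℕ, 1 / (K + 1 : ℝ) ≤ η := by
      obtain ⟨K, hK⟩ := exists_nat_gt (1 / η)
      refine ⟨K, ?_⟩
      rw [div_le_iff₀ (by positivity)]
      rw [div_lt_iff₀ hη] at hK
      nlinarith
    filter_upwards [eventually_ge_atTop 1, eventually_ge_atTop (φ K + 1)] with N hN1 hNK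
    have hN1' : (1:ℝ) ≤ (N:ℝ) := by exact_mod_cast hN1
    rw [splice]
    split_ifs with h h0
    · have hk : φ h.choose = N := h.choose_spec
      have hkK : K < h.choose := by
        by_contra hc
        push_neg at hc
        have := hφ.monotone hc
        omega
      have hsmall : 1 / (h.choose + 1 : ℝ) ≤ η := by
        refine le_trans ?_ hK
        apply one_div_le_one_div_of_le (by positivity)
        have : (K:ℝ) ≤ h.choose := by exact_mod_cast hkK.le
        linarith
      have h2 := hlo h.choose
      have h3 := hhi h.choose
      rw [hk] at h2 h3
      constructor
      · exact le_trans (Real.rpow_le_rpow_of_exponent_le hN1' (by linarith)) h2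
      · exact le_trans h3 (Real.rpow_le_rpow_of_exponent_le hN1' (by linarith))
    · omega
    · exact ⟨Real.rpow_le_rpow_of_exponent_le hN1' (by linarith),
        Real.rpow_le_rpow_of_exponent_le hN1' (by linarith)⟩
  constructor
  · intro ε hε
    apply scale_of_upper (show -t + ε/2 < -t + ε by linarith)
    filter_upwards [hbound (ε/2) (by linarith)] with N hN
    rw [abs_of_pos (hmemL N).1]
    have := hN.2
    rwa [show -(t - ε/2) = -t + ε/2 by ring] at this
  · intro ε hε
    apply scale_of_lower (show -t - ε < -t - ε/2 by linarith)
    filter_upwards [hbound (ε/2) (by linarith)] with N hN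
    rw [abs_of_pos (hmemL N).1]
    have := hN.1
    rwa [show -(t + ε/2) = -t - ε/2 by ring] at this

/-- Uniform upper bound near scale `t`. -/
lemma uniformUpper {g : ℕ → ℝ → ℝ} {S : ℝ → ℝ} (hprof : HasScalingProfile g S)
    {t : ℝ} (ht : 0 ≤ t) {ε : ℝ} (hε : 0 < ε) :
    ∃ δ : ℝ, 0 < δ ∧ δ ≤ ε ∧ ∀ᶠ N : ℕ in atTop, ∀ lam : ℝ, lam ∈ Set.Ioc (0:ℝ) 1 →
      (N:ℝ) ^ (-(t + δ)) ≤ lam → lam ≤ (N:ℝ) ^ (-(t - δ)) →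
      |g N lam| ≤ (N:ℝ) ^ (-(S t) + ε) := by
  by_contra hcon
  push_neg at hcon
  have key : ∀ k M : ℕ, ∃ N, M ≤ N ∧ (1 ≤ N ∧ ∃ lam : ℝ, lam ∈ Set.Ioc (0:ℝ) 1 ∧
      (N:ℝ) ^ (-(t + min (1/(k+1:ℝ)) ε)) ≤ lam ∧ lam ≤ (N:ℝ) ^ (-(t - min (1/(k+1:ℝ)) ε)) ∧
      (N:ℝ) ^ (-(S t) + ε) < |g N lam|) := by
    intro k M
    have hδ : 0 < min (1/(k+1:ℝ)) ε := lt_min (by positivity) hε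
    have h1 := hcon _ hδ (min_le_right _ _)
    rw [Filter.frequently_atTop] at h1
    obtain ⟨N, hN, hbad⟩ := h1 (max M 1)
    obtain ⟨lam, hmem, hlo, hhi, hgt⟩ := hbad
    exact ⟨N, le_trans (le_max_left _ _) hN, le_trans (le_max_right _ _) hN,
      lam, hmem, hlo, hhi, hgt⟩
  obtain ⟨φ, hφ, hP⟩ := exists_strictMono_choice _ key
  choose hφ1 lamb hmem hlo hhi hgt using hP
  have hφ1' : ∀ k, (1:ℝ) ≤ ((φ k : ℕ) : ℝ) := fun k => by exact_mod_cast hφ1 k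
  have hlo' : ∀ k, ((φ k : ℝ)) ^ (-(t + 1 / (k + 1 : ℝ))) ≤ lamb k := fun k =>
    le_trans (Real.rpow_le_rpow_of_exponent_le (hφ1' k)
      (by have := min_le_left (1/(k+1:ℝ)) ε; simp only [neg_le_neg_iff]; linarith)) (hlo k)
  have hhi' : ∀ k, lamb k ≤ ((φ k : ℝ)) ^ (-(t - 1 / (k + 1 : ℝ))) := fun k =>
    le_trans (hhi k) (Real.rpow_le_rpow_of_exponent_le (hφ1' k)
      (by have := min_le_left (1/(k+1:ℝ)) ε; simp only [neg_le_neg_iff]; linarith))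
  have hsc := splice_hasScale hφ ht hmem hlo' hhi'
  have hg := hprof (splice φ lamb t) (splice_mem ht hmem) t ht hsc
  have hev := (hg.1 ε hε).def one_pos
  rw [eventually_atTop] at hev
  obtain ⟨M, hM⟩ := hev
  have h1 := hM (φ M) (hφ.le_apply)
  simp only [Real.norm_eq_abs, abs_abs, one_mul] at h1
  rw [splice_apply hφ] at h1
  have h2 : |(((φ M : ℕ):ℝ)) ^ (-(S t) + ε)| = (((φ M : ℕ):ℝ)) ^ (-(S t) + ε) :=
    abs_of_nonneg (Real.rpow_nonneg (by positivity) _)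
  rw [h2] at h1
  exact absurd h1 (not_le.mpr (hgt M))

/-- Uniform lower bound near scale `t`. -/
lemma uniformLower {g : ℕ → ℝ → ℝ} {S : ℝ → ℝ} (hprof : HasScalingProfile g S)
    {t : ℝ} (ht : 0 ≤ t) {ε : ℝ} (hε : 0 < ε) :
    ∃ δ : ℝ, 0 < δ ∧ δ ≤ ε ∧ ∀ᶠ N : ℕ in atTop, ∀ lam : ℝ, lam ∈ Set.Ioc (0:ℝ) 1 →
      (N:ℝ) ^ (-(t + δ)) ≤ lam → lam ≤ (N:ℝ) ^ (-(t - δ)) →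
      (N:ℝ) ^ (-(S t) - ε) ≤ |g N lam| := by
  by_contra hcon
  push_neg at hcon
  have key : ∀ k M : ℕ, ∃ N, M ≤ N ∧ (1 ≤ N ∧ ∃ lam : ℝ, lam ∈ Set.Ioc (0:ℝ) 1 ∧
      (N:ℝ) ^ (-(t + min (1/(k+1:ℝ)) ε)) ≤ lam ∧ lam ≤ (N:ℝ) ^ (-(t - min (1/(k+1:ℝ)) ε)) ∧
      |g N lam| < (N:ℝ) ^ (-(S t) - ε)) := by
    intro k M
    have hδ : 0 < min (1/(k+1:ℝ)) ε := lt_min (by positivity) hε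
    have h1 := hcon _ hδ (min_le_right _ _)
    rw [Filter.frequently_atTop] at h1
    obtain ⟨N, hN, hbad⟩ := h1 (max M 1)
    obtain ⟨lam, hmem, hlo, hhi, hgt⟩ := hbad
    exact ⟨N, le_trans (le_max_left _ _) hN, le_trans (le_max_right _ _) hN,
      lam, hmem, hlo, hhi, hgt⟩
  obtain ⟨φ, hφ, hP⟩ := exists_strictMono_choice _ key
  choose hφ1 lamb hmem hlo hhi hgt using hP
  have hφ1' : ∀ k, (1:ℝ) ≤ ((φ k : ℕ) : ℝ) := fun k => by exact_mod_cast hφ1 k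
  have hlo' : ∀ k, ((φ k : ℝ)) ^ (-(t + 1 / (k + 1 : ℝ))) ≤ lamb k := fun k =>
    le_trans (Real.rpow_le_rpow_of_exponent_le (hφ1' k)
      (by have := min_le_left (1/(k+1:ℝ)) ε; simp only [neg_le_neg_iff]; linarith)) (hlo k)
  have hhi' : ∀ k, lamb k ≤ ((φ k : ℝ)) ^ (-(t - 1 / (k + 1 : ℝ))) := fun k =>
    le_trans (hhi k) (Real.rpow_le_rpow_of_exponent_le (hφ1' k)
      (by have := min_le_left (1/(k+1:ℝ)) ε; simp only [neg_le_neg_iff]; linarith))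
  have hsc := splice_hasScale hφ ht hmem hlo' hhi'
  have hg := hprof (splice φ lamb t) (splice_mem ht hmem) t ht hsc
  have hev := (hg.2 ε hε).def one_pos
  rw [eventually_atTop] at hev
  obtain ⟨M, hM⟩ := hev
  have h1 := hM (φ M) (hφ.le_apply)
  simp only [Real.norm_eq_abs, abs_abs, one_mul] at h1
  rw [splice_apply hφ] at h1
  have h2 : |(((φ M : ℕ):ℝ)) ^ (-(S t) - ε)| = (((φ M : ℕ):ℝ)) ^ (-(S t) - ε) :=
    abs_of_nonneg (Real.rpow_nonneg (by positivity) _)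
  rw [h2] at h1
  exact absurd h1 (not_le.mpr (hgt M))

lemma scale_of_upper' {f : ℕ → ℝ} {C p q : ℝ} (h : p < q)
    (hb : ∀ᶠ N : ℕ in atTop, |f N| ≤ C * (N : ℝ) ^ p) :
    (fun N : ℕ => |f N|) =o[atTop] fun N : ℕ => (N : ℝ) ^ q := by
  have h1 : (fun N : ℕ => |f N|) =O[atTop] fun N : ℕ => (N : ℝ) ^ p := by
    apply IsBigO.of_bound C
    filter_upwards [hb] with N hN
    rwa [Real.norm_eq_abs, Real.norm_eq_abs, abs_abs,
      abs_of_nonneg (Real.rpow_nonneg (by positivity) _)]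
  exact h1.trans_isLittleO (npow_lo h)

lemma scale_of_lower' {f : ℕ → ℝ} {c p q : ℝ} (hc : 0 < c) (h : q < p)
    (hb : ∀ᶠ N : ℕ in atTop, c * (N : ℝ) ^ p ≤ |f N|) :
    (fun N : ℕ => (N : ℝ) ^ q) =o[atTop] fun N : ℕ => |f N| := by
  have h1 : (fun N : ℕ => (N : ℝ) ^ p) =O[atTop] fun N : ℕ => |f N| := by
    apply IsBigO.of_bound (1/c)
    filter_upwards [hb] with N hN
    rw [Real.norm_eq_abs, Real.norm_eq_abs, abs_abs,
      abs_of_nonneg (Real.rpow_nonneg (by positivity) _)]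
    rw [← le_div_iff₀' hc] at hN
    rwa [one_div, inv_mul_eq_div]
  exact (npow_lo h).trans_isBigO h1

/-- Comparison of profile values at nearby points. -/
lemma S_compare {g : ℕ → ℝ → ℝ} {S : ℝ → ℝ} (hprof : HasScalingProfile g S)
    {t t' : ℝ} (ht : 0 ≤ t) (ht' : 0 ≤ t') {ε : ℝ} (hε : 0 < ε) {δ' : ℝ}
    (hup : ∀ᶠ N : ℕ in atTop, ∀ lam : ℝ, lam ∈ Set.Ioc (0:ℝ) 1 →
      (N:ℝ) ^ (-(t' + δ')) ≤ lam → lam ≤ (N:ℝ) ^ (-(t' - δ')) →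
      |g N lam| ≤ (N:ℝ) ^ (-(S t') + ε))
    (hc1 : t' - δ' ≤ t) (hc2 : t ≤ t' + δ') : S t' ≤ S t + 2 * ε := by
  obtain ⟨δ, hδ, _, hlow⟩ := uniformLower hprof ht hε
  obtain ⟨N, hN2, hN⟩ := ((eventually_ge_atTop 2).and (hup.and hlow)).exists
  obtain ⟨hup', hlow'⟩ := hN.imp id id
  have hN1 : (1:ℝ) < (N:ℝ) := by exact_mod_cast Nat.lt_of_lt_of_le one_lt_two hN2
  set lam : ℝ := (N:ℝ) ^ (-t) with hlamdef
  have hmem : lam ∈ Set.Ioc (0:ℝ) 1 :=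
    ⟨Real.rpow_pos_of_pos (by linarith) _,
      Real.rpow_le_one_of_one_le_of_nonpos hN1.le (by linarith)⟩
  have e1 : (N:ℝ) ^ (-(t + δ)) ≤ lam :=
    Real.rpow_le_rpow_of_exponent_le hN1.le (by linarith)
  have e2 : lam ≤ (N:ℝ) ^ (-(t - δ)) :=
    Real.rpow_le_rpow_of_exponent_le hN1.le (by linarith)
  have e3 : (N:ℝ) ^ (-(t' + δ')) ≤ lam :=
    Real.rpow_le_rpow_of_exponent_le hN1.le (by linarith)
  have e4 : lam ≤ (N:ℝ) ^ (-(t' - δ')) :=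
    Real.rpow_le_rpow_of_exponent_le hN1.le (by linarith)
  have h1 := hlow' lam hmem e1 e2
  have h2 := hup' lam hmem e3 e4
  have h3 : (N:ℝ) ^ (-(S t) - ε) ≤ (N:ℝ) ^ (-(S t') + ε) := le_trans h1 h2
  rw [Real.rpow_le_rpow_left_iff hN1] at h3
  linarith

/-- The values `S t + t` are bounded below on `[0, a]`. -/
lemma profile_bddBelow {g : ℕ → ℝ → ℝ} {S : ℝ → ℝ} (hprof : HasScalingProfile g S)
    {a : ℝ} (ha : 0 < a) : BddBelow ((fun s => S s + s) '' Set.Icc 0 a) := by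
  have key : ∀ i : Set.Icc (0:ℝ) a, ∃ δ : ℝ, 0 < δ ∧ δ ≤ 1 ∧
      ∀ᶠ N : ℕ in atTop, ∀ lam : ℝ, lam ∈ Set.Ioc (0:ℝ) 1 →
      (N:ℝ) ^ (-((i:ℝ) + δ)) ≤ lam → lam ≤ (N:ℝ) ^ (-((i:ℝ) - δ)) →
      |g N lam| ≤ (N:ℝ) ^ (-(S i) + 1) :=
    fun i => uniformUpper hprof i.2.1 one_pos
  choose δ hδpos hδle hev using key
  have hcov : Set.Icc (0:ℝ) a ⊆ ⋃ i : Set.Icc (0:ℝ) a, Metric.ball (i:ℝ) (δ i) := by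
    intro x hx
    exact Set.mem_iUnion.mpr ⟨⟨x, hx⟩, Metric.mem_ball_self (hδpos _)⟩
  obtain ⟨T, hT⟩ := isCompact_Icc.elim_finite_subcover _
    (fun i => Metric.isOpen_ball) hcov
  have hTne : T.Nonempty := by
    have h0 := hT ⟨le_refl 0, ha.le⟩
    rw [Set.mem_iUnion₂] at h0
    obtain ⟨i, hi, _⟩ := h0
    exact ⟨i, hi⟩
  refine ⟨(T.inf' hTne fun i => S i) - 2, ?_⟩
  rintro x ⟨t, htmem, rfl⟩
  have h0 := hT htmem
  rw [Set.mem_iUnion₂] at h0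
  obtain ⟨i, hi, hball⟩ := h0
  rw [Metric.mem_ball, Real.dist_eq, abs_lt] at hball
  have hcomp : S i ≤ S t + 2 * 1 :=
    S_compare hprof htmem.1 i.2.1 one_pos (hev i) (by linarith [hball.1, hball.2])
      (by linarith [hball.1, hball.2])
  have hinf : T.inf' hTne (fun i => S i) ≤ S i := Finset.inf'_le _ hi
  have := htmem.1
  show _ ≤ S t + t
  linarith

/-- Splitting a set integral over a finite family of blocks covering the set. -/
lemma setIntegral_le_sum_blocks {f : ℝ → ℝ} {s : Set ℝ} (hs : MeasurableSet s)
    {ι : Type*} (J : Finset ι) (B : ι → Set ℝ) (hB : ∀ j, MeasurableSet (B j))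
    (hsub : s ⊆ ⋃ j ∈ J, B j) (hf : IntegrableOn f s volume)
    (hnn : 0 ≤ f) :
    ∫ x in s, f x ≤ ∑ j ∈ J, ∫ x in B j ∩ s, f x := by
  classical
  induction J using Finset.induction generalizing s with
  | empty =>
    simp only [Finset.notMem_empty, Set.iUnion_of_empty, Set.iUnion_empty,
      Set.subset_empty_iff] at hsub
    simp [hsub]
  | insert i J' hnotmem ih =>
    have hsplit : s = (s ∩ B i) ∪ (s \ B i) := (Set.inter_union_diff s (B i)).symm
    have hd : Disjoint (s ∩ B i) (s \ B i) :=
      Set.disjoint_left.mpr fun x hx1 hx2 => hx2.2 hx1.2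
    have hm1 : MeasurableSet (s ∩ B i) := hs.inter (hB i)
    have hm2 : MeasurableSet (s \ B i) := hs.diff (hB i)
    have hint1 : IntegrableOn f (s ∩ B i) volume := hf.mono_set Set.inter_subset_left
    have hint2 : IntegrableOn f (s \ B i) volume := hf.mono_set Set.diff_subset
    have heq := setIntegral_union hd hm2 hint1 hint2
    rw [← hsplit] at heq
    rw [heq, Finset.sum_insert hnotmem]

    have hsub2 : s \ B i ⊆ ⋃ j ∈ J', B j := by
      intro x hx
      have := hsub hx.1
      rw [Set.mem_iUnion₂] at this ⊢
      obtain ⟨j, hj, hxj⟩ := this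
      rcases Finset.mem_insert.mp hj with rfl | hj'
      · exact absurd hxj hx.2
      · exact ⟨j, hj', hxj⟩
    have h2 := ih hm2 hsub2 hint2
    have h3 : ∑ j ∈ J', ∫ x in B j ∩ (s \ B i), f x ≤ ∑ j ∈ J', ∫ x in B j ∩ s, f x := by
      apply Finset.sum_le_sum
      intro j _
      apply setIntegral_mono_set (hf.mono_set Set.inter_subset_right)
        (Filter.Eventually.of_forall fun x => hnn x)
      exact (Set.inter_subset_inter_right _ Set.diff_subset).eventuallyLE
    have h1 : ∫ x in s ∩ B i, f x = ∫ x in B i ∩ s, f x := by rw [Set.inter_comm]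
    linarith

lemma main_upper (g : ℕ → ℝ → ℝ) (S : ℝ → ℝ) (a : ℝ) (aN : ℕ → ℝ)
    (hprof : HasScalingProfile g S)
    (hint : ∀ N, IntegrableOn (g N) (Set.Icc (aN N) 1))
    (haN_pos : ∀ N, 0 < aN N)
    (ha : 0 < a) (hscale : HasScale aN a) :
    ScaleAtLeast (fun N => ∫ lam in Set.Icc (aN N) 1, |g N lam|)
      (sInf ((fun s => S s + s) '' Set.Icc 0 a)) := by
  set sstar := sInf ((fun s => S s + s) '' Set.Icc 0 a) with hsstar
  have hbdd := profile_bddBelow hprof ha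
  intro ε hε
  have hε4 : 0 < ε/4 := by linarith
  have key : ∀ i : Set.Icc (0:ℝ) a, ∃ δ : ℝ, 0 < δ ∧ δ ≤ ε/4 ∧
      ∀ᶠ N : ℕ in atTop, ∀ lam : ℝ, lam ∈ Set.Ioc (0:ℝ) 1 →
      (N:ℝ) ^ (-((i:ℝ) + δ)) ≤ lam → lam ≤ (N:ℝ) ^ (-((i:ℝ) - δ)) →
      |g N lam| ≤ (N:ℝ) ^ (-(S i) + ε/4) :=
    fun i => uniformUpper hprof i.2.1 hε4
  choose δ hδpos hδle hev using key
  have hcov : Set.Icc (0:ℝ) a ⊆ ⋃ i : Set.Icc (0:ℝ) a, Metric.ball (i:ℝ) (δ i / 2) := by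
    intro x hx
    exact Set.mem_iUnion.mpr ⟨⟨x, hx⟩, Metric.mem_ball_self (by linarith [hδpos ⟨x, hx⟩])⟩
  obtain ⟨T, hT⟩ := isCompact_Icc.elim_finite_subcover _
    (fun i => Metric.isOpen_ball) hcov
  have hTne : T.Nonempty := by
    have h0 := hT ⟨le_refl 0, ha.le⟩
    rw [Set.mem_iUnion₂] at h0
    obtain ⟨i, hi, _⟩ := h0
    exact ⟨i, hi⟩
  set δ₀ := T.inf' hTne (fun i => δ i / 4) with hδ₀def
  have hδ₀pos : 0 < δ₀ := by
    rw [hδ₀def, Finset.lt_inf'_iff]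
    intro i _
    linarith [hδpos i]
  have hδ₀le : ∀ i ∈ T, δ₀ ≤ δ i / 4 := fun i hi => Finset.inf'_le _ hi
  set m := ⌊(a + δ₀)/δ₀⌋₊ + 1 with hmdef
  have hm : a + δ₀ < (m:ℝ) * δ₀ := by
    have h1 : (a + δ₀)/δ₀ < (m:ℝ) := by
      rw [hmdef]
      push_cast
      exact Nat.lt_floor_add_one _
    calc a + δ₀ = ((a + δ₀)/δ₀) * δ₀ := by field_simp
      _ < (m:ℝ) * δ₀ := by apply mul_lt_mul_of_pos_right h1 hδ₀pos
  set J := (Finset.range m).filter (fun j : ℕ => (j:ℝ) * δ₀ ≤ a + δ₀) with hJdef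
  have hassign : ∀ j ∈ J, ∃ i ∈ T, ((i:ℝ)) - δ i ≤ (j:ℝ) * δ₀ ∧
      ((j:ℝ) + 1) * δ₀ ≤ (i:ℝ) + δ i := by
    intro j hj
    rw [hJdef, Finset.mem_filter] at hj
    obtain ⟨-, hjle⟩ := hj
    have hb0 : (0:ℝ) ≤ min ((j:ℝ) * δ₀) a := le_min (by positivity) ha.le
    have hbmem : min ((j:ℝ) * δ₀) a ∈ Set.Icc (0:ℝ) a := ⟨hb0, min_le_right _ _⟩
    have h0 := hT hbmem
    rw [Set.mem_iUnion₂] at h0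
    obtain ⟨i, hi, hball⟩ := h0
    rw [Metric.mem_ball, Real.dist_eq, abs_lt] at hball
    refine ⟨i, hi, ?_, ?_⟩
    · have := min_le_left ((j:ℝ) * δ₀) a
      have h2 := hball.2
      rcases le_total ((j:ℝ) * δ₀) a with hca | hca
      · rw [min_eq_left hca] at hball
        linarith [hball.1, hball.2, hδpos i]
      · rw [min_eq_right hca] at hball
        linarith [hball.1, hδpos i]
    · have hd := hδ₀le i hi
      rcases le_total ((j:ℝ) * δ₀) a with hca | hca
      · rw [min_eq_left hca] at hball
        linarith [hball.1]
      · rw [min_eq_right hca] at hball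
        linarith [hball.1]
  choose iof hiT hieq1 hieq2 using hassign
  -- eventual facts
  have ev2 : ∀ᶠ N : ℕ in atTop, (N:ℝ) ^ (-(a + δ₀)) ≤ aN N := by
    have h1 := (hscale.2 δ₀ hδ₀pos).def one_pos
    filter_upwards [h1] with N hN
    rw [Real.norm_eq_abs, Real.norm_eq_abs, one_mul, abs_abs,
      abs_of_nonneg (Real.rpow_nonneg (by positivity) _)] at hN
    calc (N:ℝ) ^ (-(a + δ₀)) = (N:ℝ) ^ (-a - δ₀) := by ring_nf
      _ ≤ |aN N| := hN
      _ = aN N := abs_of_pos (haN_pos N)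
  have ev3 : ∀ᶠ N : ℕ in atTop, ∀ i ∈ T, ∀ lam : ℝ, lam ∈ Set.Ioc (0:ℝ) 1 →
      (N:ℝ) ^ (-((i:ℝ) + δ i)) ≤ lam → lam ≤ (N:ℝ) ^ (-((i:ℝ) - δ i)) →
      |g N lam| ≤ (N:ℝ) ^ (-(S i) + ε/4) :=
    (Filter.eventually_all_finset T).mpr (fun i _ => hev i)
  apply scale_of_upper' (C := (m:ℝ)) (show -sstar + ε/2 < -sstar + ε by linarith)
  filter_upwards [eventually_ge_atTop 2, ev2, ev3] with N hN2 haNlow hevN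
  have hN1 : (1:ℝ) < (N:ℝ) := by exact_mod_cast Nat.lt_of_lt_of_le one_lt_two hN2
  have hN0 : (0:ℝ) < (N:ℝ) := by linarith
  have hInn : (0:ℝ) ≤ ∫ lam in Set.Icc (aN N) 1, |g N lam| :=
    setIntegral_nonneg measurableSet_Icc (fun x _ => abs_nonneg _)
  rw [abs_of_nonneg hInn]
  set B : ℕ → Set ℝ := fun j =>
    Set.Icc ((N:ℝ) ^ (-(((j:ℝ) + 1) * δ₀))) ((N:ℝ) ^ (-((j:ℝ) * δ₀))) with hBdef
  have hcov' : Set.Icc (aN N) 1 ⊆ ⋃ j ∈ J, B j := by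
    intro x hx
    have hx0 : 0 < x := lt_of_lt_of_le (haN_pos N) hx.1
    set e := -Real.logb N x with hedef
    have hxe : x = (N:ℝ) ^ (-e) := by
      rw [hedef, neg_neg, Real.rpow_logb hN0 (ne_of_gt hN1) hx0]
    have he0 : 0 ≤ e := by
      rw [hedef]
      simp only [neg_nonneg]
      exact Real.logb_nonpos hN1 hx0.le hx.2
    have heup : e ≤ a + δ₀ := by
      have h1 : Real.logb N ((N:ℝ) ^ (-(a + δ₀))) ≤ Real.logb N x :=
        Real.logb_le_logb_of_le hN1 (Real.rpow_pos_of_pos hN0 _) (le_trans haNlow hx.1)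
      rw [Real.logb_rpow hN0 (ne_of_gt hN1)] at h1
      rw [hedef]
      linarith
    set j := ⌊e/δ₀⌋₊ with hjdef
    have hj1 : (j:ℝ) * δ₀ ≤ e := by
      rw [hjdef]
      calc (⌊e/δ₀⌋₊ : ℝ) * δ₀ ≤ (e/δ₀) * δ₀ :=
            mul_le_mul_of_nonneg_right (Nat.floor_le (by positivity)) hδ₀pos.le
        _ = e := by field_simp
    have hj2 : e < ((j:ℝ) + 1) * δ₀ := by
      have := Nat.lt_floor_add_one (e/δ₀)
      rw [hjdef]
      calc e = (e/δ₀) * δ₀ := by field_simp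
        _ < ((⌊e/δ₀⌋₊:ℝ) + 1) * δ₀ := mul_lt_mul_of_pos_right this hδ₀pos
    have hjJ : j ∈ J := by
      rw [hJdef, Finset.mem_filter, Finset.mem_range]
      constructor
      · have : (j:ℝ) * δ₀ < (m:ℝ) * δ₀ := lt_of_le_of_lt hj1 (lt_of_le_of_lt heup hm)
        have : (j:ℝ) < (m:ℝ) := lt_of_mul_lt_mul_right this hδ₀pos.le
        exact_mod_cast this
      · linarith
    rw [Set.mem_iUnion₂]
    refine ⟨j, hjJ, ?_, ?_⟩
    · rw [hxe]
      exact Real.rpow_le_rpow_of_exponent_le hN1.le (by linarith)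
    · rw [hxe]
      exact Real.rpow_le_rpow_of_exponent_le hN1.le (by linarith)
  have habs : IntegrableOn (fun lam => |g N lam|) (Set.Icc (aN N) 1) volume := (hint N).abs
  have step1 : ∫ lam in Set.Icc (aN N) 1, |g N lam| ≤
      ∑ j ∈ J, ∫ x in B j ∩ Set.Icc (aN N) 1, |g N x| :=
    setIntegral_le_sum_blocks measurableSet_Icc J B (fun j => measurableSet_Icc)
      hcov' habs (fun x => abs_nonneg _)
  have step2 : ∀ j ∈ J, ∫ x in B j ∩ Set.Icc (aN N) 1, |g N x| ≤
      (N:ℝ) ^ (-sstar + ε/2) := by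
    intro j hjJ
    set i := iof j hjJ with hidef
    have hi1 : (0:ℝ) ≤ (i:ℝ) := i.2.1
    have hbound : ∀ x ∈ B j ∩ Set.Icc (aN N) 1, |g N x| ≤ (N:ℝ) ^ (-(S i) + ε/4) := by
      intro x hx
      obtain ⟨hxB, hxI⟩ := hx
      have hx0 : 0 < x := lt_of_lt_of_le (Real.rpow_pos_of_pos hN0 _) hxB.1
      refine hevN i (hiT j hjJ) x ⟨hx0, hxI.2⟩ ?_ ?_
      · exact le_trans (Real.rpow_le_rpow_of_exponent_le hN1.le
          (by have := hieq2 j hjJ; simp only [neg_le_neg_iff]; linarith)) hxB.1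
      · exact le_trans hxB.2 (Real.rpow_le_rpow_of_exponent_le hN1.le
          (by have := hieq1 j hjJ; simp only [neg_le_neg_iff]; linarith))
    have hμ : volume (B j ∩ Set.Icc (aN N) 1) ≤ ENNReal.ofReal ((N:ℝ) ^ (-((j:ℝ) * δ₀))) := by
      refine le_trans (measure_mono Set.inter_subset_left) ?_
      rw [hBdef]
      simp only
      rw [Real.volume_Icc]
      exact ENNReal.ofReal_le_ofReal (by
        have := Real.rpow_nonneg hN0.le (-(((j:ℝ) + 1) * δ₀))
        linarith)
    have hμ' : (volume (B j ∩ Set.Icc (aN N) 1)).toReal ≤ (N:ℝ) ^ (-((j:ℝ) * δ₀)) :=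
      ENNReal.toReal_le_of_le_ofReal (Real.rpow_nonneg hN0.le _) hμ
    have hC : (0:ℝ) ≤ (N:ℝ) ^ (-(S i) + ε/4) := Real.rpow_nonneg hN0.le _
    calc ∫ x in B j ∩ Set.Icc (aN N) 1, |g N x|
        ≤ ∫ _ in B j ∩ Set.Icc (aN N) 1, (N:ℝ) ^ (-(S i) + ε/4) := by
          apply setIntegral_mono_on (habs.mono_set Set.inter_subset_right)
            ((integrableOn_const_iff).mpr (Or.inr (lt_of_le_of_lt hμ ENNReal.ofReal_lt_top)))
            (measurableSet_Icc.inter measurableSet_Icc) hbound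
      _ = (volume (B j ∩ Set.Icc (aN N) 1)).toReal * (N:ℝ) ^ (-(S i) + ε/4) := by
          rw [setIntegral_const, smul_eq_mul, measureReal_def]
      _ ≤ (N:ℝ) ^ (-((j:ℝ) * δ₀)) * (N:ℝ) ^ (-(S i) + ε/4) :=
          mul_le_mul_of_nonneg_right hμ' hC
      _ ≤ (N:ℝ) ^ (-(i:ℝ) + ε/4) * (N:ℝ) ^ (-(S i) + ε/4) := by
          apply mul_le_mul_of_nonneg_right _ hC
          apply Real.rpow_le_rpow_of_exponent_le hN1.le
          have h1 := hieq1 j hjJ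
          have h2 := hδle i
          linarith
      _ = (N:ℝ) ^ ((-(i:ℝ) + ε/4) + (-(S i) + ε/4)) := (Real.rpow_add hN0 _ _).symm
      _ ≤ (N:ℝ) ^ (-sstar + ε/2) := by
          apply Real.rpow_le_rpow_of_exponent_le hN1.le
          have hle : sstar ≤ S i + (i:ℝ) := csInf_le hbdd ⟨(i:ℝ), i.2, rfl⟩
          linarith
  calc ∫ lam in Set.Icc (aN N) 1, |g N lam|
      ≤ ∑ j ∈ J, ∫ x in B j ∩ Set.Icc (aN N) 1, |g N x| := step1
    _ ≤ ∑ _j ∈ J, (N:ℝ) ^ (-sstar + ε/2) := Finset.sum_le_sum step2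
    _ = (J.card : ℝ) * (N:ℝ) ^ (-sstar + ε/2) := by
        rw [Finset.sum_const, nsmul_eq_mul]
    _ ≤ (m:ℝ) * (N:ℝ) ^ (-sstar + ε/2) := by
        apply mul_le_mul_of_nonneg_right _ (Real.rpow_nonneg hN0.le _)
        have : J.card ≤ m := le_trans (Finset.card_filter_le _ _) (by rw [Finset.card_range])
        exact_mod_cast this

lemma main_lower (g : ℕ → ℝ → ℝ) (S : ℝ → ℝ) (a : ℝ) (aN : ℕ → ℝ)
    (hprof : HasScalingProfile g S)
    (hint : ∀ N, IntegrableOn (g N) (Set.Icc (aN N) 1))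
    (haN_pos : ∀ N, 0 < aN N)
    (ha : 0 < a) (hscale : HasScale aN a) :
    ScaleAtMost (fun N => ∫ lam in Set.Icc (aN N) 1, |g N lam|)
      (sInf ((fun s => S s + s) '' Set.Icc 0 a)) := by
  set sstar := sInf ((fun s => S s + s) '' Set.Icc 0 a) with hsstar
  have hne : ((fun s => S s + s) '' Set.Icc 0 a).Nonempty :=
    ⟨S 0 + 0, 0, ⟨le_refl 0, ha.le⟩, rfl⟩
  intro ε hε
  have hε4 : 0 < ε/4 := by linarith
  obtain ⟨x, hxmem, hxlt⟩ := Real.lt_sInf_add_pos hne hε4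
  obtain ⟨tb, htbmem, rfl⟩ := hxmem
  obtain ⟨htb0, htba⟩ := htbmem
  obtain ⟨δ, hδpos, hδle, hev⟩ := uniformLower hprof htb0 hε4
  set w := min δ a / 4 with hwdef
  have hw : 0 < w := by rw [hwdef]; have := lt_min hδpos ha; positivity
  have hwδ : w ≤ δ/4 := by rw [hwdef]; have := min_le_left δ a; linarith
  have hwa : w ≤ a/4 := by rw [hwdef]; have := min_le_right δ a; linarith
  set v := min (tb + δ/2) (a - w) with hvdef
  set u := max (tb - δ/2) 0 with hudef
  have hv1 : v ≤ tb + δ := le_trans (min_le_left _ _) (by linarith)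
  have hv2 : v < a := lt_of_le_of_lt (min_le_right _ _) (by linarith)
  have hu1 : tb - δ ≤ u := le_trans (by linarith) (le_max_left _ _)
  have hu2 : (0:ℝ) ≤ u := le_max_right _ _
  have hu3 : u ≤ tb := max_le (by linarith) htb0
  have huv : u < v := by
    apply lt_min
    · exact max_lt (by linarith) (by linarith)
    · exact max_lt (by linarith) (by linarith)
  have hva : 0 < (a - v)/2 := by linarith
  have ev_a : ∀ᶠ N : ℕ in atTop, aN N ≤ (N:ℝ) ^ (-v) := by
    have h1 := (hscale.1 _ hva).def one_pos
    filter_upwards [h1, eventually_ge_atTop 1] with N hN hN1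
    have hN1' : (1:ℝ) ≤ (N:ℝ) := by exact_mod_cast hN1
    rw [Real.norm_eq_abs, Real.norm_eq_abs, one_mul, abs_abs,
      abs_of_nonneg (Real.rpow_nonneg (by positivity) _),
      abs_of_pos (haN_pos N)] at hN
    refine le_trans hN (Real.rpow_le_rpow_of_exponent_le hN1' (by linarith))
  have ev_half : ∀ᶠ N : ℕ in atTop, (N:ℝ) ^ (-(v - u)) ≤ 1/2 := by
    have ht : Tendsto (fun N : ℕ => (N : ℝ) ^ (-(v - u))) atTop (nhds 0) :=
      (tendsto_rpow_neg_atTop (by linarith)).comp tendsto_natCast_atTop_atTop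
    exact ht.eventually_le_const (by norm_num)
  apply scale_of_lower' (c := 1/2) (by norm_num)
    (show -sstar - ε < -sstar - ε/2 by linarith)
  filter_upwards [eventually_ge_atTop 2, hev, ev_a, ev_half] with N hN2 hevN haNle hhalf
  have hN1 : (1:ℝ) < (N:ℝ) := by exact_mod_cast Nat.lt_of_lt_of_le one_lt_two hN2
  have hN0 : (0:ℝ) < (N:ℝ) := by linarith
  have hInn : (0:ℝ) ≤ ∫ lam in Set.Icc (aN N) 1, |g N lam| :=
    setIntegral_nonneg measurableSet_Icc (fun x _ => abs_nonneg _)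
  rw [abs_of_nonneg hInn]
  set A := Set.Icc ((N:ℝ) ^ (-v)) ((N:ℝ) ^ (-u)) with hAdef
  set C := (N:ℝ) ^ (-(S tb) - ε/4) with hCdef
  have hsub : A ⊆ Set.Icc (aN N) 1 := by
    intro x hx
    refine ⟨le_trans haNle hx.1, le_trans hx.2 ?_⟩
    exact Real.rpow_le_one_of_one_le_of_nonpos hN1.le (by linarith)
  have habs : IntegrableOn (fun lam => |g N lam|) (Set.Icc (aN N) 1) volume := (hint N).abs
  have hvord : (N:ℝ) ^ (-v) ≤ (N:ℝ) ^ (-u) :=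
    Real.rpow_le_rpow_of_exponent_le hN1.le (by linarith)
  have hvolA : volume A = ENNReal.ofReal ((N:ℝ) ^ (-u) - (N:ℝ) ^ (-v)) := by
    rw [hAdef, Real.volume_Icc]
  have hCpos : 0 < C := Real.rpow_pos_of_pos hN0 _
  have stepB : ∫ x in A, C ≤ ∫ x in A, |g N x| := by
    apply setIntegral_mono_on
      ((integrableOn_const_iff).mpr (Or.inr (by rw [hvolA]; exact ENNReal.ofReal_lt_top)))
      (habs.mono_set hsub) measurableSet_Icc
    intro x hx
    have hx0 : 0 < x := lt_of_lt_of_le (Real.rpow_pos_of_pos hN0 _) hx.1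
    have hx1 : x ≤ 1 := (hsub hx).2
    refine hevN x ⟨hx0, hx1⟩ ?_ ?_
    · exact le_trans (Real.rpow_le_rpow_of_exponent_le hN1.le (by linarith)) hx.1
    · exact le_trans hx.2 (Real.rpow_le_rpow_of_exponent_le hN1.le (by linarith))
  have stepA : ∫ x in A, |g N x| ≤ ∫ lam in Set.Icc (aN N) 1, |g N lam| :=
    setIntegral_mono_set habs (Filter.Eventually.of_forall fun x => abs_nonneg _)
      hsub.eventuallyLE
  have stepC : ∫ x in A, C = ((N:ℝ) ^ (-u) - (N:ℝ) ^ (-v)) * C := by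
    rw [setIntegral_const, smul_eq_mul, measureReal_def, hvolA, ENNReal.toReal_ofReal (by linarith)]
  have stepD : (N:ℝ) ^ (-u) / 2 ≤ (N:ℝ) ^ (-u) - (N:ℝ) ^ (-v) := by
    have hsplit : (N:ℝ) ^ (-v) = (N:ℝ) ^ (-u) * (N:ℝ) ^ (-(v - u)) := by
      rw [← Real.rpow_add hN0]; ring_nf
    have hupos : (0:ℝ) < (N:ℝ) ^ (-u) := Real.rpow_pos_of_pos hN0 _
    have : (N:ℝ) ^ (-v) ≤ (N:ℝ) ^ (-u) * (1/2) := by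
      rw [hsplit]
      exact mul_le_mul_of_nonneg_left hhalf hupos.le
    linarith
  have stepE : (1/2) * (N:ℝ) ^ (-sstar - ε/2) ≤ ((N:ℝ) ^ (-u) / 2) * C := by
    have h1 : (N:ℝ) ^ (-sstar - ε/2) ≤ (N:ℝ) ^ (-u) * C := by
      have h2 : (N:ℝ) ^ (-u) * C = (N:ℝ) ^ (-u + (-(S tb) - ε/4)) := by
        rw [hCdef, ← Real.rpow_add hN0]
      rw [h2]
      apply Real.rpow_le_rpow_of_exponent_le hN1.le
      have : S tb + tb < sstar + ε/4 := hxlt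
      have : u ≤ tb := hu3
      linarith
    calc (1/2) * (N:ℝ) ^ (-sstar - ε/2) ≤ (1/2) * ((N:ℝ) ^ (-u) * C) := by
          apply mul_le_mul_of_nonneg_left h1 (by norm_num)
      _ = ((N:ℝ) ^ (-u) / 2) * C := by ring
  have final : (1/2) * (N:ℝ) ^ (-sstar - ε/2) ≤ ∫ lam in Set.Icc (aN N) 1, |g N lam| := by
    calc (1/2) * (N:ℝ) ^ (-sstar - ε/2) ≤ ((N:ℝ) ^ (-u) / 2) * C := stepE
      _ ≤ ((N:ℝ) ^ (-u) - (N:ℝ) ^ (-v)) * C := mul_le_mul_of_nonneg_right stepD hCpos.le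
      _ = ∫ x in A, C := stepC.symm
      _ ≤ ∫ x in A, |g N x| := stepB
      _ ≤ _ := stepA
  exact final

/-- scale of the integrals `∫_{a_N}^1 |g_N(λ)| dλ` for a sequence of
functions with scaling profile `S` and a lower limit sequence `a_N` of scale `a > 0`. -/
theorem scale_of_integral (g : ℕ → ℝ → ℝ) (S : ℝ → ℝ) (a : ℝ) (aN : ℕ → ℝ)
    (hmeas : ∀ N, Measurable (g N))
    (hprof : HasScalingProfile g S)
    (hint : ∀ N, IntegrableOn (g N) (Set.Icc (aN N) 1))
    (haN_pos : ∀ N, 0 < aN N) (haN_le : ∀ N, aN N ≤ 1)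
    (ha : 0 < a) (hscale : HasScale aN a) :
    HasScale (fun N => ∫ lam in Set.Icc (aN N) 1, |g N lam|)
      (sInf ((fun s => S s + s) '' Set.Icc 0 a)) := by
  exact ⟨main_upper g S a aN hprof hint haN_pos ha hscale,
    main_lower g S a aN hprof hint haN_pos ha hscale⟩
end

section
/- Let g_N : (0,1]×(0,1] → ℝ be a sequence of measurable functions with a two-variable scaling profile S^{(g)}(s_1,s_2) (meaning: for all sequences λ_{1,N}, λ_{2,N} ∈ (0,1] of scales s_1 and s_2 respectively, |g_N(λ_{1,N},λ_{2,N})| has scale S^{(g)}(s_1,s_2)), and let a_N > 0 be a sequence of scale a > 0 with a_N ≤ 1. Then the sequence of double integrals ∫_{a_N}^1 ∫_{a_N}^1 |g_N(λ_1,λ_2)| dλ_1 dλ_2 has scale min_{0 ≤ s_1, s_2 ≤ a} ( S^{(g)}(s_1,s_2) + s_1 + s_2 ). -/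
open Filter Asymptotics MeasureTheory

/-- Two-variable scaling profile. -/
def HasScalingProfile2 (g : ℕ → ℝ → ℝ → ℝ) (S : ℝ → ℝ → ℝ) : Prop :=
  ∀ lam1 lam2 : ℕ → ℝ, (∀ N, lam1 N ∈ Set.Ioc (0 : ℝ) 1) →
    (∀ N, lam2 N ∈ Set.Ioc (0 : ℝ) 1) →
    ∀ s1 s2 : ℝ, 0 ≤ s1 → 0 ≤ s2 → HasScale lam1 s1 → HasScale lam2 s2 →
      HasScale (fun N => g N (lam1 N) (lam2 N)) (S s1 s2)

lemma tendsto_rpow_neg_nat {c : ℝ} (hc : 0 < c) :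
    Tendsto (fun N : ℕ => (N:ℝ) ^ (-c)) atTop (nhds 0) :=
  (tendsto_rpow_neg_atTop hc).comp tendsto_natCast_atTop_atTop

lemma hasScale_of_squeeze {I : ℕ → ℝ} {s : ℝ}
    (h : ∀ δ : ℝ, 0 < δ → ∀ᶠ N : ℕ in atTop,
      (N:ℝ) ^ (-s - δ) ≤ |I N| ∧ |I N| ≤ (N:ℝ) ^ (-s + δ)) : HasScale I s := by
  constructor
  · intro ε hε
    rw [isLittleO_iff]
    intro c hc
    have h2 := h (ε/2) (by linarith)
    have h3 : ∀ᶠ N : ℕ in atTop, (N:ℝ) ^ (-(ε/2)) < c :=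
      (tendsto_rpow_neg_nat (by linarith : (0:ℝ) < ε/2)).eventually_lt_const hc
    filter_upwards [h2, h3, eventually_ge_atTop 1] with N hN hN3 hN1
    have hNpos : (0:ℝ) < N := by exact_mod_cast hN1
    have key : (N:ℝ) ^ (-s + ε/2) = (N:ℝ) ^ (-(ε/2)) * (N:ℝ) ^ (-s + ε) := by
      rw [← Real.rpow_add hNpos]; ring_nf
    rw [Real.norm_eq_abs, abs_abs, Real.norm_eq_abs,
      abs_of_nonneg (Real.rpow_nonneg hNpos.le _)]
    calc |I N| ≤ (N:ℝ) ^ (-s + ε/2) := hN.2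
      _ = (N:ℝ) ^ (-(ε/2)) * (N:ℝ) ^ (-s + ε) := key
      _ ≤ c * (N:ℝ) ^ (-s + ε) := by
          exact mul_le_mul_of_nonneg_right hN3.le (Real.rpow_nonneg hNpos.le _)
  · intro ε hε
    rw [isLittleO_iff]
    intro c hc
    have h2 := h (ε/2) (by linarith)
    have h3 : ∀ᶠ N : ℕ in atTop, (N:ℝ) ^ (-(ε/2)) < c :=
      (tendsto_rpow_neg_nat (by linarith : (0:ℝ) < ε/2)).eventually_lt_const hc
    filter_upwards [h2, h3, eventually_ge_atTop 1] with N hN hN3 hN1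
    have hNpos : (0:ℝ) < N := by exact_mod_cast hN1
    have key : (N:ℝ) ^ (-s - ε) = (N:ℝ) ^ (-(ε/2)) * (N:ℝ) ^ (-s - ε/2) := by
      rw [← Real.rpow_add hNpos]; ring_nf
    simp only [Real.norm_eq_abs, abs_abs]
    rw [abs_of_nonneg (Real.rpow_nonneg hNpos.le (-s - ε))]
    calc (N:ℝ) ^ (-s - ε) = (N:ℝ) ^ (-(ε/2)) * (N:ℝ) ^ (-s - ε/2) := key
      _ ≤ c * (N:ℝ) ^ (-s - ε/2) := by
          exact mul_le_mul_of_nonneg_right hN3.le (Real.rpow_nonneg hNpos.le _)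
      _ ≤ c * |I N| := by exact mul_le_mul_of_nonneg_left hN.1 hc.le

lemma squeeze_of_hasScale {I : ℕ → ℝ} {s : ℝ} (h : HasScale I s) {δ : ℝ} (hδ : 0 < δ) :
    ∀ᶠ N : ℕ in atTop, (N:ℝ) ^ (-s - δ) ≤ |I N| ∧ |I N| ≤ (N:ℝ) ^ (-s + δ) := by
  have h1 := (isLittleO_iff.mp (h.1 δ hδ)) one_pos
  have h2 := (isLittleO_iff.mp (h.2 δ hδ)) one_pos
  filter_upwards [h1, h2] with N h1 h2
  simp only [Real.norm_eq_abs, abs_abs] at h1 h2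
  constructor
  · calc (N:ℝ) ^ (-s - δ) ≤ |(N:ℝ) ^ (-s - δ)| := le_abs_self _
      _ ≤ 1 * |I N| := by simpa using h2
      _ = |I N| := one_mul _
  · calc |I N| ≤ 1 * |(N:ℝ) ^ (-s + δ)| := h1
      _ = (N:ℝ) ^ (-s + δ) := by
          rw [one_mul, abs_of_nonneg (Real.rpow_nonneg (Nat.cast_nonneg N) _)]

lemma hasScale_of_squeeze' {I : ℕ → ℝ} {s : ℝ}
    (h : ∀ δ : ℝ, 0 < δ → ∀ᶠ N : ℕ in atTop,
      (N:ℝ) ^ (-s - δ) ≤ I N ∧ I N ≤ (N:ℝ) ^ (-s + δ)) : HasScale I s := by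
  apply hasScale_of_squeeze
  intro δ hδ
  filter_upwards [h δ hδ, eventually_ge_atTop 1] with N hN hN1
  have hNpos : (0:ℝ) < N := by exact_mod_cast hN1
  have hpos : 0 < I N := lt_of_lt_of_le (Real.rpow_pos_of_pos hNpos _) hN.1
  rw [abs_of_pos hpos]
  exact hN

lemma squeeze_of_hasScale' {I : ℕ → ℝ} {s : ℝ} (h : HasScale I s)
    (hpos : ∀ N, 0 < I N) {δ : ℝ} (hδ : 0 < δ) :
    ∀ᶠ N : ℕ in atTop, (N:ℝ) ^ (-s - δ) ≤ I N ∧ I N ≤ (N:ℝ) ^ (-s + δ) := by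
  filter_upwards [squeeze_of_hasScale h hδ] with N hN
  rwa [abs_of_pos (hpos N)] at hN

lemma tendsto_log_div_log {I : ℕ → ℝ} {s : ℝ} (h : HasScale I s) (hpos : ∀ N, 0 < I N) :
    Tendsto (fun N : ℕ => Real.log (I N) / Real.log N) atTop (nhds (-s)) := by
  rw [Metric.tendsto_nhds]
  intro ε hε
  filter_upwards [squeeze_of_hasScale' h hpos (show (0:ℝ) < ε/2 by linarith),
    eventually_ge_atTop 2] with N hN hN2
  have hN1 : (1:ℝ) < N := by exact_mod_cast hN2
  have hlog : 0 < Real.log N := Real.log_pos hN1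
  have h1 : Real.log (I N) ≤ (-s + ε/2) * Real.log N := by
    have := Real.log_le_log (hpos N) hN.2
    rwa [Real.log_rpow (by linarith)] at this
  have h2 : (-s - ε/2) * Real.log N ≤ Real.log (I N) := by
    have := Real.log_le_log (Real.rpow_pos_of_pos (by linarith) _) hN.1
    rwa [Real.log_rpow (by linarith)] at this
  rw [Real.dist_eq, abs_lt]
  constructor
  · have : (-s - ε/2) ≤ Real.log (I N) / Real.log N := by
      rw [le_div_iff₀ hlog]; exact h2
    linarith
  · have : Real.log (I N) / Real.log N ≤ (-s + ε/2) := by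
      rw [div_le_iff₀ hlog]; exact h1
    linarith

lemma rpow_log_ratio {w : ℝ} (hw : 0 < w) {n : ℕ} (hn : 2 ≤ n) :
    (n:ℝ) ^ (-(-Real.log w / Real.log n)) = w := by
  have hn1 : (1:ℝ) < n := by exact_mod_cast hn
  have hlog : 0 < Real.log n := Real.log_pos hn1
  rw [neg_div, neg_neg, Real.rpow_def_of_pos (by linarith), mul_comm,
    div_mul_cancel₀ _ (ne_of_gt hlog), Real.exp_log hw]
lemma merged_seq (θ : ℕ → ℕ) (hθ2 : ∀ k, 2 ≤ θ k) (hθ : StrictMono θ)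
    (x : ℕ → ℝ) (hx : ∀ k, x k ∈ Set.Ioc (0:ℝ) 1) (s : ℝ) (hs : 0 ≤ s)
    (ht : Tendsto (fun k => -Real.log (x k) / Real.log (θ k)) atTop (nhds s)) :
    ∃ l : ℕ → ℝ, (∀ N, l N ∈ Set.Ioc (0:ℝ) 1) ∧ HasScale l s ∧ ∀ k, l (θ k) = x k := by
  classical
  set t := fun k => -Real.log (x k) / Real.log (θ k) with htdef
  refine ⟨fun N => if h : ∃ k, θ k = N then x h.choose else ((N:ℝ)+1) ^ (-s), ?_, ?_, ?_⟩
  · intro N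
    by_cases h : ∃ k, θ k = N
    · simp only [dif_pos h]; exact hx _
    · simp only [dif_neg h]
      constructor
      · positivity
      · exact Real.rpow_le_one_of_one_le_of_nonpos (by linarith [Nat.cast_nonneg (α := ℝ) N]) (by linarith)
  · apply hasScale_of_squeeze'
    intro δ hδ
    -- K from convergence of t
    have hmet := (Metric.tendsto_nhds.mp ht) (δ/2) (by linarith)
    obtain ⟨K, hK⟩ := (eventually_atTop).mp hmet
    have hpowbig : ∀ᶠ N : ℕ in atTop, (2:ℝ) ^ s ≤ (N:ℝ) ^ δ := by
      have : Tendsto (fun N : ℕ => (N:ℝ) ^ δ) atTop atTop :=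
        (tendsto_rpow_atTop hδ).comp tendsto_natCast_atTop_atTop
      exact this.eventually_ge_atTop _
    filter_upwards [hpowbig, eventually_gt_atTop (θ K), eventually_ge_atTop 2]
      with N hN1 hN2 hN3
    have hN1' : (1:ℝ) ≤ N := by exact_mod_cast le_trans (by norm_num) hN3
    have hNpos : (0:ℝ) < N := by linarith
    by_cases h : ∃ k, θ k = N
    · simp only [dif_pos h]
      set k₀ := h.choose with hk₀
      have hθk : θ k₀ = N := h.choose_spec
      have hkK : K ≤ k₀ := by
        by_contra hcon
        push_neg at hcon
        have := hθ hcon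
        omega
      have hdist := hK k₀ hkK
      rw [Real.dist_eq, abs_lt] at hdist
      have hxk : (N:ℝ) ^ (-(t k₀)) = x k₀ := by
        rw [← hθk]; exact rpow_log_ratio (hx k₀).1 (hθ2 k₀)
      constructor
      · rw [← hxk]
        apply Real.rpow_le_rpow_of_exponent_le hN1'
        simp only [htdef] at hdist ⊢
        linarith [hdist.1]
      · rw [← hxk]
        apply Real.rpow_le_rpow_of_exponent_le hN1'
        simp only [htdef] at hdist ⊢
        linarith [hdist.2]
    · simp only [dif_neg h]
      constructor
      · -- N^(-s-δ) ≤ (N+1)^(-s)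
        have e1 : (N:ℝ) ^ (-s - δ) = (N:ℝ) ^ (-δ) * (N:ℝ) ^ (-s) := by
          rw [← Real.rpow_add hNpos]; ring_nf
        have e2 : (N:ℝ) ^ (-δ) ≤ (2:ℝ) ^ (-s) := by
          rw [Real.rpow_neg hNpos.le, Real.rpow_neg (by norm_num : (0:ℝ) ≤ 2)]
          exact inv_anti₀ (Real.rpow_pos_of_pos (by norm_num) _) hN1
        have e3 : ((2:ℝ) * N) ^ (-s) ≤ ((N:ℝ)+1) ^ (-s) := by
          apply Real.rpow_le_rpow_of_nonpos (by linarith) (by linarith) (by linarith)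
        calc (N:ℝ) ^ (-s - δ) = (N:ℝ) ^ (-δ) * (N:ℝ) ^ (-s) := e1
          _ ≤ (2:ℝ) ^ (-s) * (N:ℝ) ^ (-s) := by
              exact mul_le_mul_of_nonneg_right e2 (Real.rpow_nonneg hNpos.le _)
          _ = ((2:ℝ) * N) ^ (-s) := (Real.mul_rpow (by norm_num) hNpos.le).symm
          _ ≤ ((N:ℝ)+1) ^ (-s) := e3
      · calc ((N:ℝ)+1) ^ (-s) ≤ (N:ℝ) ^ (-s) :=
            Real.rpow_le_rpow_of_nonpos hNpos (by linarith) (by linarith)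
          _ ≤ (N:ℝ) ^ (-s + δ) := Real.rpow_le_rpow_of_exponent_le hN1' (by linarith)
  · intro k
    have h : ∃ k', θ k' = θ k := ⟨k, rfl⟩
    simp only [dif_pos h]
    congr 1
    exact hθ.injective h.choose_spec
lemma master_extract (a : ℝ) (aN : ℕ → ℝ) (haN_pos : ∀ N, 0 < aN N)
    (haN_le : ∀ N, aN N ≤ 1) (ha : 0 < a) (hscale : HasScale aN a)
    (θ : ℕ → ℕ) (hθ : StrictMono θ) (W : ℕ → ℝ × ℝ)
    (hW : ∀ k, W k ∈ Set.Icc (aN (θ k)) 1 ×ˢ Set.Icc (aN (θ k)) 1) :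
    ∃ s1 s2 : ℝ, s1 ∈ Set.Icc 0 a ∧ s2 ∈ Set.Icc 0 a ∧
    ∃ ψ : ℕ → ℕ, StrictMono ψ ∧ ∃ l1 l2 : ℕ → ℝ,
      (∀ N, l1 N ∈ Set.Ioc (0:ℝ) 1) ∧ (∀ N, l2 N ∈ Set.Ioc (0:ℝ) 1) ∧
      HasScale l1 s1 ∧ HasScale l2 s2 ∧
      (∀ k, l1 (θ (ψ k)) = (W (ψ k)).1 ∧ l2 (θ (ψ k)) = (W (ψ k)).2) := by
  classical
  have hblog : Tendsto (fun N : ℕ => -Real.log (aN N) / Real.log N) atTop (nhds a) := by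
    have := (tendsto_log_div_log hscale haN_pos).neg
    rw [neg_neg] at this
    simpa [neg_div] using this
  -- find K0 with the needed eventual facts
  have hev : ∀ᶠ n : ℕ in atTop, 2 ≤ n ∧ (n:ℝ) ^ (-a - 1) ≤ aN n := by
    filter_upwards [eventually_ge_atTop 2,
      squeeze_of_hasScale' hscale haN_pos (zero_lt_one)] with n h1 h2
    exact ⟨h1, h2.1⟩
  obtain ⟨K0, hK0⟩ := eventually_atTop.mp hev
  set θ' : ℕ → ℕ := fun k => θ (k + K0) with hθ'def
  have hθ'mono : StrictMono θ' := fun i j hij => hθ (by omega)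
  have hθ'ge : ∀ k, K0 ≤ θ' k := fun k => le_trans (by omega : K0 ≤ k + K0) hθ.le_apply
  have hθ'2 : ∀ k, 2 ≤ θ' k := fun k => (hK0 _ (hθ'ge k)).1
  have hθ'aN : ∀ k, ((θ' k : ℕ) : ℝ) ^ (-a - 1) ≤ aN (θ' k) := fun k => (hK0 _ (hθ'ge k)).2
  have hθ'log : ∀ k, 0 < Real.log (θ' k) := fun k =>
    Real.log_pos (by exact_mod_cast hθ'2 k)
  set W' : ℕ → ℝ × ℝ := fun k => W (k + K0) with hW'def
  have hW' : ∀ k, W' k ∈ Set.Icc (aN (θ' k)) 1 ×ˢ Set.Icc (aN (θ' k)) 1 := fun k => hW _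
  set t : ℕ → ℝ × ℝ := fun k =>
    (-Real.log (W' k).1 / Real.log (θ' k), -Real.log (W' k).2 / Real.log (θ' k)) with htdef
  -- t is in a compact box
  have hcoord : ∀ k, ∀ w : ℝ, aN (θ' k) ≤ w → w ≤ 1 →
      0 ≤ -Real.log w / Real.log (θ' k) ∧ -Real.log w / Real.log (θ' k) ≤ a + 1 := by
    intro k w hw1 hw2
    have hwpos : 0 < w := lt_of_lt_of_le (haN_pos _) hw1
    constructor
    · apply div_nonneg _ (hθ'log k).le
      simp only [neg_nonneg]
      exact Real.log_nonpos hwpos.le hw2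
    · rw [div_le_iff₀ (hθ'log k)]
      have h1 : ((θ' k : ℕ) : ℝ) ^ (-a - 1) ≤ w := le_trans (hθ'aN k) hw1
      have hbp : (0:ℝ) < ((θ' k : ℕ) : ℝ) := by
        exact_mod_cast lt_of_lt_of_le (by norm_num) (hθ'2 k)
      have h2 := Real.log_le_log (Real.rpow_pos_of_pos hbp _) h1
      rw [Real.log_rpow hbp] at h2
      nlinarith [h2]
  have htmem : ∀ k, t k ∈ Set.Icc ((0:ℝ), (0:ℝ)) (a+1, a+1) := by
    intro k
    rw [Set.Icc_prod_eq]
    have h1 := hcoord k (W' k).1 ((hW' k).1).1 ((hW' k).1).2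
    have h2 := hcoord k (W' k).2 ((hW' k).2).1 ((hW' k).2).2
    exact ⟨⟨h1.1, h1.2⟩, ⟨h2.1, h2.2⟩⟩
  obtain ⟨p, hp, ψ0, hψ0, hψ0t⟩ := (isCompact_Icc).tendsto_subseq htmem
  set s1 := p.1
  set s2 := p.2
  have ht1 : Tendsto (fun k => (t (ψ0 k)).1) atTop (nhds s1) :=
    (continuous_fst.tendsto p).comp hψ0t
  have ht2 : Tendsto (fun k => (t (ψ0 k)).2) atTop (nhds s2) :=
    (continuous_snd.tendsto p).comp hψ0t
  rw [Set.Icc_prod_eq] at hp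
  -- s1, s2 ≤ a
  have hbtend : Tendsto (fun k => -Real.log (aN (θ' (ψ0 k))) / Real.log (θ' (ψ0 k)))
      atTop (nhds a) :=
    hblog.comp ((hθ'mono.comp hψ0).tendsto_atTop)
  have hle : ∀ (w : ℕ → ℝ) (c : ℝ), (∀ k, aN (θ' k) ≤ w k) →
      Tendsto (fun k => -Real.log (w (ψ0 k)) / Real.log (θ' (ψ0 k))) atTop (nhds c) →
      c ≤ a := by
    intro w c hw htd
    refine le_of_tendsto_of_tendsto' htd hbtend ?_
    intro k
    have hlog := hθ'log (ψ0 k)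
    have hnum : -Real.log (w (ψ0 k)) ≤ -Real.log (aN (θ' (ψ0 k))) := by
      simp only [neg_le_neg_iff]
      exact Real.log_le_log (haN_pos _) (hw _)
    exact (div_le_div_iff_of_pos_right hlog).mpr hnum
  have hs1a : s1 ≤ a := hle (fun k => (W' k).1) s1 (fun k => ((hW' k).1).1) ht1
  have hs2a : s2 ≤ a := hle (fun k => (W' k).2) s2 (fun k => ((hW' k).2).1) ht2
  have hθ''mono : StrictMono (fun k => θ' (ψ0 k)) := hθ'mono.comp hψ0
  have hx1 : ∀ k, (W' (ψ0 k)).1 ∈ Set.Ioc (0:ℝ) 1 := fun k =>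
    ⟨lt_of_lt_of_le (haN_pos _) ((hW' (ψ0 k)).1).1, ((hW' (ψ0 k)).1).2⟩
  have hx2 : ∀ k, (W' (ψ0 k)).2 ∈ Set.Ioc (0:ℝ) 1 := fun k =>
    ⟨lt_of_lt_of_le (haN_pos _) ((hW' (ψ0 k)).2).1, ((hW' (ψ0 k)).2).2⟩
  obtain ⟨l1, hl1mem, hl1scale, hl1eq⟩ := merged_seq (fun k => θ' (ψ0 k))
    (fun k => hθ'2 (ψ0 k)) hθ''mono (fun k => (W' (ψ0 k)).1) hx1 s1 hp.1.1 ht1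
  obtain ⟨l2, hl2mem, hl2scale, hl2eq⟩ := merged_seq (fun k => θ' (ψ0 k))
    (fun k => hθ'2 (ψ0 k)) hθ''mono (fun k => (W' (ψ0 k)).2) hx2 s2 hp.2.1 ht2
  refine ⟨s1, s2, ⟨hp.1.1, hs1a⟩, ⟨hp.2.1, hs2a⟩,
    fun k => ψ0 k + K0, ?_, l1, l2, hl1mem, hl2mem, hl1scale, hl2scale, ?_⟩
  · intro i j hij
    have h := hψ0 hij
    show ψ0 i + K0 < ψ0 j + K0
    omega
  · intro k
    exact ⟨hl1eq k, hl2eq k⟩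
lemma u_bounds (a : ℝ) (aN : ℕ → ℝ) (haN_pos : ∀ N, 0 < aN N) (ha : 0 < a)
    (hscale : HasScale aN a) {s : ℝ} (hs : s ∈ Set.Icc 0 a) {δ : ℝ} (hδ : 0 < δ) :
    ∀ᶠ N : ℕ in atTop,
      (N:ℝ) ^ (-s - δ) ≤ max (aN N) ((N:ℝ) ^ (-s) / 2) ∧
      2 * max (aN N) ((N:ℝ) ^ (-s) / 2) ≤ (N:ℝ) ^ (-s + δ) ∧
      2 * max (aN N) ((N:ℝ) ^ (-s) / 2) ≤ 1 := by
  obtain ⟨hs0, hsa⟩ := hs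
  set δ'' := min (δ/2) (a/2) with hδ''
  have hδ''pos : 0 < δ'' := lt_min (by linarith) (by linarith)
  have hsq := squeeze_of_hasScale' hscale haN_pos hδ''pos
  have hhalf : ∀ᶠ N : ℕ in atTop, (N:ℝ) ^ (-δ) ≤ 1/2 :=
    (tendsto_rpow_neg_nat hδ).eventually_le_const (by norm_num)
  have hhalf2 : ∀ᶠ N : ℕ in atTop, (N:ℝ) ^ (-(δ/2)) ≤ 1/2 :=
    (tendsto_rpow_neg_nat (by linarith)).eventually_le_const (by norm_num)
  have hhalf3 : ∀ᶠ N : ℕ in atTop, (N:ℝ) ^ (-a + δ'') ≤ 1/2 := by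
    have : -a + δ'' = -(a - δ'') := by ring
    rw [this]
    refine (tendsto_rpow_neg_nat ?_).eventually_le_const (by norm_num)
    have : δ'' ≤ a/2 := min_le_right _ _
    linarith
  filter_upwards [hsq, hhalf, hhalf2, hhalf3, eventually_ge_atTop 1]
    with N hsqN hhalfN hhalf2N hhalf3N hN1
  have hN1' : (1:ℝ) ≤ N := by exact_mod_cast hN1
  have hNpos : (0:ℝ) < N := by linarith
  have hNs : (N:ℝ) ^ (-s) ≤ 1 := Real.rpow_le_one_of_one_le_of_nonpos hN1' (by linarith)
  refine ⟨?_, ?_, ?_⟩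
  · -- lower bound
    have : (N:ℝ) ^ (-s - δ) = (N:ℝ) ^ (-δ) * (N:ℝ) ^ (-s) := by
      rw [← Real.rpow_add hNpos]; ring_nf
    rw [this]
    refine le_max_of_le_right ?_
    calc (N:ℝ) ^ (-δ) * (N:ℝ) ^ (-s) ≤ (1/2) * (N:ℝ) ^ (-s) :=
          mul_le_mul_of_nonneg_right hhalfN (Real.rpow_nonneg hNpos.le _)
      _ = (N:ℝ) ^ (-s) / 2 := by ring
  · -- 2 * max ≤ N^(-s+δ)
    have hmax : max (aN N) ((N:ℝ) ^ (-s) / 2) ≤ (1/2) * (N:ℝ) ^ (-s + δ) := by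
      apply max_le
      · calc aN N ≤ (N:ℝ) ^ (-a + δ'') := hsqN.2
          _ ≤ (N:ℝ) ^ (-s + δ/2) := by
              apply Real.rpow_le_rpow_of_exponent_le hN1'
              have h1 : δ'' ≤ δ/2 := min_le_left _ _
              linarith
          _ = (N:ℝ) ^ (-(δ/2)) * (N:ℝ) ^ (-s + δ) := by
              rw [← Real.rpow_add hNpos]; ring_nf
          _ ≤ (1/2) * (N:ℝ) ^ (-s + δ) :=
              mul_le_mul_of_nonneg_right hhalf2N (Real.rpow_nonneg hNpos.le _)
      · have : (N:ℝ) ^ (-s) ≤ (N:ℝ) ^ (-s + δ) :=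
          Real.rpow_le_rpow_of_exponent_le hN1' (by linarith)
        linarith
    linarith
  · -- 2 * max ≤ 1
    have hmax : max (aN N) ((N:ℝ) ^ (-s) / 2) ≤ 1/2 := by
      apply max_le
      · exact le_trans hsqN.2 hhalf3N
      · linarith
    linarith
lemma lower_bound (g : ℕ → ℝ → ℝ → ℝ) (S : ℝ → ℝ → ℝ) (a : ℝ) (aN : ℕ → ℝ)
    (hprof : HasScalingProfile2 g S)
    (hint : ∀ N, IntegrableOn (fun z : ℝ × ℝ => |g N z.1 z.2|)
      (Set.Icc (aN N) 1 ×ˢ Set.Icc (aN N) 1))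
    (haN_pos : ∀ N, 0 < aN N) (haN_le : ∀ N, aN N ≤ 1)
    (ha : 0 < a) (hscale : HasScale aN a)
    {s1 s2 : ℝ} (hs1 : s1 ∈ Set.Icc 0 a) (hs2 : s2 ∈ Set.Icc 0 a)
    {δ : ℝ} (hδ : 0 < δ) :
    ∀ᶠ N : ℕ in atTop, (N:ℝ) ^ (-(S s1 s2 + s1 + s2) - δ) ≤
      ∫ z in Set.Icc (aN N) 1 ×ˢ Set.Icc (aN N) 1, |g N z.1 z.2| := by
  classical
  set T := S s1 s2 with hT
  set C := |T| + δ + 1 with hC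
  set u1 : ℕ → ℝ := fun N => max (aN N) ((N:ℝ) ^ (-s1) / 2) with hu1
  set u2 : ℕ → ℝ := fun N => max (aN N) ((N:ℝ) ^ (-s2) / 2) with hu2
  have hu1pos : ∀ N, 0 < u1 N := fun N => lt_max_of_lt_left (haN_pos N)
  have hu2pos : ∀ N, 0 < u2 N := fun N => lt_max_of_lt_left (haN_pos N)
  set B : ℕ → Set (ℝ × ℝ) :=
    fun N => Set.Icc (u1 N) (2 * u1 N) ×ˢ Set.Icc (u2 N) (2 * u2 N) with hB
  have hBne : ∀ N, ((u1 N, u2 N)) ∈ B N := fun N =>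
    ⟨⟨le_refl _, by linarith [hu1pos N]⟩, ⟨le_refl _, by linarith [hu2pos N]⟩⟩
  -- witnesses close to the infimum over the box
  set m : ℕ → ℝ := fun N => sInf ((fun q : ℝ × ℝ => |g N q.1 q.2|) '' B N) with hm
  have hbdd : ∀ N, BddBelow ((fun q : ℝ × ℝ => |g N q.1 q.2|) '' B N) := by
    intro N
    refine ⟨0, ?_⟩
    rintro y ⟨q, _, rfl⟩
    exact abs_nonneg _
  have hex : ∀ N, ∃ q : ℝ × ℝ, q ∈ B N ∧ |g N q.1 q.2| < m N + ((N:ℝ)+1) ^ (-C) := by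
    intro N
    have hne : ((fun q : ℝ × ℝ => |g N q.1 q.2|) '' B N).Nonempty :=
      ⟨_, Set.mem_image_of_mem _ (hBne N)⟩
    have hpos : (0:ℝ) < ((N:ℝ)+1) ^ (-C) := Real.rpow_pos_of_pos (by positivity) _
    obtain ⟨y, ⟨q, hq, rfl⟩, hy⟩ := Real.lt_sInf_add_pos hne hpos
    exact ⟨q, hq, hy⟩
  choose q hqB hqlt using hex
  set w1 : ℕ → ℝ := fun N => min (q N).1 1 with hw1
  set w2 : ℕ → ℝ := fun N => min (q N).2 1 with hw2
  have hw1mem : ∀ N, w1 N ∈ Set.Ioc (0:ℝ) 1 := fun N =>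
    ⟨lt_min (lt_of_lt_of_le (hu1pos N) ((hqB N).1).1) one_pos, min_le_right _ _⟩
  have hw2mem : ∀ N, w2 N ∈ Set.Ioc (0:ℝ) 1 := fun N =>
    ⟨lt_min (lt_of_lt_of_le (hu2pos N) ((hqB N).2).1) one_pos, min_le_right _ _⟩
  -- w1, w2 have scales s1, s2
  have hscale1 : HasScale w1 s1 := by
    apply hasScale_of_squeeze'
    intro δ' hδ'
    filter_upwards [u_bounds a aN haN_pos ha hscale hs1 hδ'] with N hN
    have hNl : (N:ℝ) ^ (-s1 - δ') ≤ u1 N := hN.1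
    have hNu : 2 * u1 N ≤ (N:ℝ) ^ (-s1 + δ') := hN.2.1
    have hN1 : 2 * u1 N ≤ 1 := hN.2.2
    have hq1 := (hqB N).1
    have hle1 : w1 N ≤ 2 * u1 N := le_trans (min_le_left _ _) hq1.2
    have hge1 : u1 N ≤ w1 N := le_min hq1.1 (by linarith [hu1pos N])
    exact ⟨le_trans hNl hge1, le_trans hle1 hNu⟩
  have hscale2 : HasScale w2 s2 := by
    apply hasScale_of_squeeze'
    intro δ' hδ'
    filter_upwards [u_bounds a aN haN_pos ha hscale hs2 hδ'] with N hN
    have hNl : (N:ℝ) ^ (-s2 - δ') ≤ u2 N := hN.1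
    have hNu : 2 * u2 N ≤ (N:ℝ) ^ (-s2 + δ') := hN.2.1
    have hN1 : 2 * u2 N ≤ 1 := hN.2.2
    have hq2 := (hqB N).2
    have hle2 : w2 N ≤ 2 * u2 N := le_trans (min_le_left _ _) hq2.2
    have hge2 : u2 N ≤ w2 N := le_min hq2.1 (by linarith [hu2pos N])
    exact ⟨le_trans hNl hge2, le_trans hle2 hNu⟩
  have hG := hprof w1 w2 hw1mem hw2mem s1 s2 hs1.1 hs2.1 hscale1 hscale2
  have hGlow := squeeze_of_hasScale hG (show (0:ℝ) < δ/4 by linarith)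
  -- (N+1)^(-C) is eventually at most half of N^(-T-δ/4)
  have hCsmall : ∀ᶠ N : ℕ in atTop, ((N:ℝ)+1) ^ (-C) ≤ (1/2) * (N:ℝ) ^ (-T - δ/4) := by
    have h1 : ∀ᶠ N : ℕ in atTop, (N:ℝ) ^ (-(C - T - δ/4)) ≤ 1/2 := by
      refine (tendsto_rpow_neg_nat ?_).eventually_le_const (by norm_num)
      have : T ≤ |T| := le_abs_self T
      simp only [hC]
      linarith
    filter_upwards [h1, eventually_ge_atTop 1] with N hN hN1
    have hN1' : (1:ℝ) ≤ N := by exact_mod_cast hN1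
    have hNpos : (0:ℝ) < N := by linarith
    calc ((N:ℝ)+1) ^ (-C) ≤ (N:ℝ) ^ (-C) := by
          apply Real.rpow_le_rpow_of_nonpos hNpos (by linarith)
          have h0 : (0:ℝ) ≤ |T| := abs_nonneg T
          simp only [hC]; linarith
      _ = (N:ℝ) ^ (-(C - T - δ/4)) * (N:ℝ) ^ (-T - δ/4) := by
          rw [← Real.rpow_add hNpos]; ring_nf
      _ ≤ (1/2) * (N:ℝ) ^ (-T - δ/4) :=
          mul_le_mul_of_nonneg_right hN (Real.rpow_nonneg hNpos.le _)
  have hfinal8 : ∀ᶠ N : ℕ in atTop, (N:ℝ) ^ (-(3*δ/4)) ≤ 1/8 :=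
    (tendsto_rpow_neg_nat (by linarith)).eventually_le_const (by norm_num)
  filter_upwards [u_bounds a aN haN_pos ha hscale hs1 (show (0:ℝ) < δ/4 by linarith),
    u_bounds a aN haN_pos ha hscale hs2 (show (0:ℝ) < δ/4 by linarith),
    hGlow, hCsmall, hfinal8, eventually_ge_atTop 1] with N hub1 hub2 hGN hCN h8 hN1
  have hN1' : (1:ℝ) ≤ N := by exact_mod_cast hN1
  have hNpos : (0:ℝ) < N := by linarith
  -- on this N : the box is inside the square, and w = q
  have hq1 := (hqB N).1
  have hq2 := (hqB N).2
  have h2u1 : 2 * u1 N ≤ 1 := hub1.2.2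
  have h2u2 : 2 * u2 N ≤ 1 := hub2.2.2
  have hw1q : w1 N = (q N).1 := min_eq_left (le_trans hq1.2 h2u1)
  have hw2q : w2 N = (q N).2 := min_eq_left (le_trans hq2.2 h2u2)
  have hBsq : B N ⊆ Set.Icc (aN N) 1 ×ˢ Set.Icc (aN N) 1 := by
    rintro ⟨z1, z2⟩ ⟨hz1, hz2⟩
    refine ⟨⟨le_trans (le_max_left _ _) hz1.1, le_trans hz1.2 h2u1⟩,
      ⟨le_trans (le_max_left _ _) hz2.1, le_trans hz2.2 h2u2⟩⟩
  -- lower bound on the infimum m N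
  have hgw : (N:ℝ) ^ (-T - δ/4) ≤ |g N (w1 N) (w2 N)| := hGN.1
  have hmN : (1/2) * (N:ℝ) ^ (-T - δ/4) ≤ m N := by
    have h1 : |g N (q N).1 (q N).2| < m N + ((N:ℝ)+1) ^ (-C) := hqlt N
    rw [← hw1q, ← hw2q] at h1
    nlinarith [hgw, hCN]
  -- integral over box of |g| is at least m N * volume
  have hmeasB : MeasurableSet (B N) := (measurableSet_Icc).prod measurableSet_Icc
  have hintB : IntegrableOn (fun z : ℝ × ℝ => |g N z.1 z.2|) (B N) :=
    (hint N).mono_set hBsq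
  have hconstle : ∀ z ∈ B N, (1/2) * (N:ℝ) ^ (-T - δ/4) ≤ |g N z.1 z.2| := by
    intro z hz
    refine le_trans hmN (csInf_le (hbdd N) ?_)
    exact Set.mem_image_of_mem _ hz
  have hvolB : (volume (B N)).toReal = u1 N * u2 N := by
    rw [hB]
    simp only
    rw [Measure.volume_eq_prod, Measure.prod_prod, Real.volume_Icc, Real.volume_Icc]
    rw [← ENNReal.ofReal_mul (by linarith [hu1pos N])]
    rw [ENNReal.toReal_ofReal (by nlinarith [hu1pos N, hu2pos N])]
    ring
  have hintlow : (1/2) * (N:ℝ) ^ (-T - δ/4) * (u1 N * u2 N) ≤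
      ∫ z in B N, |g N z.1 z.2| := by
    have := setIntegral_mono_on ((integrableOn_const_iff).mpr (Or.inr ?_)) hintB hmeasB hconstle
    · rw [setIntegral_const, smul_eq_mul, measureReal_def, hvolB, mul_comm] at this
      linarith [this]
    · rw [hB]
      simp only
      rw [Measure.volume_eq_prod, Measure.prod_prod, Real.volume_Icc, Real.volume_Icc]
      exact ENNReal.mul_lt_top ENNReal.ofReal_lt_top ENNReal.ofReal_lt_top
  have hsub : ∫ z in B N, |g N z.1 z.2| ≤
      ∫ z in Set.Icc (aN N) 1 ×ˢ Set.Icc (aN N) 1, |g N z.1 z.2| := by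
    apply setIntegral_mono_set (hint N)
    · filter_upwards with z using abs_nonneg _
    · exact HasSubset.Subset.eventuallyLE hBsq
  -- put everything together
  have hu1low : (N:ℝ) ^ (-s1) / 2 ≤ u1 N := le_max_right _ _
  have hu2low : (N:ℝ) ^ (-s2) / 2 ≤ u2 N := le_max_right _ _
  have hrw : (N:ℝ) ^ (-(T + s1 + s2) - δ) =
      (N:ℝ) ^ (-(3*δ/4)) * ((N:ℝ) ^ (-T - δ/4) * ((N:ℝ) ^ (-s1) * (N:ℝ) ^ (-s2))) := by
    rw [← Real.rpow_add hNpos, ← Real.rpow_add hNpos, ← Real.rpow_add hNpos]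
    ring_nf
  have hp1 : (0:ℝ) < (N:ℝ) ^ (-T - δ/4) := Real.rpow_pos_of_pos hNpos _
  have hp2 : (0:ℝ) < (N:ℝ) ^ (-s1) := Real.rpow_pos_of_pos hNpos _
  have hp3 : (0:ℝ) < (N:ℝ) ^ (-s2) := Real.rpow_pos_of_pos hNpos _
  calc (N:ℝ) ^ (-(T + s1 + s2) - δ)
      = (N:ℝ) ^ (-(3*δ/4)) * ((N:ℝ) ^ (-T - δ/4) * ((N:ℝ) ^ (-s1) * (N:ℝ) ^ (-s2))) := hrw
    _ ≤ (1/8) * ((N:ℝ) ^ (-T - δ/4) * ((N:ℝ) ^ (-s1) * (N:ℝ) ^ (-s2))) := by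
        apply mul_le_mul_of_nonneg_right h8
        positivity
    _ = (1/2) * (N:ℝ) ^ (-T - δ/4) * (((N:ℝ) ^ (-s1)/2) * ((N:ℝ) ^ (-s2)/2)) := by ring
    _ ≤ (1/2) * (N:ℝ) ^ (-T - δ/4) * (u1 N * u2 N) := by
        apply mul_le_mul_of_nonneg_left _ (by positivity)
        apply mul_le_mul hu1low hu2low (by positivity) (le_trans (by positivity) hu1low)
    _ ≤ ∫ z in B N, |g N z.1 z.2| := hintlow
    _ ≤ _ := hsub
lemma sq_vol_le_one {α : ℝ} (hα : 0 ≤ α) (hα1 : α ≤ 1) :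
    (volume (Set.Icc α 1 ×ˢ Set.Icc α 1)).toReal ≤ 1 ∧
    volume (Set.Icc α 1 ×ˢ Set.Icc α 1) < ⊤ := by
  rw [Measure.volume_eq_prod, Measure.prod_prod, Real.volume_Icc]
  constructor
  · rw [← ENNReal.ofReal_mul (by linarith), ENNReal.toReal_ofReal (by nlinarith)]
    nlinarith
  · exact ENNReal.mul_lt_top ENNReal.ofReal_lt_top ENNReal.ofReal_lt_top

lemma witness_exists (g : ℕ → ℝ → ℝ → ℝ) (aN : ℕ → ℝ)
    (hint : ∀ N, IntegrableOn (fun z : ℝ × ℝ => |g N z.1 z.2|)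
      (Set.Icc (aN N) 1 ×ˢ Set.Icc (aN N) 1))
    (haN_pos : ∀ N, 0 < aN N) (haN_le : ∀ N, aN N ≤ 1) (N : ℕ)
    (hI : 0 < ∫ z in Set.Icc (aN N) 1 ×ˢ Set.Icc (aN N) 1, |g N z.1 z.2|) :
    ∃ q ∈ Set.Icc (aN N) 1 ×ˢ Set.Icc (aN N) 1,
      (∫ z in Set.Icc (aN N) 1 ×ˢ Set.Icc (aN N) 1, |g N z.1 z.2|) ≤ 2 * |g N q.1 q.2| := by
  set I := ∫ z in Set.Icc (aN N) 1 ×ˢ Set.Icc (aN N) 1, |g N z.1 z.2| with hIdef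
  by_contra hcon
  push_neg at hcon
  have hvol := sq_vol_le_one (le_of_lt (haN_pos N)) (haN_le N)
  have hb : ‖∫ z in Set.Icc (aN N) 1 ×ˢ Set.Icc (aN N) 1, |g N z.1 z.2|‖ ≤
      (I/2) * (volume (Set.Icc (aN N) 1 ×ˢ Set.Icc (aN N) 1)).toReal := by
    refine norm_setIntegral_le_of_norm_le_const hvol.2 ?_
    intro z hz
    rw [Real.norm_eq_abs, abs_abs]
    have := hcon z hz
    linarith
  rw [Real.norm_eq_abs, ← hIdef, abs_of_pos hI] at hb
  nlinarith [hvol.1, hI]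

lemma bddBelow_profile_set (g : ℕ → ℝ → ℝ → ℝ) (S : ℝ → ℝ → ℝ) (a : ℝ) (aN : ℕ → ℝ)
    (hprof : HasScalingProfile2 g S)
    (hint : ∀ N, IntegrableOn (fun z : ℝ × ℝ => |g N z.1 z.2|)
      (Set.Icc (aN N) 1 ×ˢ Set.Icc (aN N) 1))
    (haN_pos : ∀ N, 0 < aN N) (haN_le : ∀ N, aN N ≤ 1)
    (ha : 0 < a) (hscale : HasScale aN a) :
    BddBelow ((fun p : ℝ × ℝ => S p.1 p.2 + p.1 + p.2) ''
      (Set.Icc 0 a ×ˢ Set.Icc 0 a)) := by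
  classical
  by_contra hnb
  set I : ℕ → ℝ := fun N => ∫ z in Set.Icc (aN N) 1 ×ˢ Set.Icc (aN N) 1, |g N z.1 z.2|
    with hIdef
  have haa : (a, a) ∈ Set.Icc (0:ℝ) a ×ˢ Set.Icc (0:ℝ) a :=
    ⟨⟨le_of_lt ha, le_refl a⟩, ⟨le_of_lt ha, le_refl a⟩⟩
  have hIpos : ∀ᶠ N : ℕ in atTop, 0 < I N := by
    filter_upwards [lower_bound g S a aN hprof hint haN_pos haN_le ha hscale
      ⟨le_of_lt ha, le_refl a⟩ ⟨le_of_lt ha, le_refl a⟩ zero_lt_one,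
      eventually_ge_atTop 1] with N hN hN1
    have hNpos : (0:ℝ) < N := by exact_mod_cast hN1
    exact lt_of_lt_of_le (Real.rpow_pos_of_pos hNpos _) hN
  -- superpolynomial growth along a subsequence
  have hfreq : ∀ n : ℕ, ∃ᶠ N : ℕ in atTop, (N:ℝ) ^ (n:ℝ) < I N := by
    intro n
    rw [not_bddBelow_iff] at hnb
    obtain ⟨e, ⟨p, hpK, rfl⟩, hlt⟩ := hnb (-(n:ℝ) - 1)
    have hlt' : S p.1 p.2 + p.1 + p.2 < -(n:ℝ) - 1 := hlt
    apply Filter.Eventually.frequently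
    filter_upwards [lower_bound g S a aN hprof hint haN_pos haN_le ha hscale
      hpK.1 hpK.2 zero_lt_one, eventually_ge_atTop 2] with N hN hN2
    have hN1 : (1:ℝ) < N := by exact_mod_cast hN2
    refine lt_of_lt_of_le ?_ hN
    apply Real.rpow_lt_rpow_of_exponent_lt hN1
    linarith [hlt']
  obtain ⟨θ, hθ, hθI⟩ := Filter.extraction_forall_of_frequently hfreq
  -- witnesses
  set W : ℕ → ℝ × ℝ := fun N =>
    if h : ∃ q ∈ Set.Icc (aN N) 1 ×ˢ Set.Icc (aN N) 1, I N ≤ 2 * |g N q.1 q.2|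
    then h.choose else (1, 1) with hWdef
  have hWmem : ∀ N, W N ∈ Set.Icc (aN N) 1 ×ˢ Set.Icc (aN N) 1 := by
    intro N
    by_cases h : ∃ q ∈ Set.Icc (aN N) 1 ×ˢ Set.Icc (aN N) 1, I N ≤ 2 * |g N q.1 q.2|
    · simp only [hWdef, dif_pos h]; exact h.choose_spec.1
    · simp only [hWdef, dif_neg h]
      exact ⟨⟨haN_le N, le_refl 1⟩, ⟨haN_le N, le_refl 1⟩⟩
  have hWprop : ∀ N, 0 < I N → I N ≤ 2 * |g N (W N).1 (W N).2| := by
    intro N hI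
    have h : ∃ q ∈ Set.Icc (aN N) 1 ×ˢ Set.Icc (aN N) 1, I N ≤ 2 * |g N q.1 q.2| :=
      witness_exists g aN hint haN_pos haN_le N hI
    simp only [hWdef, dif_pos h]
    exact h.choose_spec.2
  -- extract scaled subsequence
  obtain ⟨s1, s2, hs1, hs2, ψ, hψ, l1, l2, hl1mem, hl2mem, hl1s, hl2s, hleq⟩ :=
    master_extract a aN haN_pos haN_le ha hscale θ hθ (fun k => W (θ k))
      (fun k => hWmem (θ k))
  have hG := hprof l1 l2 hl1mem hl2mem s1 s2 hs1.1 hs2.1 hl1s hl2s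
  set T := S s1 s2 with hT
  have hGupp := squeeze_of_hasScale hG zero_lt_one
  -- choose a large k and derive contradiction
  set n0 : ℕ := ⌈|T| + 2⌉₊ with hn0
  have hθψ : StrictMono (fun k => θ (ψ k)) := hθ.comp hψ
  have hten : Tendsto (fun k => θ (ψ k)) atTop atTop := hθψ.tendsto_atTop
  have hevk : ∀ᶠ k : ℕ in atTop,
      0 < I (θ (ψ k)) ∧
      ((θ (ψ k) : ℕ) : ℝ) ^ (-T - 1) ≤ |g (θ (ψ k)) (l1 (θ (ψ k))) (l2 (θ (ψ k)))| ∧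
      |g (θ (ψ k)) (l1 (θ (ψ k))) (l2 (θ (ψ k)))| ≤ ((θ (ψ k) : ℕ) : ℝ) ^ (-T + 1) ∧
      2 ≤ θ (ψ k) := by
    have h1 := hten.eventually hIpos
    have h2 := hten.eventually hGupp
    have h3 := hten.eventually (eventually_ge_atTop 2)
    filter_upwards [h1, h2, h3] with k h1 h2 h3
    exact ⟨h1, h2.1, h2.2, h3⟩
  obtain ⟨k, hk, hkn0⟩ := ((hevk.and (eventually_ge_atTop n0)).exists)
  set N := θ (ψ k) with hNdef
  have hN2 : 2 ≤ N := hk.2.2.2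
  have hN2' : (2:ℝ) ≤ (N:ℝ) := by exact_mod_cast hN2
  have hN1' : (1:ℝ) ≤ (N:ℝ) := by linarith
  have hNpos : (0:ℝ) < (N:ℝ) := by linarith
  have hIk : ((N:ℕ):ℝ) ^ ((ψ k : ℕ):ℝ) < I N := hθI (ψ k)
  have hWk := hWprop N hk.1
  have h2G : I N ≤ 2 * |g N (l1 N) (l2 N)| := by
    rw [(hleq k).1, (hleq k).2]; exact hWk
  have hup : |g N (l1 N) (l2 N)| ≤ ((N:ℕ):ℝ) ^ (-T + 1) := hk.2.2.1
  have hψk : (n0:ℝ) ≤ ((ψ k:ℕ):ℝ) := by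
    exact_mod_cast le_trans hkn0 hψ.le_apply
  have hmono : ((N:ℕ):ℝ) ^ ((n0:ℕ):ℝ) ≤ ((N:ℕ):ℝ) ^ ((ψ k:ℕ):ℝ) :=
    Real.rpow_le_rpow_of_exponent_le hN1' hψk
  have hT2 : ((N:ℕ):ℝ) ^ (-T + 2) ≤ ((N:ℕ):ℝ) ^ ((n0:ℕ):ℝ) := by
    apply Real.rpow_le_rpow_of_exponent_le hN1'
    have h1 : |T| + 2 ≤ (n0:ℝ) := Nat.le_ceil _
    have h2 : -T ≤ |T| := neg_le_abs T
    linarith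
  have hsplit : ((N:ℕ):ℝ) ^ (-T + 2) = (N:ℝ) * ((N:ℕ):ℝ) ^ (-T + 1) := by
    rw [show (-T+2 : ℝ) = 1 + (-T+1) by ring, Real.rpow_add hNpos, Real.rpow_one]
  have h2le : 2 * ((N:ℕ):ℝ) ^ (-T + 1) ≤ ((N:ℕ):ℝ) ^ (-T + 2) := by
    rw [hsplit]
    exact mul_le_mul_of_nonneg_right hN2' (Real.rpow_nonneg hNpos.le _)
  linarith
lemma key_upper (g : ℕ → ℝ → ℝ → ℝ) (S : ℝ → ℝ → ℝ) (a : ℝ) (aN : ℕ → ℝ)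
    (hprof : HasScalingProfile2 g S)
    (hint : ∀ N, IntegrableOn (fun z : ℝ × ℝ => |g N z.1 z.2|)
      (Set.Icc (aN N) 1 ×ˢ Set.Icc (aN N) 1))
    (haN_pos : ∀ N, 0 < aN N) (haN_le : ∀ N, aN N ≤ 1)
    (ha : 0 < a) (hscale : HasScale aN a) {δ : ℝ} (hδ : 0 < δ) :
    ∀ᶠ N : ℕ in atTop, ∀ z ∈ Set.Icc (aN N) 1 ×ˢ Set.Icc (aN N) 1,
      |g N z.1 z.2| * (z.1 * z.2) ≤
        (N:ℝ) ^ (-(sInf ((fun p : ℝ × ℝ => S p.1 p.2 + p.1 + p.2) ''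
          (Set.Icc 0 a ×ˢ Set.Icc 0 a))) + δ) := by
  classical
  set M := sInf ((fun p : ℝ × ℝ => S p.1 p.2 + p.1 + p.2) ''
    (Set.Icc 0 a ×ˢ Set.Icc 0 a)) with hM
  by_contra hcon
  rw [Filter.not_eventually] at hcon
  have hcon' : ∃ᶠ N : ℕ in atTop, ∃ z ∈ Set.Icc (aN N) 1 ×ˢ Set.Icc (aN N) 1,
      (N:ℝ) ^ (-M + δ) < |g N z.1 z.2| * (z.1 * z.2) := by
    apply hcon.mono
    intro N hN
    push_neg at hN
    exact hN
  obtain ⟨θ, hθ, hθbad⟩ := Filter.extraction_of_frequently_atTop hcon'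
  choose W hWmem hWbad using hθbad
  obtain ⟨s1, s2, hs1, hs2, ψ, hψ, l1, l2, hl1mem, hl2mem, hl1s, hl2s, hleq⟩ :=
    master_extract a aN haN_pos haN_le ha hscale θ hθ W hWmem
  have hG := hprof l1 l2 hl1mem hl2mem s1 s2 hs1.1 hs2.1 hl1s hl2s
  set T := S s1 s2 with hT
  have hMle : M ≤ T + s1 + s2 := by
    apply csInf_le (bddBelow_profile_set g S a aN hprof hint haN_pos haN_le ha hscale)
    exact ⟨(s1, s2), ⟨hs1, hs2⟩, rfl⟩
  have hGupp := squeeze_of_hasScale hG (show (0:ℝ) < δ/4 by linarith)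
  have hl1upp := squeeze_of_hasScale' hl1s (fun N => (hl1mem N).1)
    (show (0:ℝ) < δ/4 by linarith)
  have hl2upp := squeeze_of_hasScale' hl2s (fun N => (hl2mem N).1)
    (show (0:ℝ) < δ/4 by linarith)
  have hten : Tendsto (fun k => θ (ψ k)) atTop atTop := (hθ.comp hψ).tendsto_atTop
  have hevk := (hten.eventually hGupp).and ((hten.eventually hl1upp).and
    ((hten.eventually hl2upp).and (hten.eventually (eventually_ge_atTop 2))))
  obtain ⟨k, hGk, hl1k, hl2k, hN2⟩ := hevk.exists
  set N := θ (ψ k) with hNdef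
  have hN2' : (2:ℝ) ≤ (N:ℝ) := by exact_mod_cast hN2
  have hN1' : (1:ℝ) < (N:ℝ) := by linarith
  have hNpos : (0:ℝ) < (N:ℝ) := by linarith
  have hbad := hWbad (ψ k)
  rw [← (hleq k).1, ← (hleq k).2] at hbad
  have hGn : |g N (l1 N) (l2 N)| ≤ (N:ℝ) ^ (-T + δ/4) := hGk.2
  have hl1n : l1 N ≤ (N:ℝ) ^ (-s1 + δ/4) := hl1k.2
  have hl2n : l2 N ≤ (N:ℝ) ^ (-s2 + δ/4) := hl2k.2
  have hl1p : 0 ≤ l1 N := (hl1mem N).1.le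
  have hl2p : 0 ≤ l2 N := (hl2mem N).1.le
  have hchain : |g N (l1 N) (l2 N)| * (l1 N * l2 N) ≤
      (N:ℝ) ^ (-T + δ/4) * ((N:ℝ) ^ (-s1 + δ/4) * (N:ℝ) ^ (-s2 + δ/4)) := by
    apply mul_le_mul hGn _ (by positivity) (Real.rpow_nonneg hNpos.le _)
    apply mul_le_mul hl1n hl2n hl2p (Real.rpow_nonneg hNpos.le _)
  have hcollapse : (N:ℝ) ^ (-T + δ/4) * ((N:ℝ) ^ (-s1 + δ/4) * (N:ℝ) ^ (-s2 + δ/4)) =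
      (N:ℝ) ^ (-(T + s1 + s2) + 3*δ/4) := by
    rw [← Real.rpow_add hNpos, ← Real.rpow_add hNpos]; ring_nf
  have hlt : (N:ℝ) ^ (-(T + s1 + s2) + 3*δ/4) < (N:ℝ) ^ (-M + δ) := by
    apply Real.rpow_lt_rpow_of_exponent_lt hN1'
    linarith
  rw [hcollapse] at hchain
  linarith
lemma log_sq_small (a : ℝ) {δ : ℝ} (hδ : 0 < δ) :
    ∀ᶠ N : ℕ in atTop, (a+1)^2 * (Real.log N)^2 ≤ (N:ℝ) ^ δ := by
  have h1 : (fun x : ℝ => Real.log x * Real.log x) =o[atTop]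
      fun x : ℝ => x ^ (δ/2) * x ^ (δ/2) :=
    (isLittleO_log_rpow_atTop (by linarith)).mul
      (isLittleO_log_rpow_atTop (by linarith))
  have h2 : (fun x : ℝ => Real.log x * Real.log x) =o[atTop] fun x : ℝ => x ^ δ := by
    refine h1.congr' (EventuallyEq.refl _ _) ?_
    filter_upwards [eventually_gt_atTop (0:ℝ)] with x hx
    rw [← Real.rpow_add hx]; ring_nf
  have h3 := h2.comp_tendsto tendsto_natCast_atTop_atTop
  rcases le_or_gt ((a+1)^2) 0 with hc | hc
  · filter_upwards [eventually_ge_atTop 1] with N hN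
    have hN1 : (1:ℝ) ≤ N := by exact_mod_cast hN
    have := Real.rpow_nonneg (by linarith : (0:ℝ) ≤ (N:ℝ)) δ
    nlinarith [sq_nonneg (Real.log N)]
  · have hb := (isLittleO_iff.mp h3) (show (0:ℝ) < ((a+1)^2)⁻¹ by positivity)
    filter_upwards [hb, eventually_ge_atTop 1] with N hN hN1
    have hN1' : (1:ℝ) ≤ N := by exact_mod_cast hN1
    have hlog : (0:ℝ) ≤ Real.log N := Real.log_nonneg hN1'
    have hrp : (0:ℝ) ≤ (N:ℝ) ^ δ := Real.rpow_nonneg (by linarith) _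
    simp only [Function.comp, Real.norm_eq_abs] at hN
    rw [abs_of_nonneg (by nlinarith), abs_of_nonneg hrp] at hN
    have h4 := mul_le_mul_of_nonneg_left hN hc.le
    have hinv : (a+1)^2 * ((a+1)^2)⁻¹ = 1 := mul_inv_cancel₀ (ne_of_gt hc)
    have h5 : (a+1)^2 * (((a+1)^2)⁻¹ * (N:ℝ)^δ) = (N:ℝ)^δ := by
      rw [← mul_assoc, hinv, one_mul]
    nlinarith [h4, h5]
lemma upper_bound (g : ℕ → ℝ → ℝ → ℝ) (S : ℝ → ℝ → ℝ) (a : ℝ) (aN : ℕ → ℝ)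
    (hprof : HasScalingProfile2 g S)
    (hint : ∀ N, IntegrableOn (fun z : ℝ × ℝ => |g N z.1 z.2|)
      (Set.Icc (aN N) 1 ×ˢ Set.Icc (aN N) 1))
    (haN_pos : ∀ N, 0 < aN N) (haN_le : ∀ N, aN N ≤ 1)
    (ha : 0 < a) (hscale : HasScale aN a) {δ : ℝ} (hδ : 0 < δ) :
    ∀ᶠ N : ℕ in atTop, (∫ z in Set.Icc (aN N) 1 ×ˢ Set.Icc (aN N) 1, |g N z.1 z.2|) ≤
      (N:ℝ) ^ (-(sInf ((fun p : ℝ × ℝ => S p.1 p.2 + p.1 + p.2) ''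
        (Set.Icc 0 a ×ˢ Set.Icc 0 a))) + δ) := by
  classical
  set M := sInf ((fun p : ℝ × ℝ => S p.1 p.2 + p.1 + p.2) ''
    (Set.Icc 0 a ×ˢ Set.Icc 0 a)) with hM
  have hkey := key_upper g S a aN hprof hint haN_pos haN_le ha hscale
    (show (0:ℝ) < δ/2 by linarith)
  have hsq := squeeze_of_hasScale' hscale haN_pos zero_lt_one
  have hlog2 := log_sq_small a (show (0:ℝ) < δ/2 by linarith)
  filter_upwards [hkey, hsq, hlog2, eventually_ge_atTop 2] with N hkeyN hsqN hlogN hN2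
  have hN2' : (2:ℝ) ≤ (N:ℝ) := by exact_mod_cast hN2
  have hN1' : (1:ℝ) ≤ (N:ℝ) := by linarith
  have hNpos : (0:ℝ) < (N:ℝ) := by linarith
  set α := aN N with hα
  have hαpos : 0 < α := haN_pos N
  have hα1 : α ≤ 1 := haN_le N
  set c := (N:ℝ) ^ (-M + δ/2) with hc
  have hcpos : 0 < c := Real.rpow_pos_of_pos hNpos _
  set sq : Set (ℝ × ℝ) := Set.Icc α 1 ×ˢ Set.Icc α 1 with hsqdef
  -- integrability of the comparison function
  have hcont : ContinuousOn (fun z : ℝ × ℝ => z.1⁻¹ * z.2⁻¹) sq := by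
    apply ContinuousOn.mul
    · apply ContinuousOn.inv₀ continuous_fst.continuousOn
      rintro ⟨z1, z2⟩ hz
      exact ne_of_gt (lt_of_lt_of_le hαpos hz.1.1)
    · apply ContinuousOn.inv₀ continuous_snd.continuousOn
      rintro ⟨z1, z2⟩ hz
      exact ne_of_gt (lt_of_lt_of_le hαpos hz.2.1)
  have hcomp : IsCompact sq := isCompact_Icc.prod isCompact_Icc
  have hintinv : IntegrableOn (fun z : ℝ × ℝ => z.1⁻¹ * z.2⁻¹) sq :=
    hcont.integrableOn_compact hcomp
  have hmeassq : MeasurableSet sq := measurableSet_Icc.prod measurableSet_Icc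
  -- pointwise bound
  have hpt : ∀ z ∈ sq, |g N z.1 z.2| ≤ c * (z.1⁻¹ * z.2⁻¹) := by
    intro z hz
    have hz1 : 0 < z.1 := lt_of_lt_of_le hαpos hz.1.1
    have hz2 : 0 < z.2 := lt_of_lt_of_le hαpos hz.2.1
    have hkz := hkeyN z hz
    have heq : c * (z.1⁻¹ * z.2⁻¹) = c / (z.1 * z.2) := by
      field_simp
    rw [heq, le_div_iff₀ (by positivity)]
    exact hkz
  have step1 : (∫ z in sq, |g N z.1 z.2|) ≤ ∫ z in sq, c * (z.1⁻¹ * z.2⁻¹) :=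
    setIntegral_mono_on (hint N) (hintinv.const_mul c) hmeassq hpt
  have step2 : (∫ z in sq, c * (z.1⁻¹ * z.2⁻¹)) = c * ∫ z in sq, z.1⁻¹ * z.2⁻¹ :=
    integral_const_mul c _
  -- compute the inverse integral
  have hL : (∫ x in Set.Icc α 1, x⁻¹) = Real.log (1/α) := by
    rw [MeasureTheory.integral_Icc_eq_integral_Ioc,
      ← intervalIntegral.integral_of_le hα1, integral_inv_of_pos hαpos one_pos]
  have hintprod : IntegrableOn (fun z : ℝ × ℝ => z.1⁻¹ * z.2⁻¹) (Set.Icc α 1 ×ˢ Set.Icc α 1)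
      ((volume : Measure ℝ).prod volume) := by
    rw [← Measure.volume_eq_prod]
    exact hintinv
  have step3 : (∫ z in sq, z.1⁻¹ * z.2⁻¹) = Real.log (1/α) * Real.log (1/α) := by
    calc (∫ z in sq, z.1⁻¹ * z.2⁻¹)
        = ∫ z in Set.Icc α 1 ×ˢ Set.Icc α 1, z.1⁻¹ * z.2⁻¹
            ∂((volume : Measure ℝ).prod volume) := by rw [← Measure.volume_eq_prod]
      _ = ∫ x in Set.Icc α 1, ∫ y in Set.Icc α 1, x⁻¹ * y⁻¹ :=
          setIntegral_prod _ hintprod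
      _ = ∫ x in Set.Icc α 1, x⁻¹ * ∫ y in Set.Icc α 1, y⁻¹ := by
          simp_rw [integral_const_mul]
      _ = (∫ x in Set.Icc α 1, x⁻¹) * ∫ y in Set.Icc α 1, y⁻¹ :=
          integral_mul_const _ _
      _ = Real.log (1/α) * Real.log (1/α) := by rw [hL]
  -- bound the logarithm
  have hLpos : 0 ≤ Real.log (1/α) := by
    apply Real.log_nonneg
    rw [le_div_iff₀ hαpos]; linarith
  have hLle : Real.log (1/α) ≤ (a+1) * Real.log N := by
    rw [one_div, Real.log_inv]
    have h1 : (N:ℝ) ^ (-a - 1) ≤ α := hsqN.1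
    have h2 := Real.log_le_log (Real.rpow_pos_of_pos hNpos _) h1
    rw [Real.log_rpow hNpos] at h2
    nlinarith [h2]
  have hL2 : Real.log (1/α) * Real.log (1/α) ≤ (a+1)^2 * (Real.log N)^2 := by
    have := mul_le_mul hLle hLle hLpos (by positivity)
    nlinarith [this]
  calc (∫ z in sq, |g N z.1 z.2|) ≤ ∫ z in sq, c * (z.1⁻¹ * z.2⁻¹) := step1
    _ = c * ∫ z in sq, z.1⁻¹ * z.2⁻¹ := step2
    _ = c * (Real.log (1/α) * Real.log (1/α)) := by rw [step3]
    _ ≤ c * ((a+1)^2 * (Real.log N)^2) := mul_le_mul_of_nonneg_left hL2 hcpos.le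
    _ ≤ c * (N:ℝ) ^ (δ/2) := mul_le_mul_of_nonneg_left hlogN hcpos.le
    _ = (N:ℝ) ^ (-M + δ) := by
        rw [hc, ← Real.rpow_add hNpos]; ring_nf

/-- scale of the double integrals `∫_{a_N}^1 ∫_{a_N}^1 |g_N(λ₁,λ₂)| dλ₁ dλ₂`
for a sequence of two-variable functions with scaling profile `S` and a lower limit
sequence `a_N` of scale `a > 0`. -/
theorem scale_of_double_integral (g : ℕ → ℝ → ℝ → ℝ) (S : ℝ → ℝ → ℝ) (a : ℝ) (aN : ℕ → ℝ)
    (hmeas : ∀ N, Measurable (Function.uncurry (g N)))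
    (hprof : HasScalingProfile2 g S)
    (hint : ∀ N, IntegrableOn (Function.uncurry (g N))
      (Set.Icc (aN N) 1 ×ˢ Set.Icc (aN N) 1))
    (haN_pos : ∀ N, 0 < aN N) (haN_le : ∀ N, aN N ≤ 1)
    (ha : 0 < a) (hscale : HasScale aN a) :
    HasScale (fun N => ∫ lam1 in Set.Icc (aN N) 1, ∫ lam2 in Set.Icc (aN N) 1,
        |g N lam1 lam2|)
      (sInf ((fun p : ℝ × ℝ => S p.1 p.2 + p.1 + p.2) '' (Set.Icc 0 a ×ˢ Set.Icc 0 a))) := by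
  classical
  set M := sInf ((fun p : ℝ × ℝ => S p.1 p.2 + p.1 + p.2) ''
    (Set.Icc 0 a ×ˢ Set.Icc 0 a)) with hM
  have hintabs : ∀ N, IntegrableOn (fun z : ℝ × ℝ => |g N z.1 z.2|)
      (Set.Icc (aN N) 1 ×ˢ Set.Icc (aN N) 1) := fun N => (hint N).abs
  have hIeq : (fun N => ∫ lam1 in Set.Icc (aN N) 1, ∫ lam2 in Set.Icc (aN N) 1,
      |g N lam1 lam2|) =
      fun N => ∫ z in Set.Icc (aN N) 1 ×ˢ Set.Icc (aN N) 1, |g N z.1 z.2| := by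
    funext N
    have hprodint : IntegrableOn (fun z : ℝ × ℝ => |g N z.1 z.2|)
        (Set.Icc (aN N) 1 ×ˢ Set.Icc (aN N) 1) ((volume : Measure ℝ).prod volume) := by
      rw [← Measure.volume_eq_prod]
      exact hintabs N
    have h := (setIntegral_prod (fun z : ℝ × ℝ => |g N z.1 z.2|) hprodint).symm
    rw [Measure.volume_eq_prod (α := ℝ) (β := ℝ)]
    exact h
  rw [hIeq]
  apply hasScale_of_squeeze'
  intro δ hδ
  -- choose a near-optimal point for the lower bound
  have hne : ((fun p : ℝ × ℝ => S p.1 p.2 + p.1 + p.2) ''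
      (Set.Icc 0 a ×ˢ Set.Icc 0 a)).Nonempty :=
    ⟨_, ⟨(a, a), ⟨⟨ha.le, le_refl a⟩, ⟨ha.le, le_refl a⟩⟩, rfl⟩⟩
  obtain ⟨e, ⟨p, hpK, rfl⟩, hlt⟩ := Real.lt_sInf_add_pos hne
    (show (0:ℝ) < δ/2 by linarith)
  have hlt' : S p.1 p.2 + p.1 + p.2 < M + δ/2 := hlt
  have hlow := lower_bound g S a aN hprof hintabs haN_pos haN_le ha hscale
    hpK.1 hpK.2 (show (0:ℝ) < δ/2 by linarith)
  have hupp := upper_bound g S a aN hprof hintabs haN_pos haN_le ha hscale hδ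
  filter_upwards [hlow, hupp, eventually_ge_atTop 1] with N hlowN huppN hN1
  have hN1' : (1:ℝ) ≤ (N:ℝ) := by exact_mod_cast hN1
  constructor
  · refine le_trans ?_ hlowN
    apply Real.rpow_le_rpow_of_exponent_le hN1'
    linarith
  · exact huppN
end

section
/- Fix ν > 1 and κ > 0, let η_N > 0 have scale s_η ≥ 0, and let h_N(λ) = λ/(λ+η_N), so that S^{(h)}(s) = max(s − s_η, 0) and S^{(1−h)}(s) = max(s_η − s, 0). Then: condition (1) [S^{(h)}(s) ≥ (1/2)(s/ν − 1/(κ+1)) for all s ∈ [ν/(κ+1), ν]] holds if and only if s_η ≤ ν/(κ+1); condition (2) [S^{(1−h)}(s) ≥ (1/2)(κ/(κ+1) − (κ/ν)s) for all s ∈ [0, ν/(κ+1)]] holds if and only if s_η ≥ ν/(κ+1) when κ ≤ 2ν, and if and only if s_η ≥ κ/(2(κ+1)) when κ > 2ν. Consequently, when κ ≤ 2ν conditions (1) and (2) hold simultaneously if and only if s_η = ν/(κ+1), while when κ > 2ν they cannot hold simultaneously for any s_η, so KRR cannot attain the optimal NMNO loss scaling κ/(κ+1) in the saturated case κ > 2ν.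 -/
private lemma krr_cond1_iff (ν κ sη : ℝ) (hν : 1 < ν) (hκ : 0 < κ) (hsη : 0 ≤ sη) :
    (∀ s ∈ Set.Icc (ν / (κ + 1)) ν,
        1 / 2 * (s / ν - 1 / (κ + 1)) ≤ max (s - sη) 0) ↔ sη ≤ ν / (κ + 1) := by
  have hν0 : (0:ℝ) < ν := by linarith
  have hκ1 : (0:ℝ) < κ + 1 := by linarith
  have haν : ν / (κ + 1) ≤ ν := by
    rw [div_le_iff₀ hκ1]; nlinarith
  constructor
  · intro h
    by_contra hc
    push_neg at hc
    set s := min sη ν with hs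
    have hsmem : s ∈ Set.Icc (ν/(κ+1)) ν :=
      ⟨le_min hc.le haν, min_le_right _ _⟩
    have h2 := h s hsmem
    have hmax : max (s - sη) 0 = 0 := by
      apply max_eq_right
      have : s ≤ sη := min_le_left _ _
      linarith
    rw [hmax] at h2
    have hsgt : ν/(κ+1) < s := lt_min hc (div_lt_self hν0 (by linarith))
    have hfrac : 1/(κ+1) < s/ν := by
      rw [div_lt_div_iff₀ hκ1 hν0]
      have := (div_lt_iff₀ hκ1).mp hsgt
      linarith
    linarith
  · intro hle s hs
    refine le_trans ?_ (le_max_left _ _)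
    have hs1 : ν ≤ s * (κ+1) := (div_le_iff₀ hκ1).mp hs.1
    have hsη' : sη * (κ+1) ≤ ν := (le_div_iff₀ hκ1).mp hle
    rw [show (1:ℝ)/2*(s/ν - 1/(κ+1)) = (s*(κ+1) - ν)/(2*(ν*(κ+1))) by
      field_simp; try ring]
    rw [div_le_iff₀ (by positivity)]
    nlinarith [mul_nonneg (by linarith : (0:ℝ) ≤ s*(κ+1) - ν) (by linarith : (0:ℝ) ≤ 2*ν - 1),
      mul_nonneg (by linarith : (0:ℝ) ≤ 2*ν) (by linarith : (0:ℝ) ≤ ν - sη*(κ+1))]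

private lemma krr_cond2_low (ν κ sη : ℝ) (hν : 1 < ν) (hκ : 0 < κ) (hsη : 0 ≤ sη)
    (h2ν : κ ≤ 2 * ν) :
    (∀ s ∈ Set.Icc (0 : ℝ) (ν / (κ + 1)),
        1 / 2 * (κ / (κ + 1) - κ / ν * s) ≤ max (sη - s) 0) ↔ ν / (κ + 1) ≤ sη := by
  have hν0 : (0:ℝ) < ν := by linarith
  have hκ1 : (0:ℝ) < κ + 1 := by linarith
  have ha : (0:ℝ) < ν / (κ + 1) := by positivity
  constructor
  · intro h
    by_contra hc
    push_neg at hc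
    set s := (ν/(κ+1) + sη)/2 with hsdef
    have hsmem : s ∈ Set.Icc (0:ℝ) (ν/(κ+1)) := by
      constructor
      · positivity
      · rw [hsdef]; linarith
    have h2 := h s hsmem
    have hmax : max (sη - s) 0 = 0 := by
      apply max_eq_right
      rw [hsdef]; linarith
    rw [hmax] at h2
    have hslt : s * (κ+1) < ν := by
      have : s < ν/(κ+1) := by rw [hsdef]; linarith
      exact (lt_div_iff₀ hκ1).mp this
    have hpos : 0 < 1/2*(κ/(κ+1) - κ/ν*s) := by
      rw [show (1:ℝ)/2*(κ/(κ+1) - κ/ν*s) = κ*(ν - s*(κ+1))/(2*(ν*(κ+1))) by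
        field_simp; try ring]
      apply div_pos
      · apply mul_pos hκ; linarith
      · positivity
    linarith
  · intro hle s hs
    refine le_trans ?_ (le_max_left _ _)
    have hs0 : (0:ℝ) ≤ s := hs.1
    have hs1 : s * (κ+1) ≤ ν := (le_div_iff₀ hκ1).mp hs.2
    have hsη' : ν ≤ sη * (κ+1) := (div_le_iff₀ hκ1).mp hle
    rw [show (1:ℝ)/2*(κ/(κ+1) - κ/ν*s) = κ*(ν - s*(κ+1))/(2*(ν*(κ+1))) by
      field_simp; try ring]
    rw [div_le_iff₀ (by positivity)]
    nlinarith [mul_nonneg (by linarith : (0:ℝ) ≤ 2*ν - κ) (by linarith : (0:ℝ) ≤ ν - s*(κ+1)),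
      mul_nonneg (by linarith : (0:ℝ) ≤ 2*ν) (by linarith : (0:ℝ) ≤ sη*(κ+1) - ν)]

private lemma krr_cond2_high (ν κ sη : ℝ) (hν : 1 < ν) (hκ : 0 < κ) (hsη : 0 ≤ sη)
    (h2ν : 2 * ν < κ) :
    (∀ s ∈ Set.Icc (0 : ℝ) (ν / (κ + 1)),
        1 / 2 * (κ / (κ + 1) - κ / ν * s) ≤ max (sη - s) 0) ↔ κ / (2 * (κ + 1)) ≤ sη := by
  have hν0 : (0:ℝ) < ν := by linarith
  have hκ1 : (0:ℝ) < κ + 1 := by linarith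
  have ha : (0:ℝ) ≤ ν / (κ + 1) := by positivity
  constructor
  · intro h
    have h0 := h 0 ⟨le_refl 0, ha⟩
    have e : 1/2*(κ/(κ+1) - κ/ν*0) = κ/(2*(κ+1)) := by field_simp; try ring
    have hmax : max (sη - 0) 0 = sη := by simp [hsη]
    rw [e, hmax] at h0
    exact h0
  · intro hle s hs
    refine le_trans ?_ (le_max_left _ _)
    have hs0 : (0:ℝ) ≤ s := hs.1
    have hs1 : s * (κ+1) ≤ ν := (le_div_iff₀ hκ1).mp hs.2
    have hsη' : κ ≤ sη * (2*(κ+1)) := (div_le_iff₀ (by positivity)).mp hle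
    rw [show (1:ℝ)/2*(κ/(κ+1) - κ/ν*s) = κ*(ν - s*(κ+1))/(2*(ν*(κ+1))) by
      field_simp; try ring]
    rw [div_le_iff₀ (by positivity)]
    nlinarith [mul_nonneg (le_of_lt hν0) (by linarith : (0:ℝ) ≤ sη*(2*(κ+1)) - κ),
      mul_nonneg (mul_nonneg hs0 hκ1.le) (by linarith : (0:ℝ) ≤ κ - 2*ν)]

/-- analysis of the NMNO optimality conditions (1) and (2) for the KRR
scaling profiles `S^{(h)}(s) = max(s − s_η, 0)` and `S^{(1−h)}(s) = max(s_η − s, 0)`: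
condition (1) holds iff `s_η ≤ ν/(κ+1)`; condition (2) holds iff `s_η ≥ ν/(κ+1)` when
`κ ≤ 2ν` and iff `s_η ≥ κ/(2(κ+1))` when `κ > 2ν`; consequently when `κ ≤ 2ν` both hold
iff `s_η = ν/(κ+1)`, while when `κ > 2ν` (saturation) they can never hold simultaneously,
so KRR cannot attain the optimal NMNO loss scaling `κ/(κ+1)`. -/
theorem krr_optimality_saturation (ν κ sη : ℝ) (hν : 1 < ν) (hκ : 0 < κ) (hsη : 0 ≤ sη) :
    ((∀ s ∈ Set.Icc (ν / (κ + 1)) ν,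
        1 / 2 * (s / ν - 1 / (κ + 1)) ≤ max (s - sη) 0) ↔ sη ≤ ν / (κ + 1)) ∧
    (κ ≤ 2 * ν →
      ((∀ s ∈ Set.Icc (0 : ℝ) (ν / (κ + 1)),
        1 / 2 * (κ / (κ + 1) - κ / ν * s) ≤ max (sη - s) 0) ↔ ν / (κ + 1) ≤ sη)) ∧
    (2 * ν < κ →
      ((∀ s ∈ Set.Icc (0 : ℝ) (ν / (κ + 1)),
        1 / 2 * (κ / (κ + 1) - κ / ν * s) ≤ max (sη - s) 0) ↔ κ / (2 * (κ + 1)) ≤ sη)) ∧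
    (κ ≤ 2 * ν →
      (((∀ s ∈ Set.Icc (ν / (κ + 1)) ν,
          1 / 2 * (s / ν - 1 / (κ + 1)) ≤ max (s - sη) 0) ∧
        (∀ s ∈ Set.Icc (0 : ℝ) (ν / (κ + 1)),
          1 / 2 * (κ / (κ + 1) - κ / ν * s) ≤ max (sη - s) 0)) ↔ sη = ν / (κ + 1))) ∧
    (2 * ν < κ →
      ¬((∀ s ∈ Set.Icc (ν / (κ + 1)) ν,
          1 / 2 * (s / ν - 1 / (κ + 1)) ≤ max (s - sη) 0) ∧
        (∀ s ∈ Set.Icc (0 : ℝ) (ν / (κ + 1)),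
          1 / 2 * (κ / (κ + 1) - κ / ν * s) ≤ max (sη - s) 0))) := by
  have hν0 : (0:ℝ) < ν := by linarith
  have hκ1 : (0:ℝ) < κ + 1 := by linarith
  refine ⟨krr_cond1_iff ν κ sη hν hκ hsη,
    fun h2ν => krr_cond2_low ν κ sη hν hκ hsη h2ν,
    fun h2ν => krr_cond2_high ν κ sη hν hκ hsη h2ν, ?_, ?_⟩
  · intro h2ν
    rw [krr_cond1_iff ν κ sη hν hκ hsη, krr_cond2_low ν κ sη hν hκ hsη h2ν]
    exact ⟨fun ⟨x, y⟩ => le_antisymm x y, fun e => ⟨le_of_eq e, ge_of_eq e⟩⟩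
  · intro h2ν
    rintro ⟨c1, c2⟩
    have h1 := (krr_cond1_iff ν κ sη hν hκ hsη).mp c1
    have h2 := (krr_cond2_high ν κ sη hν hκ hsη h2ν).mp c2
    have : ν / (κ + 1) < κ / (2 * (κ + 1)) := by
      rw [div_lt_div_iff₀ hκ1 (by positivity)]
      nlinarith
    linarith
end

section
/- Fix ν > 1, κ > 0 and σ² > 0. Let t_N > 0 be a sequence such that 1/t_N has scale ν/(κ+1), and consider the gradient-flow profile h_N(λ) = 1 − e^{−t_N λ} on (0,1]. Then the NMNO loss L^{nmno}_N[h_N] has scale exactly κ/(κ+1); in particular, for every scale s ∈ [0,ν], any sequence λ_N of scale s satisfies that |h_N(λ_N)| has scale not less than (1/2)(s/ν − 1/(κ+1)) for s ≥ ν/(κ+1) and |1−h_N(λ_N)| has scale not less than (1/2)(κ/(κ+1) − (κ/ν)s) for s ≤ ν/(κ+1), so gradient flow with optimally scaled stopping time exhibits no saturation for any ν > 1 and κ > 0. -/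
open Filter Asymptotics MeasureTheory

/-- The NMNO (naive model of noisy observations) loss functional with power-law
measures `μ_λ(dλ) = (1/ν) λ^{-1-1/ν} dλ`, `μ_c(dλ) = (1/ν) λ^{κ/ν-1} dλ`, noise level
`σ²` and `λ_min = (N+1)^{-ν}` (so that `μ_λ([λ_min,1]) = N`). -/
noncomputable def nmnoLoss (ν κ σ2 : ℝ) (N : ℕ) (h : ℝ → ℝ) : ℝ :=
  σ2 / (2 * N) *
      ∫ lam in Set.Icc ((N + 1 : ℝ) ^ (-ν)) 1, (h lam) ^ 2 * (1 / ν * lam ^ (-1 - 1 / ν)) +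
    1 / 2 *
      ∫ lam in Set.Icc ((N + 1 : ℝ) ^ (-ν)) 1, (1 - h lam) ^ 2 * (1 / ν * lam ^ (κ / ν - 1))

open Real

private lemma natRpow_tendsto_zero {c : ℝ} (hc : c < 0) :
    Tendsto (fun N : ℕ => (N : ℝ) ^ c) atTop (nhds 0) := by
  have h2 : Tendsto (fun N : ℕ => (N:ℝ)) atTop atTop := tendsto_natCast_atTop_atTop
  have := (tendsto_rpow_neg_atTop (show 0 < -c by linarith)).comp h2
  simpa [Function.comp_def] using this

private lemma natRpow_isLittleO {a b : ℝ} (hab : a < b) :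
    (fun N : ℕ => (N : ℝ) ^ a) =o[atTop] fun N : ℕ => (N : ℝ) ^ b := by
  rw [isLittleO_iff_tendsto']
  · apply (natRpow_tendsto_zero (show a - b < 0 by linarith)).congr'
    filter_upwards [eventually_ge_atTop 1] with N hN
    have hN0 : (0:ℝ) < N := by exact_mod_cast hN
    rw [Real.rpow_sub hN0]
  · filter_upwards [eventually_ge_atTop 1] with N hN h
    exact absurd h (ne_of_gt (Real.rpow_pos_of_pos (by exact_mod_cast hN) b))

private lemma isLittleO_of_eventually_le {F : ℕ → ℝ} {b C a : ℝ} (hab : a < b)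
    (h : ∀ᶠ N : ℕ in atTop, |F N| ≤ C * (N : ℝ) ^ a) :
    (fun N : ℕ => |F N|) =o[atTop] fun N : ℕ => (N : ℝ) ^ b := by
  have h1 : (fun N : ℕ => |F N|) =O[atTop] fun N : ℕ => (N : ℝ) ^ a := by
    apply IsBigO.of_bound (max C 0)
    filter_upwards [h, eventually_ge_atTop 1] with N hN h1
    have hp : (0:ℝ) < (N:ℝ)^a := Real.rpow_pos_of_pos (by exact_mod_cast h1) a
    rw [Real.norm_eq_abs, Real.norm_eq_abs, abs_abs, abs_of_pos hp]
    exact hN.trans (mul_le_mul_of_nonneg_right (le_max_left _ _) hp.le)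
  exact h1.trans_isLittleO (natRpow_isLittleO hab)

private lemma isLittleO_of_eventually_ge {F : ℕ → ℝ} {b c a : ℝ} (hc : 0 < c) (hab : b < a)
    (h : ∀ᶠ N : ℕ in atTop, c * (N : ℝ) ^ a ≤ F N) :
    (fun N : ℕ => (N : ℝ) ^ b) =o[atTop] fun N : ℕ => |F N| := by
  have h1 : (fun N : ℕ => (N : ℝ) ^ a) =O[atTop] fun N : ℕ => |F N| := by
    apply IsBigO.of_bound c⁻¹
    filter_upwards [h, eventually_ge_atTop 1] with N hN h1
    have hp : (0:ℝ) < (N:ℝ)^a := Real.rpow_pos_of_pos (by exact_mod_cast h1) a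
    have hF : 0 < F N := lt_of_lt_of_le (by positivity) hN
    rw [Real.norm_eq_abs, Real.norm_eq_abs, abs_of_pos hp, abs_abs, abs_of_pos hF]
    rw [inv_mul_eq_div, le_div_iff₀ hc, mul_comm]
    exact hN
  exact (natRpow_isLittleO hab).trans_isBigO h1

private lemma scaleAtLeast_eventually_le {a : ℕ → ℝ} {s : ℝ} (h : ScaleAtLeast a s)
    {ε : ℝ} (hε : 0 < ε) : ∀ᶠ N : ℕ in atTop, |a N| ≤ (N : ℝ) ^ (-s + ε) := by
  filter_upwards [(h ε hε).def one_pos, eventually_ge_atTop 1] with N h1 h2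
  have hp : (0:ℝ) < (N:ℝ)^(-s+ε) := Real.rpow_pos_of_pos (by exact_mod_cast h2) _
  simpa [Real.norm_eq_abs, abs_abs, abs_of_pos hp] using h1

private lemma scaleAtMost_eventually_ge {a : ℕ → ℝ} {s : ℝ} (h : ScaleAtMost a s)
    {ε : ℝ} (hε : 0 < ε) : ∀ᶠ N : ℕ in atTop, (N : ℝ) ^ (-s - ε) ≤ |a N| := by
  filter_upwards [(h ε hε).def one_pos, eventually_ge_atTop 1] with N h1 h2
  have hp : (0:ℝ) < (N:ℝ)^(-s-ε) := Real.rpow_pos_of_pos (by exact_mod_cast h2) _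
  simpa [Real.norm_eq_abs, abs_abs, abs_of_pos hp] using h1

private lemma exp_neg_le_K_rpow {p : ℝ} (hp : 0 < p) :
    ∃ K : ℝ, 1 ≤ K ∧ ∀ x : ℝ, 0 < x → Real.exp (-x) ≤ K * x ^ (-p) := by
  set n : ℕ := ⌈p⌉₊ with hn
  have hn1 : 1 ≤ n := Nat.one_le_iff_ne_zero.mpr (by
    simp only [hn, ne_eq, Nat.ceil_eq_zero, not_le]; exact hp)
  have hn1' : (1:ℝ) ≤ (n:ℝ) := by exact_mod_cast hn1
  have hK1 : (1:ℝ) ≤ (n:ℝ)^n := one_le_pow₀ hn1'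
  refine ⟨(n:ℝ)^n, hK1, fun x hx => ?_⟩
  rcases le_or_gt x 1 with hx1 | hx1
  · have h1 : Real.exp (-x) ≤ 1 := Real.exp_le_one_iff.mpr (by linarith)
    have h2 : (1:ℝ) ≤ x ^ (-p) :=
      Real.one_le_rpow_of_pos_of_le_one_of_nonpos hx hx1 (by linarith)
    nlinarith [Real.rpow_nonneg hx.le (-p)]
  · have hxn : 0 < x / n := by positivity
    have h1 : (x/n)^n ≤ Real.exp x := by
      have h2 : x/n ≤ Real.exp (x/n) := by nlinarith [Real.add_one_le_exp (x/n)]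
      calc (x/n)^n ≤ Real.exp (x/n) ^ n := pow_le_pow_left₀ hxn.le h2 n
        _ = Real.exp (n * (x/n)) := (Real.exp_nat_mul _ n).symm
        _ = Real.exp x := by rw [mul_div_cancel₀]; positivity
    have hxpow : (0:ℝ) < (x/n)^n := by positivity
    have h3 : Real.exp (-x) ≤ ((x/n)^n)⁻¹ := by
      rw [Real.exp_neg]
      exact inv_anti₀ hxpow h1
    have h4 : ((x/n)^n)⁻¹ = (n:ℝ)^n * (x^n)⁻¹ := by
      rw [div_pow, ← div_eq_mul_inv, inv_div]
    have h5 : (x^n)⁻¹ ≤ x ^ (-p) := by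
      have : (x^n)⁻¹ = x ^ (-(n:ℝ)) := by
        rw [Real.rpow_neg (by positivity), Real.rpow_natCast]
      rw [this]
      exact Real.rpow_le_rpow_of_exponent_le hx1.le (by simpa using Nat.le_ceil p)
    calc Real.exp (-x) ≤ (n:ℝ)^n * (x^n)⁻¹ := by rw [← h4]; exact h3
      _ ≤ (n:ℝ)^n * x^(-p) := by
          exact mul_le_mul_of_nonneg_left h5 (by positivity)

private lemma one_sub_exp_sq_le {x w : ℝ} (hx : 0 < x) (hw0 : 0 < w) (hw : w ≤ 2) :
    (1 - Real.exp (-x))^2 ≤ x ^ w := by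
  have h0 : 0 ≤ 1 - Real.exp (-x) := by
    have := Real.exp_le_one_iff.mpr (by linarith : -x ≤ 0); linarith
  have h2 : 1 - Real.exp (-x) ≤ x ^ (w/2) := by
    rcases le_or_gt x 1 with hx1 | hx1
    · have hxe : 1 - Real.exp (-x) ≤ x := by nlinarith [Real.add_one_le_exp (-x)]
      calc 1 - Real.exp (-x) ≤ x := hxe
        _ = x ^ (1:ℝ) := (Real.rpow_one x).symm
        _ ≤ x ^ (w/2) := Real.rpow_le_rpow_of_exponent_ge hx hx1 (by linarith)
    · have : (1:ℝ) ≤ x ^ (w/2) := Real.one_le_rpow hx1.le (by positivity)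
      have he : Real.exp (-x) > 0 := Real.exp_pos _
      linarith
  calc (1 - Real.exp (-x))^2 ≤ (x ^ (w/2))^2 := pow_le_pow_left₀ h0 h2 2
    _ = x ^ w := by
      rw [← Real.rpow_natCast (x ^ (w/2)) 2, ← Real.rpow_mul hx.le]
      norm_num

private lemma integral_Icc_rpow {a b r : ℝ} (ha : 0 < a) (hab : a ≤ b) (hr : r ≠ -1) :
    ∫ x in Set.Icc a b, x ^ r = (b ^ (r+1) - a ^ (r+1)) / (r+1) := by
  rw [MeasureTheory.integral_Icc_eq_integral_Ioc, ← intervalIntegral.integral_of_le hab]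
  refine integral_rpow (Or.inr ⟨hr, fun h => ?_⟩)
  rcases Set.mem_uIcc.mp h with ⟨h1, _⟩ | ⟨_, h2⟩ <;> linarith

private lemma integrableOn_aux {a c r : ℝ} (ha : 0 < a) {f : ℝ → ℝ} (hf : Continuous f) :
    IntegrableOn (fun x : ℝ => f x * (c * x ^ r)) (Set.Icc a 1) := by
  apply ContinuousOn.integrableOn_Icc
  refine ContinuousOn.mul hf.continuousOn (ContinuousOn.mul continuousOn_const ?_)
  exact ContinuousOn.rpow_const continuousOn_id
    (fun x hx => Or.inl (ne_of_gt (lt_of_lt_of_le ha hx.1)))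

private lemma integrableOn_rpow_aux {a c r : ℝ} (ha : 0 < a) (C : ℝ) :
    IntegrableOn (fun x : ℝ => C * (c * x ^ r)) (Set.Icc a 1) :=
  integrableOn_aux ha continuous_const
private lemma I1_bound {ν tN w A : ℝ} (hν : 1 < ν) (htN : 0 < tN) (hw : 1/ν < w)
    (hw2 : w ≤ 2) (hA : 0 < A) (hA1 : A ≤ 1) :
    ∫ lam in Set.Icc A 1, (1 - Real.exp (-tN * lam))^2 * (1/ν * lam ^ (-1-1/ν))
      ≤ tN ^ w * (1/ν) * (1/(w - 1/ν)) := by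
  have hν0 : (0:ℝ) < ν := by linarith
  have hw0 : 0 < w := lt_trans (by positivity) hw
  have key : ∫ lam in Set.Icc A 1, (1 - Real.exp (-tN * lam))^2 * (1/ν * lam ^ (-1-1/ν))
      ≤ ∫ lam in Set.Icc A 1, tN ^ w * (1/ν * lam ^ (w-1-1/ν)) := by
    refine setIntegral_mono_on
      (integrableOn_aux hA (by continuity)) (integrableOn_rpow_aux hA _)
      measurableSet_Icc (fun x hx => ?_)
    have hx0 : 0 < x := lt_of_lt_of_le hA hx.1
    have h1 : (1 - Real.exp (-tN * x))^2 ≤ tN ^ w * x ^ w := by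
      have := one_sub_exp_sq_le (mul_pos htN hx0) hw0 hw2
      rw [neg_mul] at *
      calc (1 - Real.exp (-(tN * x)))^2 ≤ (tN*x) ^ w := this
        _ = tN ^ w * x ^ w := Real.mul_rpow htN.le hx0.le
    calc (1 - Real.exp (-tN * x))^2 * (1/ν * x ^ (-1-1/ν))
        ≤ (tN ^ w * x ^ w) * (1/ν * x ^ (-1-1/ν)) := by
          apply mul_le_mul_of_nonneg_right h1
          have := Real.rpow_nonneg hx0.le (-1-1/ν); positivity
      _ = tN ^ w * (1/ν * (x ^ w * x ^ (-1-1/ν))) := by ring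
      _ = tN ^ w * (1/ν * x ^ (w-1-1/ν)) := by
          rw [← Real.rpow_add hx0]; ring_nf
  have hr : w - 1 - 1/ν + 1 = w - 1/ν := by ring
  have comp : ∫ lam in Set.Icc A 1, tN ^ w * (1/ν * lam ^ (w-1-1/ν))
      = tN ^ w * (1/ν) * ((1 - A ^ (w - 1/ν)) / (w - 1/ν)) := by
    rw [show (fun lam : ℝ => tN ^ w * (1/ν * lam ^ (w-1-1/ν)))
        = fun lam : ℝ => (tN ^ w * (1/ν)) * lam ^ (w-1-1/ν) by funext x; ring]
    rw [MeasureTheory.integral_const_mul,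
      integral_Icc_rpow hA hA1 (by intro h; rw [h] at hr; linarith), hr,
      Real.one_rpow]
  refine key.trans ?_
  rw [comp]
  have hApos := Real.rpow_nonneg hA.le (w - 1/ν)
  have hwp : 0 < w - 1/ν := by linarith
  have hT : 0 ≤ tN ^ w * (1/ν) := by positivity
  refine mul_le_mul_of_nonneg_left ?_ (by positivity : (0:ℝ) ≤ tN ^ w * (1/ν))
  exact div_le_div_of_nonneg_right (by linarith) hwp.le

private lemma I2_simple {ν κ tN A : ℝ} (hν : 1 < ν) (hκ : 0 < κ) (htN : 0 < tN)
    (hA : 0 < A) (hA1 : A ≤ 1) :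
    ∫ lam in Set.Icc A 1, (1 - (1 - Real.exp (-tN * lam)))^2 * (1/ν * lam ^ (κ/ν-1))
      ≤ (1/ν) * (1/(κ/ν)) := by
  have hν0 : (0:ℝ) < ν := by linarith
  have hκν : (0:ℝ) < κ/ν := div_pos hκ hν0
  have key : ∫ lam in Set.Icc A 1, (1 - (1 - Real.exp (-tN * lam)))^2 * (1/ν * lam ^ (κ/ν-1))
      ≤ ∫ lam in Set.Icc A 1, (1:ℝ) * (1/ν * lam ^ (κ/ν-1)) := by
    refine setIntegral_mono_on
      (integrableOn_aux hA (by continuity)) (integrableOn_aux hA continuous_const)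
      measurableSet_Icc (fun x hx => ?_)
    have hx0 : 0 < x := lt_of_lt_of_le hA hx.1
    have he1 : Real.exp (-tN * x) ≤ 1 := by
      rw [neg_mul]
      exact Real.exp_le_one_iff.mpr (by nlinarith)
    have he0 : 0 < Real.exp (-tN * x) := Real.exp_pos _
    have h1 : (1 - (1 - Real.exp (-tN * x)))^2 ≤ 1 := by
      rw [sub_sub_cancel]; nlinarith
    exact mul_le_mul_of_nonneg_right h1
      (by have := Real.rpow_nonneg hx0.le (κ/ν-1); positivity)
  have hr : κ/ν - 1 + 1 = κ/ν := by ring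
  have comp : ∫ lam in Set.Icc A 1, (1:ℝ) * (1/ν * lam ^ (κ/ν-1))
      = (1/ν) * ((1 - A ^ (κ/ν)) / (κ/ν)) := by
    rw [show (fun lam : ℝ => (1:ℝ) * (1/ν * lam ^ (κ/ν-1)))
        = fun lam : ℝ => (1/ν) * lam ^ (κ/ν-1) by funext x; ring]
    rw [MeasureTheory.integral_const_mul,
      integral_Icc_rpow hA hA1 (by intro h; linarith), hr, Real.one_rpow]
  refine key.trans ?_
  rw [comp]
  refine mul_le_mul_of_nonneg_left ?_ (by positivity)
  have := Real.rpow_nonneg hA.le (κ/ν)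
  exact div_le_div_of_nonneg_right (by linarith) hκν.le

private lemma I1_lower {ν tN A : ℝ} (hν : 1 < ν) (ht1 : 1 ≤ tN)
    (hA : 0 < A) (hAt : A ≤ 1/tN) :
    (1 - Real.exp (-1))^2 * (1/ν) * (((1/tN) ^ (-1/ν) - 1) * ν)
      ≤ ∫ lam in Set.Icc A 1, (1 - Real.exp (-tN * lam))^2 * (1/ν * lam ^ (-1-1/ν)) := by
  have hν0 : (0:ℝ) < ν := by linarith
  have htN : (0:ℝ) < tN := by linarith
  have hu0 : 0 < 1/tN := by positivity
  have hu1 : 1/tN ≤ 1 := by rw [div_le_one htN]; exact ht1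
  have hIA : ∀ x ∈ Set.Icc (1/tN) (1:ℝ), 0 < x := fun x hx => lt_of_lt_of_le hu0 hx.1
  have step1 : ∫ lam in Set.Icc (1/tN) 1, (1 - Real.exp (-tN * lam))^2 * (1/ν * lam ^ (-1-1/ν))
      ≤ ∫ lam in Set.Icc A 1, (1 - Real.exp (-tN * lam))^2 * (1/ν * lam ^ (-1-1/ν)) := by
    refine setIntegral_mono_set (integrableOn_aux hA (by continuity)) ?_ ?_
    · filter_upwards [ae_restrict_mem measurableSet_Icc] with x hx
      have hx0 : 0 < x := lt_of_lt_of_le hA hx.1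
      have := Real.rpow_nonneg hx0.le (-1-1/ν)
      positivity
    · exact HasSubset.Subset.eventuallyLE (Set.Icc_subset_Icc hAt le_rfl)
  have step2 : ∫ lam in Set.Icc (1/tN) 1, (1 - Real.exp (-1))^2 * (1/ν * lam ^ (-1-1/ν))
      ≤ ∫ lam in Set.Icc (1/tN) 1, (1 - Real.exp (-tN * lam))^2 * (1/ν * lam ^ (-1-1/ν)) := by
    refine setIntegral_mono_on (integrableOn_aux hu0 continuous_const)
      (integrableOn_aux hu0 (by continuity)) measurableSet_Icc (fun x hx => ?_)
    have hx0 : 0 < x := lt_of_lt_of_le hu0 hx.1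
    have htx1 : 1 ≤ tN * x := by
      have h9 : tN * (1/tN) ≤ tN * x := mul_le_mul_of_nonneg_left hx.1 htN.le
      have h8 : tN * (1/tN) = 1 := by field_simp
      linarith
    have h1 : (1 - Real.exp (-1))^2 ≤ (1 - Real.exp (-tN * x))^2 := by
      have h2 : Real.exp (-tN * x) ≤ Real.exp (-1) := by
        rw [Real.exp_le_exp, neg_mul]; linarith
      have h3 : Real.exp (-1) ≤ 1 := Real.exp_le_one_iff.mpr (by norm_num)
      apply pow_le_pow_left₀ (by linarith) (by linarith) 2
    exact mul_le_mul_of_nonneg_right h1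
      (by have := Real.rpow_nonneg hx0.le (-1-1/ν); positivity)
  have hr : -1-1/ν + 1 = -1/ν := by ring
  have comp : ∫ lam in Set.Icc (1/tN) 1, (1 - Real.exp (-1))^2 * (1/ν * lam ^ (-1-1/ν))
      = (1 - Real.exp (-1))^2 * (1/ν) * ((1 ^ (-1/ν) - (1/tN) ^ (-1/ν)) / (-1/ν)) := by
    rw [show (fun lam : ℝ => (1 - Real.exp (-1))^2 * (1/ν * lam ^ (-1-1/ν)))
        = fun lam : ℝ => ((1 - Real.exp (-1))^2 * (1/ν)) * lam ^ (-1-1/ν) by funext x; ring]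
    rw [MeasureTheory.integral_const_mul,
      integral_Icc_rpow hu0 hu1 (by
        intro h
        have h2 : (0:ℝ) < 1/ν := by positivity
        have h3 : 1/ν = 0 := by linarith
        linarith), hr]
  have e1 : ((1:ℝ) ^ (-1/ν) - (1/tN) ^ (-1/ν)) / (-1/ν) = ((1/tN) ^ (-1/ν) - 1) * ν := by
    rw [Real.one_rpow]; field_simp; ring
  refine le_trans (le_of_eq ?_) (step2.trans step1)
  rw [comp, e1]

private lemma loss_decomp (ν κ σ2 : ℝ) (hν : 1 < ν) (N : ℕ) {tN : ℝ} (htN : 0 < tN) :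
    nmnoLoss ν κ σ2 N (fun lam => 1 - Real.exp (-tN * lam)) =
      σ2/(2*N) * ((∫ lam in Set.Icc (((N:ℝ)+1)^(-ν)) 1,
          (1 - Real.exp (-tN * lam))^2 * (1/ν * lam ^ (-1-1/ν)))
        + (1/2 * ∫ lam in Set.Icc (((N:ℝ)+1)^(-ν)) 1,
            (1 - (1 - Real.exp (-tN * lam)))^2 * (1/ν * lam ^ (κ/ν-1)))
          * (1 - ((N:ℝ)+1)^(-ν))) := by
  have hν0 : (0:ℝ) < ν := by linarith
  have hA : (0:ℝ) < ((N:ℝ)+1)^(-ν) := Real.rpow_pos_of_pos (by positivity) _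
  have hA1 : ((N:ℝ)+1)^(-ν) ≤ 1 :=
    Real.rpow_le_one_of_one_le_of_nonpos (by simp [Nat.cast_nonneg]) (by linarith)
  have hfin : (volume (Set.Icc (((N:ℝ)+1)^(-ν)) 1)) < ⊤ := measure_Icc_lt_top
  simp only [nmnoLoss]
  rw [MeasureTheory.integral_add (integrableOn_aux hA (by continuity))
      (MeasureTheory.integrableOn_const hfin.ne),
    MeasureTheory.setIntegral_const, measureReal_def, Real.volume_Icc, smul_eq_mul,
    ENNReal.toReal_ofReal (by linarith)]
  ring
private lemma tendsto_rpow_mul_exp_neg_rpow (c : ℝ) {δ : ℝ} (hδ : 0 < δ) :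
    Tendsto (fun x : ℝ => x ^ c * Real.exp (-x ^ δ)) atTop (nhds 0) := by
  have h1 : Tendsto (fun y : ℝ => y ^ (c/δ) * Real.exp (-1 * y)) atTop (nhds 0) :=
    tendsto_rpow_mul_exp_neg_mul_atTop_nhds_zero _ _ one_pos
  have h2 := h1.comp (tendsto_rpow_atTop hδ)
  apply h2.congr'
  filter_upwards [eventually_ge_atTop 1] with x hx
  have hx0 : (0:ℝ) ≤ x := by linarith
  simp only [Function.comp_apply, neg_one_mul]
  congr 1
  rw [← Real.rpow_mul hx0]
  congr 1
  field_simp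

private lemma eventually_exp_rpow_le {δ : ℝ} (c : ℝ) (hδ : 0 < δ) :
    ∀ᶠ N : ℕ in atTop, Real.exp (-(N:ℝ) ^ δ) ≤ (N:ℝ) ^ c := by
  have hcast : Tendsto (fun N : ℕ => (N:ℝ)) atTop atTop := tendsto_natCast_atTop_atTop
  have h := (tendsto_rpow_mul_exp_neg_rpow (-c) hδ).comp hcast
  have h2 := h.eventually (eventually_le_nhds one_pos)
  filter_upwards [h2, eventually_ge_atTop 1] with N h1 hN
  have hN0 : (0:ℝ) < N := by exact_mod_cast hN
  have hp : (0:ℝ) < (N:ℝ) ^ (-c) := Real.rpow_pos_of_pos hN0 _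
  simp only [Function.comp_apply] at h1
  have h3 : Real.exp (-(N:ℝ) ^ δ) ≤ 1 / (N:ℝ) ^ (-c) := by
    rw [le_div_iff₀ hp, mul_comm]; exact h1
  rwa [one_div, ← Real.rpow_neg hN0.le, neg_neg] at h3

private lemma recip_scale_upper {t : ℕ → ℝ} {q : ℝ} (ht_pos : ∀ N, 0 < t N)
    (h : ScaleAtMost (fun N => 1 / t N) q) {ε : ℝ} (hε : 0 < ε) :
    ∀ᶠ N : ℕ in atTop, t N ≤ (N : ℝ) ^ (q + ε) := by
  filter_upwards [scaleAtMost_eventually_ge h hε, eventually_ge_atTop 1] with N h1 h2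
  have hN0 : (0:ℝ) < N := by exact_mod_cast h2
  have hp : (0:ℝ) < (N:ℝ) ^ (q + ε) := Real.rpow_pos_of_pos hN0 _
  have habs : |1 / t N| = 1 / t N := abs_of_pos (by have := ht_pos N; positivity)
  rw [habs] at h1
  have hrw : (N:ℝ) ^ (-q - ε) = 1 / (N:ℝ) ^ (q + ε) := by
    rw [one_div, ← Real.rpow_neg hN0.le]; ring_nf
  rw [hrw, div_le_div_iff₀ hp (ht_pos N), one_mul, one_mul] at h1
  exact h1

private lemma recip_scale_lower {t : ℕ → ℝ} {q : ℝ} (ht_pos : ∀ N, 0 < t N)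
    (h : ScaleAtLeast (fun N => 1 / t N) q) {ε : ℝ} (hε : 0 < ε) :
    ∀ᶠ N : ℕ in atTop, (N : ℝ) ^ (q - ε) ≤ t N := by
  filter_upwards [scaleAtLeast_eventually_le h hε, eventually_ge_atTop 1] with N h1 h2
  have hN0 : (0:ℝ) < N := by exact_mod_cast h2
  have hp : (0:ℝ) < (N:ℝ) ^ (q - ε) := Real.rpow_pos_of_pos hN0 _
  have habs : |1 / t N| = 1 / t N := abs_of_pos (by have := ht_pos N; positivity)
  rw [habs] at h1
  have hrw : (N:ℝ) ^ (-q + ε) = 1 / (N:ℝ) ^ (q - ε) := by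
    rw [one_div, ← Real.rpow_neg hN0.le]; ring_nf
  rw [hrw, div_le_div_iff₀ (ht_pos N) hp, one_mul, one_mul] at h1
  exact h1

private lemma pos_scale_upper {lam : ℕ → ℝ} {s : ℝ} (hl : ∀ N, 0 < lam N)
    (h : ScaleAtLeast lam s) {ε : ℝ} (hε : 0 < ε) :
    ∀ᶠ N : ℕ in atTop, lam N ≤ (N : ℝ) ^ (-s + ε) := by
  filter_upwards [scaleAtLeast_eventually_le h hε] with N h1
  exact (le_abs_self _).trans h1

private lemma pos_scale_lower {lam : ℕ → ℝ} {s : ℝ} (hl : ∀ N, 0 < lam N)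
    (h : ScaleAtMost lam s) {ε : ℝ} (hε : 0 < ε) :
    ∀ᶠ N : ℕ in atTop, (N : ℝ) ^ (-s - ε) ≤ lam N := by
  filter_upwards [scaleAtMost_eventually_ge h hε] with N h1
  rwa [abs_of_pos (hl N)] at h1
set_option maxHeartbeats 1000000 in
/-- gradient flow `h_N(λ) = 1 − e^{−t_N λ}` with optimally scaled stopping
time (`1/t_N` of scale `ν/(κ+1)`) attains the optimal NMNO loss scale `κ/(κ+1)`; in
particular `h_N` and `1 − h_N` satisfy the NMNO optimality conditions on every scale
`s ∈ [0,ν]`, so gradient flow exhibits no saturation for any `ν > 1`, `κ > 0`. -/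
theorem gradient_flow_no_saturation (ν κ σ2 : ℝ) (hν : 1 < ν) (hκ : 0 < κ) (hσ : 0 < σ2)
    (t : ℕ → ℝ) (ht_pos : ∀ N, 0 < t N)
    (ht : HasScale (fun N => 1 / t N) (ν / (κ + 1))) :
    HasScale (fun N => nmnoLoss ν κ σ2 N (fun lam => 1 - Real.exp (-(t N) * lam)))
        (κ / (κ + 1)) ∧
    (∀ lam : ℕ → ℝ, (∀ N, lam N ∈ Set.Ioc (0 : ℝ) 1) →
      ∀ s ∈ Set.Icc (0 : ℝ) ν, HasScale lam s →
        (ν / (κ + 1) ≤ s →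
          ScaleAtLeast (fun N => 1 - Real.exp (-(t N) * lam N))
            (1 / 2 * (s / ν - 1 / (κ + 1)))) ∧
        (s ≤ ν / (κ + 1) →
          ScaleAtLeast (fun N => 1 - (1 - Real.exp (-(t N) * lam N)))
            (1 / 2 * (κ / (κ + 1) - κ / ν * s)))) := by
  have hν0 : (0:ℝ) < ν := by linarith
  have hκ1 : (0:ℝ) < κ + 1 := by linarith
  constructor
  · constructor
    · -- ScaleAtLeast for the loss
      intro ε hε
      have hδ1a : (0:ℝ) < min (ε*(κ+1)/(4*ν)) 1 := lt_min (by positivity) one_pos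
      set δ1 : ℝ := min (ε*(κ+1)/(4*ν)) 1 with hδ1def
      set w : ℝ := 1/ν + δ1 with hwdef
      have hδ1b : δ1 ≤ ε*(κ+1)/(4*ν) := min_le_left _ _
      have hδ1c : δ1 ≤ 1 := min_le_right _ _
      have hw1 : 1/ν < w := by rw [hwdef]; linarith
      have hνinv1 : 1/ν ≤ 1 := by rw [div_le_one hν0]; linarith
      have hνinv0 : 0 < 1/ν := by positivity
      have hw2 : w ≤ 2 := by rw [hwdef]; linarith
      have hw0 : 0 < w := by rw [hwdef]; linarith
      have hw3 : 0 < w - 1/ν := by linarith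
      have hκν0 : 0 < κ/ν := div_pos hκ hν0
      have hε1a0 : (0:ℝ) < min (ε/16) 1 := lt_min (by linarith) one_pos
      set ε1 : ℝ := min (ε/16) 1 with hε1def
      have hε1a : ε1 ≤ ε/16 := min_le_left _ _
      set q : ℝ := ν/(κ+1) with hqdef
      have hq0 : 0 < q := by rw [hqdef]; positivity
      set a1 : ℝ := -1 + (q+ε1)*w with ha1def
      have hb1 : -1 + 1/(κ+1) = -(κ/(κ+1)) := by field_simp; ring
      have hqw : (q+ε1)*w = 1/(κ+1) + δ1*(ν/(κ+1)) + ε1*w := by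
        rw [hqdef, hwdef]; field_simp
      have he2 : δ1*(ν/(κ+1)) ≤ ε/4 := by
        calc δ1*(ν/(κ+1)) ≤ (ε*(κ+1)/(4*ν))*(ν/(κ+1)) := by gcongr
          _ = ε/4 := by field_simp
      have he3 : ε1*w ≤ ε/8 := by
        calc ε1*w ≤ (ε/16)*2 := mul_le_mul hε1a hw2 hw0.le (by linarith)
          _ = ε/8 := by ring
      have ha1b : a1 < -(κ/(κ+1)) + ε := by rw [ha1def]; linarith
      have ha2b : (-1:ℝ) < -(κ/(κ+1)) + ε := by
        have : κ/(κ+1) < 1 := by rw [div_lt_one hκ1]; linarith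
        linarith
      apply isLittleO_of_eventually_le
        (C := σ2*(1/ν)*(1/(w-1/ν)) + σ2*((1/ν)*(1/(κ/ν)))/2) (a := max a1 (-1))
      · exact max_lt ha1b ha2b
      · filter_upwards [recip_scale_upper ht_pos ht.2 hε1a0,
          eventually_ge_atTop 1] with N hU hN1
        have hN0 : (0:ℝ) < N := by exact_mod_cast hN1
        have hN1' : (1:ℝ) ≤ N := by exact_mod_cast hN1
        have htN := ht_pos N
        have hA : (0:ℝ) < ((N:ℝ)+1)^(-ν) := Real.rpow_pos_of_pos (by positivity) _
        have hA1 : ((N:ℝ)+1)^(-ν) ≤ 1 :=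
          Real.rpow_le_one_of_one_le_of_nonpos (by linarith) (by linarith)
        have hdecomp := loss_decomp ν κ σ2 hν N (tN := t N) htN
        rw [hdecomp]
        set J1 : ℝ := ∫ lam in Set.Icc (((N:ℝ)+1)^(-ν)) 1,
            (1 - Real.exp (-(t N) * lam))^2 * (1/ν * lam ^ (-1-1/ν)) with hJ1def
        set J2 : ℝ := ∫ lam in Set.Icc (((N:ℝ)+1)^(-ν)) 1,
            (1 - (1 - Real.exp (-(t N) * lam)))^2 * (1/ν * lam ^ (κ/ν-1)) with hJ2def
        have hI1nn : 0 ≤ J1 := by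
          rw [hJ1def]
          apply setIntegral_nonneg measurableSet_Icc
          intro x hx
          have hx0 : 0 < x := lt_of_lt_of_le hA hx.1
          have := Real.rpow_nonneg hx0.le (-1-1/ν)
          positivity
        have hI2nn : 0 ≤ J2 := by
          rw [hJ2def]
          apply setIntegral_nonneg measurableSet_Icc
          intro x hx
          have hx0 : 0 < x := lt_of_lt_of_le hA hx.1
          have := Real.rpow_nonneg hx0.le (κ/ν-1)
          positivity
        have hIA : 0 ≤ 1 - ((N:ℝ)+1)^(-ν) := by linarith
        have hI1 : J1 ≤ t N^w*(1/ν)*(1/(w-1/ν)) :=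
          I1_bound (tN := t N) (A := ((N:ℝ)+1)^(-ν)) hν htN hw1 hw2 hA hA1
        have hI2 : J2 ≤ (1/ν) * (1/(κ/ν)) :=
          I2_simple (tN := t N) (A := ((N:ℝ)+1)^(-ν)) hν hκ htN hA hA1
        have hpar : 0 ≤ J1 + (1/2*J2)*(1-((N:ℝ)+1)^(-ν)) :=
          add_nonneg hI1nn
            (mul_nonneg (mul_nonneg (by norm_num : (0:ℝ) ≤ 1/2) hI2nn) hIA)
        have habs : |σ2/(2*(N:ℝ)) * (J1 + (1/2*J2)*(1-((N:ℝ)+1)^(-ν)))|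
            = σ2/(2*(N:ℝ)) * (J1 + (1/2*J2)*(1-((N:ℝ)+1)^(-ν))) :=
          abs_of_nonneg (mul_nonneg (by positivity) hpar)
        rw [habs]
        have hs1 : σ2/(2*(N:ℝ)) ≤ σ2 * (N:ℝ)⁻¹ := by
          rw [div_le_iff₀ (by positivity)]
          have h9 : σ2 * (N:ℝ)⁻¹ * (2*(N:ℝ)) = 2*σ2 := by field_simp
          linarith
        have htw : t N ^ w ≤ (N:ℝ)^((q+ε1)*w) := by
          rw [Real.rpow_mul hN0.le]
          exact Real.rpow_le_rpow htN.le hU hw0.le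
        have e_a1 : (N:ℝ)^a1 = (N:ℝ)^(-1:ℝ) * (N:ℝ)^((q+ε1)*w) := by
          rw [ha1def, ← Real.rpow_add hN0]
        have hNinv : (N:ℝ)^(-1:ℝ) = ((N:ℝ))⁻¹ := Real.rpow_neg_one _
        have hC1nn : (0:ℝ) ≤ σ2*(1/ν)*(1/(w-1/ν)) := by positivity
        have hκν1 : (0:ℝ) < 1/(κ/ν) := one_div_pos.mpr hκν0
        have hC2nn : (0:ℝ) ≤ σ2*((1/ν)*(1/(κ/ν)))/2 :=
          div_nonneg (mul_nonneg hσ.le (mul_nonneg hνinv0.le hκν1.le)) (by norm_num)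
        have hmax1 : (N:ℝ)^a1 ≤ (N:ℝ)^(max a1 (-1)) :=
          Real.rpow_le_rpow_of_exponent_le hN1' (le_max_left _ _)
        have hmaxm1 : (N:ℝ)^(-1:ℝ) ≤ (N:ℝ)^(max a1 (-1)) :=
          Real.rpow_le_rpow_of_exponent_le hN1' (le_max_right _ _)
        have step2 : J1 + (1/2*J2)*(1-((N:ℝ)+1)^(-ν))
            ≤ t N^w*(1/ν)*(1/(w-1/ν)) + (1/ν)*(1/(κ/ν))/2 := by
          refine add_le_add hI1 ?_
          have hh : (1/2*J2)*(1-((N:ℝ)+1)^(-ν)) ≤ (1/2*((1/ν)*(1/(κ/ν))))*1 := by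
            refine mul_le_mul ?_ (by linarith) hIA
              (mul_nonneg (by norm_num) (mul_nonneg hνinv0.le hκν1.le))
            exact mul_le_mul_of_nonneg_left hI2 (by norm_num)
          have hh2 : (1/2*((1/ν)*(1/(κ/ν))))*1 = (1/ν)*(1/(κ/ν))/2 := by ring
          linarith
        calc σ2/(2*(N:ℝ)) * (J1 + (1/2*J2)*(1-((N:ℝ)+1)^(-ν)))
            ≤ σ2 * (N:ℝ)⁻¹ * (J1 + (1/2*J2)*(1-((N:ℝ)+1)^(-ν))) :=
              mul_le_mul_of_nonneg_right hs1 hpar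
          _ ≤ σ2 * (N:ℝ)⁻¹ * (t N^w*(1/ν)*(1/(w-1/ν)) + (1/ν)*(1/(κ/ν))/2) := by
              refine mul_le_mul_of_nonneg_left step2 (by positivity)
          _ = (σ2*(1/ν)*(1/(w-1/ν))) * ((N:ℝ)⁻¹ * t N^w)
              + (σ2*((1/ν)*(1/(κ/ν)))/2) * (N:ℝ)⁻¹ := by ring
          _ ≤ (σ2*(1/ν)*(1/(w-1/ν))) * (N:ℝ)^a1
              + (σ2*((1/ν)*(1/(κ/ν)))/2) * (N:ℝ)^(-1:ℝ) := by
              refine add_le_add ?_ (le_of_eq (by rw [hNinv]))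
              refine mul_le_mul_of_nonneg_left ?_ hC1nn
              rw [e_a1, hNinv]
              exact mul_le_mul_of_nonneg_left htw (inv_nonneg.mpr hN0.le)
          _ ≤ (σ2*(1/ν)*(1/(w-1/ν))) * (N:ℝ)^(max a1 (-1))
              + (σ2*((1/ν)*(1/(κ/ν)))/2) * (N:ℝ)^(max a1 (-1)) :=
              add_le_add (mul_le_mul_of_nonneg_left hmax1 hC1nn)
                (mul_le_mul_of_nonneg_left hmaxm1 hC2nn)
          _ = (σ2*(1/ν)*(1/(w-1/ν)) + σ2*((1/ν)*(1/(κ/ν)))/2)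
              * (N:ℝ)^(max a1 (-1)) := by ring
    · -- ScaleAtMost for the loss
      intro ε hε
      have h01 : (0:ℝ) < min (ε*ν/2) (min (ν/(κ+1)/2) (ν*κ/(2*(κ+1)))) :=
        lt_min (by positivity) (lt_min (by positivity) (by positivity))
      set ε1 : ℝ := min (ε*ν/2) (min (ν/(κ+1)/2) (ν*κ/(2*(κ+1)))) with hε1def
      have hε1a : ε1 ≤ ε*ν/2 := min_le_left _ _
      have hε1b : ε1 ≤ ν/(κ+1)/2 := (min_le_right _ _).trans (min_le_left _ _)
      have hε1c : ε1 ≤ ν*κ/(2*(κ+1)) := (min_le_right _ _).trans (min_le_right _ _)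
      set q : ℝ := ν/(κ+1) with hqdef
      have hq0 : 0 < q := by rw [hqdef]; positivity
      have hqε : 0 < q - ε1 := by
        have : ε1 ≤ q/2 := hε1b
        linarith
      have hc2pos : 0 < (q - ε1)/ν := div_pos hqε hν0
      have hb : -(κ/(κ+1)) - ε < -1 + (q-ε1)/ν := by
        have e1 : (q - ε1)/ν = 1/(κ+1) - ε1/ν := by rw [hqdef]; field_simp
        have e2 : ε1/ν ≤ ε/2 := by
          calc ε1/ν ≤ (ε*ν/2)/ν := by gcongr
            _ = ε/2 := by field_simp
        have e3 : -1 + 1/(κ+1) = -(κ/(κ+1)) := by field_simp; ring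
        linarith
      have hE : 0 < 1 - Real.exp (-1) := by
        have h9 : Real.exp (-1) < Real.exp 0 := Real.exp_lt_exp.mpr (by norm_num)
        rw [Real.exp_zero] at h9
        linarith
      apply isLittleO_of_eventually_ge (c := σ2*(1 - Real.exp (-1))^2/4)
        (a := -1 + (q-ε1)/ν)
      · exact div_pos (mul_pos hσ (pow_pos hE 2)) (by norm_num)
      · exact hb
      · filter_upwards [recip_scale_upper ht_pos ht.2 h01,
          recip_scale_lower ht_pos ht.1 h01,
          ((tendsto_rpow_atTop hc2pos).comp
            (tendsto_natCast_atTop_atTop :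
              Tendsto (fun n : ℕ => (n:ℝ)) atTop atTop)).eventually_ge_atTop 2,
          eventually_ge_atTop 1] with N hU hL h2 hN1
        simp only [Function.comp_apply] at h2
        have hN0 : (0:ℝ) < N := by exact_mod_cast hN1
        have hN1' : (1:ℝ) ≤ N := by exact_mod_cast hN1
        have htN := ht_pos N
        have hA : (0:ℝ) < ((N:ℝ)+1)^(-ν) := Real.rpow_pos_of_pos (by positivity) _
        have hA1 : ((N:ℝ)+1)^(-ν) ≤ 1 :=
          Real.rpow_le_one_of_one_le_of_nonpos (by linarith) (by linarith)
        have ht1 : 1 ≤ t N := by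
          calc (1:ℝ) = (N:ℝ)^(0:ℝ) := (Real.rpow_zero _).symm
            _ ≤ (N:ℝ)^(q - ε1) := Real.rpow_le_rpow_of_exponent_le hN1' hqε.le
            _ ≤ t N := hL
        have hq1 : q + ε1 ≤ ν := by
          have e4 : q + ν*κ/(2*(κ+1)) ≤ ν := by
            rw [hqdef]
            have e5 : ν/(κ+1) + ν*κ/(2*(κ+1)) = ν*(2+κ)/(2*(κ+1)) := by
              field_simp
            have e6 : ν*(2+κ)/(2*(κ+1)) ≤ ν := by
              rw [div_le_iff₀ (by positivity)]; nlinarith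
            linarith
          linarith
        have hAt : ((N:ℝ)+1)^(-ν) ≤ 1/(t N) := by
          have s1 : ((N:ℝ)+1)^(-ν) ≤ (N:ℝ)^(-ν) :=
            Real.rpow_le_rpow_of_nonpos hN0 (by linarith) (by linarith)
          have s2 : (N:ℝ)^(-ν) ≤ (N:ℝ)^(-(q+ε1)) :=
            Real.rpow_le_rpow_of_exponent_le hN1' (by linarith)
          have s3 : (N:ℝ)^(-(q+ε1)) = ((N:ℝ)^(q+ε1))⁻¹ := Real.rpow_neg hN0.le _
          have s4 : ((N:ℝ)^(q+ε1))⁻¹ ≤ (t N)⁻¹ := inv_anti₀ htN hU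
          rw [one_div]
          calc ((N:ℝ)+1)^(-ν) ≤ (N:ℝ)^(-ν) := s1
            _ ≤ (N:ℝ)^(-(q+ε1)) := s2
            _ = ((N:ℝ)^(q+ε1))⁻¹ := s3
            _ ≤ (t N)⁻¹ := s4
        have hdecomp := loss_decomp ν κ σ2 hν N (tN := t N) htN
        rw [hdecomp]
        set J1 : ℝ := ∫ lam in Set.Icc (((N:ℝ)+1)^(-ν)) 1,
            (1 - Real.exp (-(t N) * lam))^2 * (1/ν * lam ^ (-1-1/ν)) with hJ1def
        set J2 : ℝ := ∫ lam in Set.Icc (((N:ℝ)+1)^(-ν)) 1,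
            (1 - (1 - Real.exp (-(t N) * lam)))^2 * (1/ν * lam ^ (κ/ν-1)) with hJ2def
        have hI2nn : 0 ≤ J2 := by
          rw [hJ2def]
          apply setIntegral_nonneg measurableSet_Icc
          intro x hx
          have hx0 : 0 < x := lt_of_lt_of_le hA hx.1
          have := Real.rpow_nonneg hx0.le (κ/ν-1)
          positivity
        have hIA : 0 ≤ 1 - ((N:ℝ)+1)^(-ν) := by linarith
        have hI1low : (1 - Real.exp (-1))^2 * (1/ν) * (((1/(t N)) ^ (-1/ν) - 1) * ν)
            ≤ J1 := I1_lower hν ht1 hA hAt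
        -- lower bound (1/t)^(-1/ν) by N^((q-ε1)/ν)
        have hx1 : (N:ℝ)^((q-ε1)/ν) ≤ (1/(t N))^(-1/ν) := by
          have s0 : 1/(t N) ≤ (N:ℝ)^(-(q-ε1)) := by
            rw [Real.rpow_neg hN0.le, one_div]
            exact inv_anti₀ (Real.rpow_pos_of_pos hN0 _) hL
          have s1 : ((N:ℝ)^(-(q-ε1)))^(-1/ν) ≤ (1/(t N))^(-1/ν) :=
            Real.rpow_le_rpow_of_nonpos (by positivity) s0
              (by rw [neg_div]; exact neg_nonpos.mpr (by positivity))
          have s2 : ((N:ℝ)^(-(q-ε1)))^(-1/ν) = (N:ℝ)^((q-ε1)/ν) := by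
            rw [← Real.rpow_mul hN0.le]
            congr 1
            ring
          rw [← s2]
          exact s1
        have hx3 : (N:ℝ)^((q-ε1)/ν)/2 ≤ (1/(t N))^(-1/ν) - 1 := by linarith
        have hEν : (0:ℝ) < (1 - Real.exp (-1))^2 := pow_pos hE 2
        have key : σ2*(1 - Real.exp (-1))^2/4 * (N:ℝ)^(-1 + (q-ε1)/ν)
            ≤ σ2/(2*(N:ℝ)) * J1 := by
          have k1 : (1 - Real.exp (-1))^2 * (1/ν) * (((N:ℝ)^((q-ε1)/ν)/2) * ν) ≤ J1 := by
            refine le_trans ?_ hI1low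
            refine mul_le_mul_of_nonneg_left ?_ (by positivity)
            exact mul_le_mul_of_nonneg_right hx3 hν0.le
          have k2 : (1 - Real.exp (-1))^2 * (1/ν) * (((N:ℝ)^((q-ε1)/ν)/2) * ν)
              = (1 - Real.exp (-1))^2 * (N:ℝ)^((q-ε1)/ν)/2 := by
            field_simp
          have k3 : σ2/(2*(N:ℝ)) * ((1 - Real.exp (-1))^2 * (N:ℝ)^((q-ε1)/ν)/2)
              = σ2*(1 - Real.exp (-1))^2/4 * ((N:ℝ)⁻¹ * (N:ℝ)^((q-ε1)/ν)) := by
            field_simp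
            ring
          have k4 : (N:ℝ)^(-1 + (q-ε1)/ν) = (N:ℝ)⁻¹ * (N:ℝ)^((q-ε1)/ν) := by
            rw [← Real.rpow_neg_one (N:ℝ), ← Real.rpow_add hN0]
          calc σ2*(1 - Real.exp (-1))^2/4 * (N:ℝ)^(-1 + (q-ε1)/ν)
              = σ2/(2*(N:ℝ)) * ((1 - Real.exp (-1))^2 * (N:ℝ)^((q-ε1)/ν)/2) := by
                rw [k4, k3]
            _ = σ2/(2*(N:ℝ)) * ((1 - Real.exp (-1))^2 * (1/ν) * (((N:ℝ)^((q-ε1)/ν)/2) * ν)) := by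
                rw [k2]
            _ ≤ σ2/(2*(N:ℝ)) * J1 := mul_le_mul_of_nonneg_left k1 (by positivity)
        have hfinal : σ2/(2*(N:ℝ)) * J1
            ≤ σ2/(2*(N:ℝ)) * (J1 + (1/2*J2)*(1-((N:ℝ)+1)^(-ν))) := by
          refine mul_le_mul_of_nonneg_left ?_ (by positivity)
          have : 0 ≤ (1/2*J2)*(1-((N:ℝ)+1)^(-ν)) :=
            mul_nonneg (mul_nonneg (by norm_num) hI2nn) hIA
          linarith
        exact key.trans hfinal
  · intro lam hlam s hs hscale
    constructor
    · -- h_N small on coarse scales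
      intro hsge ε hε
      have key : ν/(κ+1) - s ≤ 1/2 * (1/(κ+1) - s/ν) := by
        have hd : 1/(κ+1) - s/ν ≤ 0 := by
          rw [div_le_iff₀ hκ1] at hsge
          rw [sub_nonpos, div_le_div_iff₀ hκ1 hν0]
          linarith
        have h1 : ν * (1/(κ+1) - s/ν) ≤ 1/2 * (1/(κ+1) - s/ν) :=
          mul_le_mul_of_nonpos_right (by linarith) hd
        have h2 : ν * (1/(κ+1) - s/ν) = ν/(κ+1) - s := by field_simp
        linarith
      apply isLittleO_of_eventually_le (C := 1) (a := ν/(κ+1) - s + ε/2)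
      · have : -(1/2 * (s/ν - 1/(κ+1))) = 1/2 * (1/(κ+1) - s/ν) := by ring
        linarith
      · filter_upwards [recip_scale_upper ht_pos ht.2 (show (0:ℝ) < ε/4 by linarith),
          pos_scale_upper (fun N => (hlam N).1) hscale.1 (show (0:ℝ) < ε/4 by linarith),
          eventually_ge_atTop 1] with N h1 h2 h3
        have hN0 : (0:ℝ) < N := by exact_mod_cast h3
        have hl0 := (hlam N).1
        have htl : 0 < t N * lam N := mul_pos (ht_pos N) hl0
        have habs : |1 - Real.exp (-(t N) * lam N)| = 1 - Real.exp (-(t N) * lam N) := by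
          apply abs_of_nonneg
          have : Real.exp (-(t N) * lam N) ≤ 1 := by
            rw [neg_mul]; exact Real.exp_le_one_iff.mpr (by linarith)
          linarith
        rw [habs, one_mul]
        have hb1 : 1 - Real.exp (-(t N) * lam N) ≤ t N * lam N := by
          rw [neg_mul]; nlinarith [Real.add_one_le_exp (-(t N * lam N))]
        calc 1 - Real.exp (-(t N) * lam N) ≤ t N * lam N := hb1
          _ ≤ (N:ℝ)^(ν/(κ+1) + ε/4) * (N:ℝ)^(-s + ε/4) :=
              mul_le_mul h1 h2 hl0.le (Real.rpow_nonneg hN0.le _)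
          _ = (N:ℝ)^(ν/(κ+1) - s + ε/2) := by
              rw [← Real.rpow_add hN0]; congr 1; ring
    · -- 1 - h_N small on fine scales
      intro hsle ε hε
      have hd : 0 ≤ 1/(κ+1) - s/ν := by
        rw [le_div_iff₀ hκ1] at hsle
        rw [sub_nonneg, div_le_div_iff₀ hν0 hκ1]
        linarith
      have hexp : 1/2 * (κ/(κ+1) - κ/ν*s) = κ * (1/(κ+1) - s/ν) / 2 := by ring
      by_cases hcase : κ * (1/(κ+1) - s/ν) / 2 < ε
      · apply isLittleO_of_eventually_le (C := 1) (a := 0)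
        · linarith
        · filter_upwards with N
          have hl0 := (hlam N).1
          have htl : 0 < t N * lam N := mul_pos (ht_pos N) hl0
          rw [sub_sub_cancel, abs_of_pos (Real.exp_pos _), one_mul, Real.rpow_zero]
          rw [neg_mul]; exact Real.exp_le_one_iff.mpr (by linarith)
      · push_neg at hcase
        have hd0 : 0 < 1/(κ+1) - s/ν := by nlinarith
        have hδ0 : 0 < ν * (1/(κ+1) - s/ν) / 2 := by positivity
        apply isLittleO_of_eventually_le (C := 1)
          (a := -(1/2 * (κ/(κ+1) - κ/ν*s)) + ε - 1)
        · linarith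
        · filter_upwards [recip_scale_lower ht_pos ht.1
            (show (0:ℝ) < ν * (1/(κ+1) - s/ν) / 4 by positivity),
            pos_scale_lower (fun N => (hlam N).1) hscale.2
            (show (0:ℝ) < ν * (1/(κ+1) - s/ν) / 4 by positivity),
            eventually_exp_rpow_le (-(1/2 * (κ/(κ+1) - κ/ν*s)) + ε - 1) hδ0,
            eventually_ge_atTop 1] with N h1 h2 h3 h4
          have hN0 : (0:ℝ) < N := by exact_mod_cast h4
          rw [sub_sub_cancel, abs_of_pos (Real.exp_pos _), one_mul]
          have hstep : (N:ℝ)^(ν * (1/(κ+1) - s/ν) / 2) ≤ t N * lam N := by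
            calc (N:ℝ)^(ν * (1/(κ+1) - s/ν) / 2)
                = (N:ℝ)^(ν/(κ+1) - ν * (1/(κ+1) - s/ν) / 4)
                  * (N:ℝ)^(-s - ν * (1/(κ+1) - s/ν) / 4) := by
                  rw [← Real.rpow_add hN0]; congr 1; field_simp; ring
              _ ≤ t N * lam N :=
                  mul_le_mul h1 h2 (Real.rpow_pos_of_pos hN0 _).le
                    ((Real.rpow_pos_of_pos hN0 _).trans_le h1).le
          calc Real.exp (-(t N) * lam N)
              ≤ Real.exp (-(N:ℝ)^(ν * (1/(κ+1) - s/ν) / 2)) := by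
                rw [Real.exp_le_exp, neg_mul]; linarith
            _ ≤ (N:ℝ)^(-(1/2 * (κ/(κ+1) - κ/ν*s)) + ε - 1) := h3
end
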